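/- arXiv:2411.00191 — 7 statements merged into one kernel-verified Lean document; each statement's English description precedes it below -/
import Mathlib

section
/- Let μ be a probability measure on ℝ² whose marginals ν₁ (with CDF G) and ν₀ (with CDF F) have finite second moments. Then the product xy is μ-integrable and ∫_{ℝ²} x·y dμ(x,y) ≤ ∫₀¹ G⁻¹(u) F⁻¹(u) du, where G⁻¹(u) = inf{y : G(y) ≥ u} and F⁻¹(u) = inf{y : F(y) ≥ u} are the quantile functions. That is, among all couplings of ν₁ and ν₀, the cross-moment E[Y₁Y₀] is bounded above by its value under the comonotonic coupling (G⁻¹(U), F⁻¹(U)), U uniform on [0,1]. -/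
open MeasureTheory Set Filter Topology

namespace Stmt3Aux

noncomputable def e (x s : ℝ) : ℝ := (if s < x then 1 else 0) - (if s < 0 then 1 else 0)

lemma e_eq (x s : ℝ) :
    e x s = (Ico 0 x).indicator (fun _ => (1:ℝ)) s - (Ico x 0).indicator (fun _ => (1:ℝ)) s := by
  simp only [e, Set.indicator_apply, Set.mem_Ico]
  split_ifs <;> (try push_neg at *) <;> simp_all <;> linarith

lemma abs_e_eq (x s : ℝ) :
    |e x s| = (Ico 0 x).indicator (fun _ => (1:ℝ)) s + (Ico x 0).indicator (fun _ => (1:ℝ)) s := by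
  rw [e_eq]
  simp only [Set.indicator_apply, Set.mem_Ico]
  split_ifs <;> simp_all <;> linarith

lemma integrable_indicator_Ico (a b : ℝ) :
    Integrable ((Ico a b).indicator (fun _ => (1:ℝ))) := by
  rw [integrable_indicator_iff measurableSet_Ico]
  exact integrableOn_const (by rw [Real.volume_Ico]; exact ENNReal.ofReal_ne_top)

lemma integral_indicator_Ico (a b : ℝ) :
    ∫ s, (Ico a b).indicator (fun _ => (1:ℝ)) s = max (b - a) 0 := by
  rw [integral_indicator_const (1:ℝ) measurableSet_Ico]
  simp [Real.volume_Ico, ENNReal.toReal_ofReal']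

lemma integrable_e (x : ℝ) : Integrable (e x) := by
  have : e x = fun s => (Ico 0 x).indicator (fun _ => (1:ℝ)) s - (Ico x 0).indicator (fun _ => (1:ℝ)) s :=
    funext fun s => e_eq x s
  rw [this]
  exact (integrable_indicator_Ico 0 x).sub (integrable_indicator_Ico x 0)

lemma integral_e (x : ℝ) : ∫ s, e x s = x := by
  simp_rw [e_eq]
  rw [integral_sub (integrable_indicator_Ico 0 x) (integrable_indicator_Ico x 0),
    integral_indicator_Ico, integral_indicator_Ico]
  rcases le_total 0 x with h | h
  · rw [max_eq_left (by linarith), max_eq_right (by linarith)]; ring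
  · rw [max_eq_right (by linarith), max_eq_left (by linarith)]; ring

lemma integral_abs_e (x : ℝ) : ∫ s, |e x s| = |x| := by
  simp_rw [abs_e_eq]
  rw [integral_add (integrable_indicator_Ico 0 x) (integrable_indicator_Ico x 0),
    integral_indicator_Ico, integral_indicator_Ico]
  rcases le_total 0 x with h | h
  · rw [max_eq_left (by linarith), max_eq_right (by linarith), abs_of_nonneg h]; ring
  · rw [max_eq_right (by linarith), max_eq_left (by linarith), abs_of_nonpos h]; ring

lemma measurable_e : Measurable (fun p : ℝ × ℝ => e p.1 p.2) := by
  unfold e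
  apply Measurable.sub
  · exact Measurable.ite (measurableSet_lt measurable_snd measurable_fst) measurable_const
      measurable_const
  · exact Measurable.ite (measurableSet_lt measurable_snd measurable_const) measurable_const
      measurable_const

lemma integrable_pair (x y : ℝ) :
    Integrable (fun q : ℝ × ℝ => e x q.1 * e y q.2) := by
  rw [Measure.volume_eq_prod]
  exact (integrable_e x).mul_prod (integrable_e y)

lemma integral_pair (x y : ℝ) : ∫ q : ℝ × ℝ, e x q.1 * e y q.2 = x * y := by
  rw [Measure.volume_eq_prod, integral_prod_mul, integral_e, integral_e]

lemma integral_abs_pair (x y : ℝ) : ∫ q : ℝ × ℝ, ‖e x q.1 * e y q.2‖ = |x * y| := by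
  simp_rw [norm_mul, Real.norm_eq_abs]
  rw [Measure.volume_eq_prod, integral_prod_mul (f := fun s => |e x s|) (g := fun t => |e y t|), integral_abs_e, integral_abs_e, abs_mul]





lemma repr (ρ : Measure (ℝ × ℝ)) [IsProbabilityMeasure ρ]
    (h : Integrable (fun p : ℝ × ℝ => p.1 * p.2) ρ) :
    Integrable (fun q : ℝ × ℝ => ∫ p, e p.1 q.1 * e p.2 q.2 ∂ρ) ∧
      ∫ p, p.1 * p.2 ∂ρ = ∫ q : ℝ × ℝ, ∫ p, e p.1 q.1 * e p.2 q.2 ∂ρ := by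
  have hmeas : Measurable (fun z : (ℝ × ℝ) × (ℝ × ℝ) => e z.1.1 z.2.1 * e z.1.2 z.2.2) := by
    exact (measurable_e.comp ((measurable_fst.comp measurable_fst).prodMk
        (measurable_fst.comp measurable_snd))).mul
      (measurable_e.comp ((measurable_snd.comp measurable_fst).prodMk
        (measurable_snd.comp measurable_snd)))
  have hint : Integrable (fun z : (ℝ × ℝ) × (ℝ × ℝ) => e z.1.1 z.2.1 * e z.1.2 z.2.2)
      (ρ.prod volume) := by
    refine (integrable_prod_iff hmeas.aestronglyMeasurable).2 ⟨?_, ?_⟩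
    · exact Eventually.of_forall fun p => integrable_pair p.1 p.2
    · have heq : (fun p : ℝ × ℝ => ∫ q : ℝ × ℝ, ‖e p.1 q.1 * e p.2 q.2‖) = fun p => |p.1 * p.2| :=
        funext fun p => integral_abs_pair p.1 p.2
    -- goal: Integrable (fun p => ∫ q, ‖...‖) ρ
      rw [heq]
      exact h.abs
  constructor
  · exact hint.integral_prod_right
  · have hswap := integral_integral_swap (f := fun (p q : ℝ × ℝ) => e p.1 q.1 * e p.2 q.2) hint
    rw [← hswap]
    refine integral_congr_ae (Eventually.of_forall fun p => ?_)
    exact (integral_pair p.1 p.2).symm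

lemma expand (ρ : Measure (ℝ × ℝ)) [IsProbabilityMeasure ρ] (s t : ℝ) :
    ∫ p, e p.1 s * e p.2 t ∂ρ
      = (ρ (Ioi s ×ˢ Ioi t)).toReal
        - (if t < 0 then (1:ℝ) else 0) * (ρ (Prod.fst ⁻¹' Ioi s)).toReal
        - (if s < 0 then (1:ℝ) else 0) * (ρ (Prod.snd ⁻¹' Ioi t)).toReal
        + (if s < 0 then (1:ℝ) else 0) * (if t < 0 then (1:ℝ) else 0) := by
  have key : ∀ p : ℝ × ℝ, e p.1 s * e p.2 t =
      (Ioi s ×ˢ Ioi t).indicator (fun _ => (1:ℝ)) p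
      - (if t < 0 then (1:ℝ) else 0) * (Prod.fst ⁻¹' Ioi s).indicator (fun _ => (1:ℝ)) p
      - (if s < 0 then (1:ℝ) else 0) * (Prod.snd ⁻¹' Ioi t).indicator (fun _ => (1:ℝ)) p
      + (if s < 0 then (1:ℝ) else 0) * (if t < 0 then (1:ℝ) else 0) := by
    intro p
    have h1 : (Ioi s ×ˢ Ioi t).indicator (fun _ => (1:ℝ)) p
        = (if s < p.1 then (1:ℝ) else 0) * (if t < p.2 then (1:ℝ) else 0) := by
      by_cases hs : s < p.1 <;> by_cases ht : t < p.2 <;>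
        simp [Set.indicator_apply, Set.mem_prod, hs, ht]
    have h2 : (Prod.fst ⁻¹' Ioi s : Set (ℝ × ℝ)).indicator (fun _ => (1:ℝ)) p
        = (if s < p.1 then (1:ℝ) else 0) := by
      by_cases hs : s < p.1 <;> simp [Set.indicator_apply, hs]
    have h3 : (Prod.snd ⁻¹' Ioi t : Set (ℝ × ℝ)).indicator (fun _ => (1:ℝ)) p
        = (if t < p.2 then (1:ℝ) else 0) := by
      by_cases ht : t < p.2 <;> simp [Set.indicator_apply, ht]
    rw [h1, h2, h3]
    unfold e
    ring
  have hS : MeasurableSet (Ioi s ×ˢ Ioi t : Set (ℝ × ℝ)) := measurableSet_Ioi.prod measurableSet_Ioi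
  have hS1 : MeasurableSet (Prod.fst ⁻¹' Ioi s : Set (ℝ × ℝ)) := measurable_fst measurableSet_Ioi
  have hS2 : MeasurableSet (Prod.snd ⁻¹' Ioi t : Set (ℝ × ℝ)) := measurable_snd measurableSet_Ioi
  have i1 : Integrable (fun p : ℝ × ℝ => (Ioi s ×ˢ Ioi t).indicator (fun _ => (1:ℝ)) p) ρ :=
    (integrable_const (1:ℝ)).indicator hS
  have i2 : Integrable (fun p : ℝ × ℝ => (if t < 0 then (1:ℝ) else 0)
      * (Prod.fst ⁻¹' Ioi s).indicator (fun _ => (1:ℝ)) p) ρ :=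
    (((integrable_const (1:ℝ)).indicator hS1)).const_mul _
  have i3 : Integrable (fun p : ℝ × ℝ => (if s < 0 then (1:ℝ) else 0)
      * (Prod.snd ⁻¹' Ioi t).indicator (fun _ => (1:ℝ)) p) ρ :=
    (((integrable_const (1:ℝ)).indicator hS2)).const_mul _
  calc ∫ p, e p.1 s * e p.2 t ∂ρ
      = ∫ p : ℝ × ℝ, ((Ioi s ×ˢ Ioi t).indicator (fun _ => (1:ℝ)) p
        - (if t < 0 then (1:ℝ) else 0) * (Prod.fst ⁻¹' Ioi s).indicator (fun _ => (1:ℝ)) p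
        - (if s < 0 then (1:ℝ) else 0) * (Prod.snd ⁻¹' Ioi t).indicator (fun _ => (1:ℝ)) p
        + (if s < 0 then (1:ℝ) else 0) * (if t < 0 then (1:ℝ) else 0)) ∂ρ := by
        exact integral_congr_ae (Eventually.of_forall fun p => key p)
    _ = (ρ (Ioi s ×ˢ Ioi t)).toReal
        - (if t < 0 then (1:ℝ) else 0) * (ρ (Prod.fst ⁻¹' Ioi s)).toReal
        - (if s < 0 then (1:ℝ) else 0) * (ρ (Prod.snd ⁻¹' Ioi t)).toReal
        + (if s < 0 then (1:ℝ) else 0) * (if t < 0 then (1:ℝ) else 0) := by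
        rw [integral_add (f := fun p : ℝ × ℝ => (Ioi s ×ˢ Ioi t).indicator (fun _ => (1:ℝ)) p
            - (if t < 0 then (1:ℝ) else 0) * (Prod.fst ⁻¹' Ioi s).indicator (fun _ => (1:ℝ)) p
            - (if s < 0 then (1:ℝ) else 0) * (Prod.snd ⁻¹' Ioi t).indicator (fun _ => (1:ℝ)) p)
            (g := fun _ : ℝ × ℝ => (if s < 0 then (1:ℝ) else 0) * (if t < 0 then (1:ℝ) else 0))
            ((i1.sub i2).sub i3) (integrable_const _),
          integral_sub (f := fun p : ℝ × ℝ => (Ioi s ×ˢ Ioi t).indicator (fun _ => (1:ℝ)) p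
            - (if t < 0 then (1:ℝ) else 0) * (Prod.fst ⁻¹' Ioi s).indicator (fun _ => (1:ℝ)) p)
            (i1.sub i2) i3,
          integral_sub i1 i2, integral_indicator_const (1:ℝ) hS, integral_const_mul,
          integral_const_mul, integral_indicator_const (1:ℝ) hS1,
          integral_indicator_const (1:ℝ) hS2, integral_const]
        simp [measureReal_def]



section Quantile
variable (ν : Measure ℝ) [IsProbabilityMeasure ν] (G : ℝ → ℝ)
  (hG : ∀ t, G t = (ν (Iic t)).toReal) (Ginv : ℝ → ℝ)
  (hGinv : ∀ u, Ginv u = sInf {y : ℝ | u ≤ G y})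

include hG in
lemma G_eq_cdf : G = fun t => ProbabilityTheory.cdf ν t := by
  funext t; rw [hG, ProbabilityTheory.cdf_eq_real, measureReal_def]

include hG in
lemma G_mono : Monotone G := by
  rw [G_eq_cdf ν G hG]; exact ProbabilityTheory.monotone_cdf ν

include hG in
lemma G_nonneg (t : ℝ) : 0 ≤ G t := by rw [hG]; exact ENNReal.toReal_nonneg

include hG in
lemma G_le_one (t : ℝ) : G t ≤ 1 := by
  rw [G_eq_cdf ν G hG]; exact ProbabilityTheory.cdf_le_one ν t

include hG hGinv in
lemma galois {u : ℝ} (hu : u ∈ Ioo (0:ℝ) 1) (s : ℝ) : Ginv u ≤ s ↔ u ≤ G s := by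
  obtain ⟨hu0, hu1⟩ := hu
  have hGc := G_eq_cdf ν G hG
  have hmono := G_mono ν G hG
  obtain ⟨y₁, hy₁⟩ : ∃ y, u ≤ G y := by
    have : ∀ᶠ y in atTop, u ≤ G y := by
      rw [hGc]
      exact ((ProbabilityTheory.tendsto_cdf_atTop ν).eventually_const_le hu1)
    exact this.exists
  obtain ⟨y₀, hy₀⟩ : ∃ y, G y < u := by
    have : ∀ᶠ y in atBot, G y < u := by
      rw [hGc]
      exact ((ProbabilityTheory.tendsto_cdf_atBot ν).eventually_lt_const hu0)
    exact this.exists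
  have hbdd : BddBelow {y : ℝ | u ≤ G y} := by
    refine ⟨y₀, fun y hy => ?_⟩
    by_contra hlt
    push_neg at hlt
    exact absurd (hy.trans (hmono hlt.le)) (not_le.2 hy₀)
  have hne : {y : ℝ | u ≤ G y}.Nonempty := ⟨y₁, hy₁⟩
  constructor
  · intro h
    rw [hGinv] at h
    have hua : u ≤ G (sInf {y : ℝ | u ≤ G y}) := by
      set a := sInf {y : ℝ | u ≤ G y} with ha
      have hrc : ContinuousWithinAt G (Ici a) a := by
        rw [hGc]; exact (ProbabilityTheory.cdf ν).right_continuous a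
      have hrc' : Tendsto G (𝓝[>] a) (𝓝 (G a)) := hrc.tendsto.mono_left
        (nhdsWithin_mono a Ioi_subset_Ici_self)
      refine ge_of_tendsto hrc' ?_
      filter_upwards [self_mem_nhdsWithin] with y hy
      obtain ⟨z, hz, hzy⟩ := (csInf_lt_iff hbdd hne).1 hy
      exact hz.trans (hmono hzy.le)
    exact hua.trans (hmono h)
  · intro h
    rw [hGinv]
    exact csInf_le hbdd h

include hG hGinv in
lemma galois_lt {u : ℝ} (hu : u ∈ Ioo (0:ℝ) 1) (s : ℝ) : s < Ginv u ↔ G s < u := by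
  rw [← not_le, ← not_le, galois ν G hG Ginv hGinv hu s]

include hG hGinv in
lemma Ginv_monoOn : MonotoneOn Ginv (Ioo (0:ℝ) 1) := by
  intro u hu v hv huv
  refine (galois ν G hG Ginv hGinv hu (Ginv v)).2 (huv.trans ?_)
  exact (galois ν G hG Ginv hGinv hv (Ginv v)).1 le_rfl

include hG hGinv in
lemma Ginv_aemeasurable : AEMeasurable Ginv (volume.restrict (Ioo (0:ℝ) 1)) :=
  aemeasurable_restrict_of_monotoneOn measurableSet_Ioo (Ginv_monoOn ν G hG Ginv hGinv)

instance : IsProbabilityMeasure (volume.restrict (Ioo (0:ℝ) 1)) :=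
  ⟨by simp [Real.volume_Ioo]⟩

include hG hGinv in
lemma map_quantile : (volume.restrict (Ioo (0:ℝ) 1)).map Ginv = ν := by
  have haem := Ginv_aemeasurable ν G hG Ginv hGinv
  haveI : IsProbabilityMeasure ((volume.restrict (Ioo (0:ℝ) 1)).map Ginv) :=
    Measure.isProbabilityMeasure_map haem
  refine Measure.ext_of_Iic _ _ (fun a => ?_)
  rw [Measure.map_apply_of_aemeasurable haem measurableSet_Iic,
    Measure.restrict_apply' measurableSet_Ioo]
  have hset : Ginv ⁻¹' Iic a ∩ Ioo 0 1 = Iic (G a) ∩ Ioo 0 1 := by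
    ext u
    simp only [mem_inter_iff, mem_preimage, mem_Iic, and_congr_left_iff]
    intro hu
    exact galois ν G hG Ginv hGinv hu a
  rw [hset]
  have h0 : 0 ≤ G a := G_nonneg ν G hG a
  have h1 : G a ≤ 1 := G_le_one ν G hG a
  have hvol : volume (Iic (G a) ∩ Ioo 0 1) = ENNReal.ofReal (G a) := by
    apply le_antisymm
    · calc volume (Iic (G a) ∩ Ioo 0 1) ≤ volume (Ioc 0 (G a)) :=
        measure_mono (fun u hu => mem_Ioc.2 ⟨hu.2.1, hu.1⟩)
      _ = ENNReal.ofReal (G a) := by rw [Real.volume_Ioc, sub_zero]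
    · calc ENNReal.ofReal (G a) = volume (Ioo 0 (G a)) := by rw [Real.volume_Ioo, sub_zero]
        _ ≤ volume (Iic (G a) ∩ Ioo 0 1) := measure_mono
            (fun u hu => ⟨le_of_lt hu.2, hu.1, lt_of_lt_of_le hu.2 h1⟩)
  rw [hvol, hG, ENNReal.ofReal_toReal (measure_ne_top ν _)]

include hG in
lemma tail_eq (s : ℝ) : ν (Ioi s) = ENNReal.ofReal (1 - G s) := by
  have h0 : 0 ≤ G s := G_nonneg ν G hG s
  have : ν (Ioi s) = ν univ - ν (Iic s) := by
    rw [← Set.compl_Iic]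
    exact measure_compl measurableSet_Iic (measure_ne_top ν _)
  rw [this, measure_univ, hG, ENNReal.ofReal_sub _ ENNReal.toReal_nonneg, ENNReal.ofReal_one,
    ENNReal.ofReal_toReal (measure_ne_top ν _)]

end Quantile

end Stmt3Aux

open MeasureTheory Set Filter Topology
open Stmt3Aux

/-- **Hoeffding's upper bound on the cross-moment.** If `μ` is a probability measure on `ℝ²`
whose marginals `ν₁, ν₀` (with CDFs `G, F` and quantile functions `Ginv, Finv`) have finite
second moments, then `x*y` is `μ`-integrable and
`∫ x*y ∂μ ≤ ∫ u in (0,1), Ginv u * Finv u` (the comonotonic cross-moment). -/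
theorem stmt_3 (μ : Measure (ℝ × ℝ)) [IsProbabilityMeasure μ]
    (ν₁ ν₀ : Measure ℝ) (hν₁ : ν₁ = μ.map Prod.fst) (hν₀ : ν₀ = μ.map Prod.snd)
    (hsq₁ : Integrable (fun x : ℝ => x ^ 2) ν₁)
    (hsq₀ : Integrable (fun y : ℝ => y ^ 2) ν₀)
    (G F : ℝ → ℝ) (hG : ∀ t, G t = (ν₁ (Set.Iic t)).toReal)
    (hF : ∀ t, F t = (ν₀ (Set.Iic t)).toReal)
    (Ginv Finv : ℝ → ℝ) (hGinv : ∀ u, Ginv u = sInf {y : ℝ | u ≤ G y})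
    (hFinv : ∀ u, Finv u = sInf {y : ℝ | u ≤ F y}) :
    Integrable (fun p : ℝ × ℝ => p.1 * p.2) μ ∧
      ∫ p : ℝ × ℝ, p.1 * p.2 ∂μ ≤ ∫ u in (0:ℝ)..1, Ginv u * Finv u := by
  haveI hP1 : IsProbabilityMeasure ν₁ := by
    rw [hν₁]; exact Measure.isProbabilityMeasure_map measurable_fst.aemeasurable
  haveI hP0 : IsProbabilityMeasure ν₀ := by
    rw [hν₀]; exact Measure.isProbabilityMeasure_map measurable_snd.aemeasurable
  have hx2 : Integrable (fun p : ℝ × ℝ => p.1 ^ 2) μ := by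
    have := hsq₁
    rw [hν₁] at this
    exact (integrable_map_measure (continuous_pow 2).aestronglyMeasurable
      measurable_fst.aemeasurable).1 this
  have hy2 : Integrable (fun p : ℝ × ℝ => p.2 ^ 2) μ := by
    have := hsq₀
    rw [hν₀] at this
    exact (integrable_map_measure (continuous_pow 2).aestronglyMeasurable
      measurable_snd.aemeasurable).1 this
  have hmul : Integrable (fun p : ℝ × ℝ => p.1 * p.2) μ := by
    refine ((hx2.add hy2).div_const 2).mono
      (measurable_fst.mul measurable_snd).aestronglyMeasurable
      (Eventually.of_forall fun p => ?_)
    simp only [Real.norm_eq_abs, Pi.add_apply]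
    rw [abs_mul, abs_of_nonneg (by positivity : (0:ℝ) ≤ (p.1 ^ 2 + p.2 ^ 2) / 2)]
    nlinarith [sq_nonneg (|p.1| - |p.2|), sq_abs p.1, sq_abs p.2]
  refine ⟨hmul, ?_⟩
  set P : Measure ℝ := volume.restrict (Ioo (0:ℝ) 1) with hP
  have hGmap : P.map Ginv = ν₁ := map_quantile ν₁ G hG Ginv hGinv
  have hFmap : P.map Finv = ν₀ := map_quantile ν₀ F hF Finv hFinv
  have hGaem : AEMeasurable Ginv P := Ginv_aemeasurable ν₁ G hG Ginv hGinv
  have hFaem : AEMeasurable Finv P := Ginv_aemeasurable ν₀ F hF Finv hFinv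
  have hpair : AEMeasurable (fun u => (Ginv u, Finv u)) P := hGaem.prodMk hFaem
  set ρc : Measure (ℝ × ℝ) := P.map (fun u => (Ginv u, Finv u)) with hρc
  haveI : IsProbabilityMeasure ρc := Measure.isProbabilityMeasure_map hpair
  have hfstc : ρc.map Prod.fst = ν₁ := by
    rw [hρc, AEMeasurable.map_map_of_aemeasurable measurable_fst.aemeasurable hpair]
    exact hGmap
  have hsndc : ρc.map Prod.snd = ν₀ := by
    rw [hρc, AEMeasurable.map_map_of_aemeasurable measurable_snd.aemeasurable hpair]
    exact hFmap
  have hx2c : Integrable (fun u : ℝ => Ginv u ^ 2) P := by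
    have := hsq₁
    rw [← hGmap] at this
    exact (integrable_map_measure (continuous_pow 2).aestronglyMeasurable hGaem).1 this
  have hy2c : Integrable (fun u : ℝ => Finv u ^ 2) P := by
    have := hsq₀
    rw [← hFmap] at this
    exact (integrable_map_measure (continuous_pow 2).aestronglyMeasurable hFaem).1 this
  have hmulP : Integrable (fun u : ℝ => Ginv u * Finv u) P := by
    refine ((hx2c.add hy2c).div_const 2).mono (hGaem.mul hFaem).aestronglyMeasurable
      (Eventually.of_forall fun u => ?_)
    simp only [Real.norm_eq_abs, Pi.add_apply]
    rw [abs_mul, abs_of_nonneg (by positivity : (0:ℝ) ≤ (Ginv u ^ 2 + Finv u ^ 2) / 2)]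
    nlinarith [sq_nonneg (|Ginv u| - |Finv u|), sq_abs (Ginv u), sq_abs (Finv u)]
  have hmulc : Integrable (fun p : ℝ × ℝ => p.1 * p.2) ρc := by
    rw [hρc]
    exact (integrable_map_measure (continuous_fst.mul continuous_snd).aestronglyMeasurable
      hpair).2 hmulP
  obtain ⟨hkμ_int, hkμ⟩ := repr μ hmul
  obtain ⟨hkc_int, hkc⟩ := repr ρc hmulc
  have hρcS : ∀ s t : ℝ, ρc (Ioi s ×ˢ Ioi t) = min (ν₁ (Ioi s)) (ν₀ (Ioi t)) := by
    intro s t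
    rw [hρc, Measure.map_apply_of_aemeasurable hpair
      (measurableSet_Ioi.prod measurableSet_Ioi), hP,
      Measure.restrict_apply' measurableSet_Ioo]
    have h0G : 0 ≤ G s := G_nonneg ν₁ G hG s
    have h0F : 0 ≤ F t := G_nonneg ν₀ F hF t
    have hset : (fun u => (Ginv u, Finv u)) ⁻¹' (Ioi s ×ˢ Ioi t) ∩ Ioo 0 1
        = Ioo (max (G s) (F t)) 1 := by
      ext u
      simp only [mem_inter_iff, mem_preimage, mem_prod, mem_Ioi, mem_Ioo, max_lt_iff]
      constructor
      · rintro ⟨⟨h1, h2⟩, hu⟩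
        exact ⟨⟨(galois_lt ν₁ G hG Ginv hGinv hu s).1 h1,
          (galois_lt ν₀ F hF Finv hFinv hu t).1 h2⟩, hu.2⟩
      · rintro ⟨⟨h1, h2⟩, hu1⟩
        have hu : u ∈ Ioo (0:ℝ) 1 := ⟨lt_of_le_of_lt h0G h1, hu1⟩
        exact ⟨⟨(galois_lt ν₁ G hG Ginv hGinv hu s).2 h1,
          (galois_lt ν₀ F hF Finv hFinv hu t).2 h2⟩, hu⟩
    rw [hset, Real.volume_Ioo, tail_eq ν₁ G hG s, tail_eq ν₀ F hF t]
    rcases le_total (G s) (F t) with h | h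
    · rw [max_eq_right h, min_eq_right (ENNReal.ofReal_le_ofReal (by linarith))]
    · rw [max_eq_left h, min_eq_left (ENNReal.ofReal_le_ofReal (by linarith))]
  have hcomp : ∀ q : ℝ × ℝ,
      (∫ p, e p.1 q.1 * e p.2 q.2 ∂μ) ≤ ∫ p, e p.1 q.1 * e p.2 q.2 ∂ρc := by
    rintro ⟨s, t⟩
    rw [expand μ s t, expand ρc s t]
    have a1 : ν₁ (Ioi s) = μ (Prod.fst ⁻¹' Ioi s) := by
      rw [hν₁]; exact Measure.map_apply measurable_fst measurableSet_Ioi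
    have a2 : ν₁ (Ioi s) = ρc (Prod.fst ⁻¹' Ioi s) := by
      rw [← hfstc]; exact Measure.map_apply measurable_fst measurableSet_Ioi
    have b1 : ν₀ (Ioi t) = μ (Prod.snd ⁻¹' Ioi t) := by
      rw [hν₀]; exact Measure.map_apply measurable_snd measurableSet_Ioi
    have b2 : ν₀ (Ioi t) = ρc (Prod.snd ⁻¹' Ioi t) := by
      rw [← hsndc]; exact Measure.map_apply measurable_snd measurableSet_Ioi
    have hm1 : (μ (Prod.fst ⁻¹' Ioi s)).toReal = (ρc (Prod.fst ⁻¹' Ioi s)).toReal := by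
      rw [← a1, ← a2]
    have hm2 : (μ (Prod.snd ⁻¹' Ioi t)).toReal = (ρc (Prod.snd ⁻¹' Ioi t)).toReal := by
      rw [← b1, ← b2]
    have hmain : (μ (Ioi s ×ˢ Ioi t)).toReal ≤ (ρc (Ioi s ×ˢ Ioi t)).toReal := by
      apply ENNReal.toReal_mono (measure_ne_top ρc _)
      rw [hρcS s t]
      refine le_min ?_ ?_
      · calc μ (Ioi s ×ˢ Ioi t) ≤ μ (Prod.fst ⁻¹' Ioi s) := measure_mono (fun p hp => hp.1)
          _ = ν₁ (Ioi s) := a1.symm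
      · calc μ (Ioi s ×ˢ Ioi t) ≤ μ (Prod.snd ⁻¹' Ioi t) := measure_mono (fun p hp => hp.2)
          _ = ν₀ (Ioi t) := b1.symm
    rw [hm1, hm2]
    linarith
  have hfinal : ∫ p : ℝ × ℝ, p.1 * p.2 ∂ρc = ∫ u in (0:ℝ)..1, Ginv u * Finv u := by
    rw [hρc, integral_map (f := fun p : ℝ × ℝ => p.1 * p.2) hpair (continuous_fst.mul continuous_snd).aestronglyMeasurable,
      intervalIntegral.integral_of_le zero_le_one, integral_Ioc_eq_integral_Ioo]
  calc ∫ p : ℝ × ℝ, p.1 * p.2 ∂μ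
      = ∫ q : ℝ × ℝ, ∫ p, e p.1 q.1 * e p.2 q.2 ∂μ := hkμ
    _ ≤ ∫ q : ℝ × ℝ, ∫ p, e p.1 q.1 * e p.2 q.2 ∂ρc := integral_mono hkμ_int hkc_int hcomp
    _ = ∫ p : ℝ × ℝ, p.1 * p.2 ∂ρc := hkc.symm
    _ = ∫ u in (0:ℝ)..1, Ginv u * Finv u := hfinal
end

section
/- Let μ be a probability measure on ℝ² whose marginals ν₁ (with CDF G) and ν₀ (with CDF F) have finite second moments. Then ∫_{ℝ²} x·y dμ(x,y) ≥ ∫₀¹ G⁻¹(u) F⁻¹(1 − u) du, where G⁻¹(u) = inf{y : G(y) ≥ u} and F⁻¹(u) = inf{y : F(y) ≥ u} are the quantile functions. That is, among all couplings of ν₁ and ν₀, the cross-moment E[Y₁Y₀] is bounded below by its value under the countermonotonic coupling (G⁻¹(U), F⁻¹(1−U)), U uniform on [0,1]. -/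
open MeasureTheory
open Set

namespace Hoeff

/-- kernel: `g x s = 1_{s<x} - 1_{s<0}`. -/
noncomputable def g (x s : ℝ) : ℝ := (if s < x then 1 else 0) - (if s < 0 then 1 else 0)

lemma g_eq_pos {x : ℝ} (hx : 0 ≤ x) : g x = (Set.Ico 0 x).indicator 1 := by
  funext s
  simp only [g, indicator, mem_Ico, Pi.one_apply]
  by_cases h1 : s < x <;> by_cases h2 : s < 0
  · rw [if_pos h1, if_pos h2, if_neg (by rintro ⟨h, -⟩; linarith)]; ring
  · rw [if_pos h1, if_neg h2, if_pos ⟨not_lt.mp h2, h1⟩]; ring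
  · exact absurd (lt_of_lt_of_le h2 hx) h1
  · rw [if_neg h1, if_neg h2, if_neg (by rintro ⟨-, h⟩; exact h1 h)]; ring

lemma g_eq_neg {x : ℝ} (hx : x < 0) : g x = fun s => -((Set.Ico x 0).indicator 1 s) := by
  funext s
  simp only [g, indicator, mem_Ico, Pi.one_apply]
  by_cases h1 : s < x <;> by_cases h2 : s < 0
  · rw [if_pos h1, if_pos h2, if_neg (by rintro ⟨h, -⟩; linarith)]; ring
  · exact absurd (lt_trans h1 hx) h2
  · rw [if_neg h1, if_pos h2, if_pos ⟨not_lt.mp h1, h2⟩]; ring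
  · rw [if_neg h1, if_neg h2, if_neg (by rintro ⟨-, h⟩; exact h2 h)]; ring

lemma integrable_g (x : ℝ) : Integrable (g x) (volume : Measure ℝ) := by
  rcases le_or_gt 0 x with hx | hx
  · rw [g_eq_pos hx]
    exact (integrable_indicator_iff measurableSet_Ico).mpr
      ((integrableOn_const_iff).mpr (Or.inr (by simp [Real.volume_Ico])))
  · rw [g_eq_neg hx]
    exact Integrable.neg ((integrable_indicator_iff measurableSet_Ico).mpr
      ((integrableOn_const_iff).mpr (Or.inr (by simp [Real.volume_Ico]))))

lemma integral_g (x : ℝ) : ∫ s, g x s = x := by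
  rcases le_or_gt 0 x with hx | hx
  · rw [g_eq_pos hx, MeasureTheory.integral_indicator_one measurableSet_Ico, measureReal_def, Real.volume_Ico,
      ENNReal.toReal_ofReal (by linarith)]
    ring
  · rw [g_eq_neg hx, integral_neg, MeasureTheory.integral_indicator_one measurableSet_Ico, measureReal_def,
      Real.volume_Ico, ENNReal.toReal_ofReal (by linarith)]
    ring

lemma integral_abs_g (x : ℝ) : ∫ s, |g x s| = |x| := by
  rcases le_or_gt 0 x with hx | hx
  · have : (fun s => |g x s|) = (Set.Ico 0 x).indicator 1 := by
      rw [g_eq_pos hx]; funext s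
      rcases Set.indicator_eq_zero_or_self (Set.Ico 0 x) (1 : ℝ → ℝ) s with h | h <;> simp [h]
    rw [this, MeasureTheory.integral_indicator_one measurableSet_Ico, measureReal_def, Real.volume_Ico,
      ENNReal.toReal_ofReal (by linarith), abs_of_nonneg hx]
    ring
  · have : (fun s => |g x s|) = (Set.Ico x 0).indicator 1 := by
      rw [g_eq_neg hx]; funext s
      rcases Set.indicator_eq_zero_or_self (Set.Ico x 0) (1 : ℝ → ℝ) s with h | h <;> simp [h]
    rw [this, MeasureTheory.integral_indicator_one measurableSet_Ico, measureReal_def, Real.volume_Ico,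
      ENNReal.toReal_ofReal (by linarith), abs_of_neg hx]
    ring

end Hoeff

namespace Hoeff
open MeasureTheory Set

lemma measurable_K : Measurable (Function.uncurry fun p q : ℝ × ℝ => g p.1 q.1 * g p.2 q.2) := by
  have h1 : Measurable fun z : (ℝ × ℝ) × ℝ × ℝ => g z.1.1 z.2.1 := by
    apply Measurable.sub
    · exact Measurable.ite (measurableSet_lt (measurable_snd.fst) (measurable_fst.fst))
        measurable_const measurable_const
    · exact Measurable.ite (measurableSet_lt (measurable_snd.fst) measurable_const)
        measurable_const measurable_const
  have h2 : Measurable fun z : (ℝ × ℝ) × ℝ × ℝ => g z.1.2 z.2.2 := by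
    apply Measurable.sub
    · exact Measurable.ite (measurableSet_lt (measurable_snd.snd) (measurable_fst.snd))
        measurable_const measurable_const
    · exact Measurable.ite (measurableSet_lt (measurable_snd.snd) measurable_const)
        measurable_const measurable_const
  exact h1.mul h2

lemma key (ρ : Measure (ℝ × ℝ)) [IsProbabilityMeasure ρ]
    (hi : Integrable (fun p : ℝ × ℝ => p.1 * p.2) ρ) :
    Integrable (fun q : ℝ × ℝ => ∫ p : ℝ × ℝ, g p.1 q.1 * g p.2 q.2 ∂ρ) (volume : Measure (ℝ × ℝ)) ∧
      ∫ q : ℝ × ℝ, (∫ p : ℝ × ℝ, g p.1 q.1 * g p.2 q.2 ∂ρ) ∂volume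
        = ∫ p : ℝ × ℝ, p.1 * p.2 ∂ρ := by
  have hvol : (volume : Measure (ℝ × ℝ)) = (volume : Measure ℝ).prod volume := Measure.volume_eq_prod ℝ ℝ
  have hK : Integrable (Function.uncurry fun p q : ℝ × ℝ => g p.1 q.1 * g p.2 q.2)
      (ρ.prod (volume : Measure (ℝ × ℝ))) := by
    refine (integrable_prod_iff measurable_K.aestronglyMeasurable).mpr ⟨?_, ?_⟩
    · refine Filter.Eventually.of_forall fun p => ?_
      rw [hvol]
      exact (integrable_g p.1).mul_prod (integrable_g p.2)
    · have : ∀ p : ℝ × ℝ, (∫ q : ℝ × ℝ, ‖g p.1 q.1 * g p.2 q.2‖ ∂volume) = |p.1| * |p.2| := by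
        intro p
        have : ∀ q : ℝ × ℝ, ‖g p.1 q.1 * g p.2 q.2‖ = |g p.1 q.1| * |g p.2 q.2| := by
          intro q; rw [Real.norm_eq_abs, abs_mul]
        rw [hvol]
        calc ∫ q : ℝ × ℝ, ‖g p.1 q.1 * g p.2 q.2‖ ∂((volume : Measure ℝ).prod volume)
            = ∫ q : ℝ × ℝ, |g p.1 q.1| * |g p.2 q.2| ∂((volume : Measure ℝ).prod volume) := by
              exact integral_congr_ae (Filter.Eventually.of_forall fun q => this q)
          _ = (∫ s, |g p.1 s|) * ∫ t, |g p.2 t| := integral_prod_mul (fun s => |g p.1 s|) (fun t => |g p.2 t|)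
          _ = |p.1| * |p.2| := by rw [integral_abs_g, integral_abs_g]
      have habs : Integrable (fun p : ℝ × ℝ => |p.1| * |p.2|) ρ :=
        hi.abs.congr (Filter.Eventually.of_forall fun p => (abs_mul _ _))
      exact habs.congr (Filter.Eventually.of_forall fun p => (this p).symm)
  constructor
  · exact hK.integral_prod_right
  · rw [← integral_integral_swap hK]
    refine integral_congr_ae (Filter.Eventually.of_forall fun p => ?_)
    calc ∫ q : ℝ × ℝ, g p.1 q.1 * g p.2 q.2 ∂volume
        = (∫ s, g p.1 s) * ∫ t, g p.2 t := by rw [hvol]; exact integral_prod_mul (fun s => g p.1 s) (fun t => g p.2 t)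
      _ = p.1 * p.2 := by rw [integral_g, integral_g]

end Hoeff

namespace Hoeff
open MeasureTheory Set

variable {ρ : Measure (ℝ × ℝ)} [IsProbabilityMeasure ρ]

lemma measA {s : ℝ} : MeasurableSet {p : ℝ × ℝ | p.1 ≤ s} :=
  measurable_fst measurableSet_Iic

lemma measB {t : ℝ} : MeasurableSet {p : ℝ × ℝ | p.2 ≤ t} :=
  measurable_snd measurableSet_Iic

lemma toReal_add_eq {a b c d : ENNReal} (ha : a ≠ ⊤) (hb : b ≠ ⊤) (hc : c ≠ ⊤) (hd : d ≠ ⊤)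
    (h : a + b = c + d) : a.toReal + b.toReal = c.toReal + d.toReal := by
  rw [← ENNReal.toReal_add ha hb, ← ENNReal.toReal_add hc hd, h]

lemma r_union_inter (A B : Set (ℝ × ℝ)) (hA : MeasurableSet A) (hB : MeasurableSet B) :
    (ρ (A ∪ B)).toReal + (ρ (A ∩ B)).toReal = (ρ A).toReal + (ρ B).toReal :=
  toReal_add_eq (measure_ne_top _ _) (measure_ne_top _ _) (measure_ne_top _ _)
    (measure_ne_top _ _) (measure_union_add_inter A hB)

lemma r_compl (A : Set (ℝ × ℝ)) (hA : MeasurableSet A) :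
    (ρ Aᶜ).toReal = 1 - (ρ A).toReal := by
  have h : ρ A + ρ Aᶜ = 1 := by
    rw [measure_add_measure_compl hA, measure_univ]
  have := toReal_add_eq (measure_ne_top ρ A) (measure_ne_top ρ Aᶜ)
    (ENNReal.one_ne_top) (by simp : (0:ENNReal) ≠ ⊤) (by rw [h, add_zero])
  simp only [ENNReal.toReal_one, ENNReal.toReal_zero, add_zero] at this
  linarith

lemma r_diff (A B : Set (ℝ × ℝ)) (hA : MeasurableSet A) (hB : MeasurableSet B) :
    (ρ (Aᶜ ∩ B)).toReal = (ρ B).toReal - (ρ (A ∩ B)).toReal := by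
  have hu : (A ∩ B) ∪ (Aᶜ ∩ B) = B := by
    ext p; by_cases h : p ∈ A <;> simp [h]
  have hd : Disjoint (A ∩ B) (Aᶜ ∩ B) :=
    Disjoint.mono inter_subset_left inter_subset_left disjoint_compl_right
  have hm : ρ (A ∩ B) + ρ (Aᶜ ∩ B) = ρ B := by
    rw [← measure_union hd (hA.compl.inter hB), hu]
  have := toReal_add_eq (measure_ne_top ρ B) (by simp : (0:ENNReal) ≠ ⊤)
    (measure_ne_top ρ (A ∩ B)) (measure_ne_top ρ (Aᶜ ∩ B)) (by rw [add_zero, hm])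
  simp only [ENNReal.toReal_zero, add_zero] at this
  linarith

lemma r_compl_inter_compl (A B : Set (ℝ × ℝ)) (hA : MeasurableSet A) (hB : MeasurableSet B) :
    (ρ (Aᶜ ∩ Bᶜ)).toReal = 1 - (ρ A).toReal - (ρ B).toReal + (ρ (A ∩ B)).toReal := by
  have h1 : Aᶜ ∩ Bᶜ = (A ∪ B)ᶜ := (compl_union A B).symm
  rw [h1, r_compl _ (hA.union hB)]
  have := r_union_inter (ρ := ρ) A B hA hB
  linarith

lemma r_inter_ge (A B : Set (ℝ × ℝ)) (hA : MeasurableSet A) (hB : MeasurableSet B) :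
    (ρ A).toReal + (ρ B).toReal - 1 ≤ (ρ (A ∩ B)).toReal := by
  have h := r_union_inter (ρ := ρ) A B hA hB
  have h2 : (ρ (A ∪ B)).toReal ≤ 1 := by
    have := prob_le_one (μ := ρ) (s := A ∪ B)
    calc (ρ (A ∪ B)).toReal ≤ (1 : ENNReal).toReal := ENNReal.toReal_mono (by simp) this
      _ = 1 := by simp
  linarith

end Hoeff

namespace Hoeff
open MeasureTheory Set

variable {ρ : Measure (ℝ × ℝ)} [IsProbabilityMeasure ρ]

lemma g_pos_arg {s y : ℝ} (hs : 0 ≤ s) : g y s = if s < y then 1 else 0 := by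
  simp [g, not_lt.mpr hs]

lemma g_neg_arg {t y : ℝ} (ht : t < 0) : g y t = -(if y ≤ t then 1 else 0) := by
  simp only [g, if_pos ht]
  by_cases h1 : t < y
  · rw [if_pos h1, if_neg (not_le.mpr h1)]; ring
  · rw [if_neg h1, if_pos (not_lt.mp h1)]; ring

lemma ite_mul_ite (P Q : Prop) [Decidable P] [Decidable Q] :
    (if P then (1:ℝ) else 0) * (if Q then (1:ℝ) else 0) = if P ∧ Q then 1 else 0 := by
  by_cases hP : P <;> by_cases hQ : Q <;> simp [hP, hQ]

lemma phi_pp {s t : ℝ} (hs : 0 ≤ s) (ht : 0 ≤ t) :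
    ∫ p : ℝ × ℝ, g p.1 s * g p.2 t ∂ρ
      = (ρ ({p : ℝ × ℝ | p.1 ≤ s}ᶜ ∩ {p : ℝ × ℝ | p.2 ≤ t}ᶜ)).toReal := by
  have hfun : (fun p : ℝ × ℝ => g p.1 s * g p.2 t)
      = ({p : ℝ × ℝ | p.1 ≤ s}ᶜ ∩ {p : ℝ × ℝ | p.2 ≤ t}ᶜ).indicator 1 := by
    funext p
    rw [g_pos_arg hs, g_pos_arg ht, ite_mul_ite]
    simp [indicator, mem_inter_iff, not_le]
  rw [hfun, integral_indicator_one (measA.compl.inter measB.compl), measureReal_def]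

lemma phi_pm {s t : ℝ} (hs : 0 ≤ s) (ht : t < 0) :
    ∫ p : ℝ × ℝ, g p.1 s * g p.2 t ∂ρ
      = -(ρ ({p : ℝ × ℝ | p.1 ≤ s}ᶜ ∩ {p : ℝ × ℝ | p.2 ≤ t})).toReal := by
  have hfun : (fun p : ℝ × ℝ => g p.1 s * g p.2 t)
      = fun p => -(({p : ℝ × ℝ | p.1 ≤ s}ᶜ ∩ {p : ℝ × ℝ | p.2 ≤ t}).indicator 1 p) := by
    funext p
    rw [g_pos_arg hs, g_neg_arg ht, mul_neg, ite_mul_ite]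
    simp [indicator, mem_inter_iff, not_le]
  rw [hfun, integral_neg, integral_indicator_one (measA.compl.inter measB), measureReal_def]

lemma phi_mp {s t : ℝ} (hs : s < 0) (ht : 0 ≤ t) :
    ∫ p : ℝ × ℝ, g p.1 s * g p.2 t ∂ρ
      = -(ρ ({p : ℝ × ℝ | p.1 ≤ s} ∩ {p : ℝ × ℝ | p.2 ≤ t}ᶜ)).toReal := by
  have hfun : (fun p : ℝ × ℝ => g p.1 s * g p.2 t)
      = fun p => -(({p : ℝ × ℝ | p.1 ≤ s} ∩ {p : ℝ × ℝ | p.2 ≤ t}ᶜ).indicator 1 p) := by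
    funext p
    rw [g_pos_arg ht, g_neg_arg hs, neg_mul, ite_mul_ite]
    simp only [indicator, mem_inter_iff, mem_compl_iff, mem_setOf_eq, not_le, Pi.one_apply,
      neg_inj, and_comm]
  rw [hfun, integral_neg, integral_indicator_one (measA.inter measB.compl), measureReal_def]

lemma phi_mm {s t : ℝ} (hs : s < 0) (ht : t < 0) :
    ∫ p : ℝ × ℝ, g p.1 s * g p.2 t ∂ρ
      = (ρ ({p : ℝ × ℝ | p.1 ≤ s} ∩ {p : ℝ × ℝ | p.2 ≤ t})).toReal := by
  have hfun : (fun p : ℝ × ℝ => g p.1 s * g p.2 t)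
      = ({p : ℝ × ℝ | p.1 ≤ s} ∩ {p : ℝ × ℝ | p.2 ≤ t}).indicator 1 := by
    funext p
    rw [g_neg_arg hs, g_neg_arg ht, neg_mul_neg, ite_mul_ite]
    simp [indicator, mem_inter_iff]
  rw [hfun, integral_indicator_one (measA.inter measB), measureReal_def]

end Hoeff

namespace Hoeff
open MeasureTheory Set

lemma r_diff' {ρ : Measure (ℝ × ℝ)} [IsProbabilityMeasure ρ]
    (A B : Set (ℝ × ℝ)) (hA : MeasurableSet A) (hB : MeasurableSet B) :
    (ρ (A ∩ Bᶜ)).toReal = (ρ A).toReal - (ρ (A ∩ B)).toReal := by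
  rw [inter_comm, r_diff B A hB hA, inter_comm]

lemma phi_mono (μ W : Measure (ℝ × ℝ)) [IsProbabilityMeasure μ] [IsProbabilityMeasure W]
    (h1 : μ.map Prod.fst = W.map Prod.fst) (h2 : μ.map Prod.snd = W.map Prod.snd)
    (hH : ∀ s t : ℝ, (W ({p : ℝ × ℝ | p.1 ≤ s} ∩ {p : ℝ × ℝ | p.2 ≤ t})).toReal
      ≤ (μ ({p : ℝ × ℝ | p.1 ≤ s} ∩ {p : ℝ × ℝ | p.2 ≤ t})).toReal) :
    ∀ q : ℝ × ℝ, ∫ p : ℝ × ℝ, g p.1 q.1 * g p.2 q.2 ∂W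
      ≤ ∫ p : ℝ × ℝ, g p.1 q.1 * g p.2 q.2 ∂μ := by
  rintro ⟨s, t⟩
  have hA : (μ {p : ℝ × ℝ | p.1 ≤ s}).toReal = (W {p : ℝ × ℝ | p.1 ≤ s}).toReal := by
    have e1 : {p : ℝ × ℝ | p.1 ≤ s} = Prod.fst ⁻¹' Iic s := rfl
    rw [e1, ← Measure.map_apply measurable_fst measurableSet_Iic,
      ← Measure.map_apply measurable_fst measurableSet_Iic, h1]
  have hB : (μ {p : ℝ × ℝ | p.2 ≤ t}).toReal = (W {p : ℝ × ℝ | p.2 ≤ t}).toReal := by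
    have e1 : {p : ℝ × ℝ | p.2 ≤ t} = Prod.snd ⁻¹' Iic t := rfl
    rw [e1, ← Measure.map_apply measurable_snd measurableSet_Iic,
      ← Measure.map_apply measurable_snd measurableSet_Iic, h2]
  have hHst := hH s t
  rcases le_or_gt 0 s with hs | hs <;> rcases le_or_gt 0 t with ht | ht
  · rw [phi_pp hs ht, phi_pp hs ht, r_compl_inter_compl _ _ measA measB,
      r_compl_inter_compl _ _ measA measB]
    linarith
  · rw [phi_pm hs ht, phi_pm hs ht, r_diff _ _ measA measB, r_diff _ _ measA measB]
    linarith
  · rw [phi_mp hs ht, phi_mp hs ht, r_diff' _ _ measA measB, r_diff' _ _ measA measB]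
    linarith
  · rw [phi_mm hs ht, phi_mm hs ht]
    exact hHst

end Hoeff

namespace Hoeff
open MeasureTheory Set Filter

section Quantile

variable {ν : Measure ℝ} [IsProbabilityMeasure ν] {G : ℝ → ℝ}
  (hG : ∀ t, G t = (ν (Iic t)).toReal)

include hG

lemma G_mono : Monotone G := fun a b hab => by
  rw [hG a, hG b]
  exact ENNReal.toReal_mono (measure_ne_top _ _) (measure_mono (Iic_subset_Iic.mpr hab))

lemma G_eq_cdf : G = ProbabilityTheory.cdf ν := by
  funext t; rw [hG t, ProbabilityTheory.cdf_eq_real, measureReal_def]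

lemma G_nonneg (s : ℝ) : 0 ≤ G s := by rw [hG]; exact ENNReal.toReal_nonneg

lemma G_le_one (s : ℝ) : G s ≤ 1 := by
  rw [hG]
  calc (ν (Iic s)).toReal ≤ (1 : ENNReal).toReal :=
        ENNReal.toReal_mono (by simp) prob_le_one
    _ = 1 := by simp

lemma G_set_nonempty {u : ℝ} (hu : u < 1) : {y : ℝ | u ≤ G y}.Nonempty := by
  rw [G_eq_cdf hG]
  have h := (ProbabilityTheory.tendsto_cdf_atTop ν).eventually (eventually_gt_nhds hu)
  rcases h.exists with ⟨y, hy⟩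
  exact ⟨y, le_of_lt hy⟩

lemma G_set_bddBelow {u : ℝ} (hu : 0 < u) : BddBelow {y : ℝ | u ≤ G y} := by
  rw [G_eq_cdf hG]
  have h := (ProbabilityTheory.tendsto_cdf_atBot ν).eventually (eventually_lt_nhds hu)
  rcases h.exists with ⟨y₀, hy₀⟩
  refine ⟨y₀, fun y hy => ?_⟩
  by_contra hc
  push_neg at hc
  exact absurd (le_trans hy (ProbabilityTheory.monotone_cdf ν (le_of_lt hc))) (not_le.mpr hy₀)

lemma galois {Ginv : ℝ → ℝ} (hGinv : ∀ u, Ginv u = sInf {y : ℝ | u ≤ G y})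
    {u s : ℝ} (hu : u ∈ Ioo (0:ℝ) 1) : Ginv u ≤ s ↔ u ≤ G s := by
  constructor
  · intro h
    have hright : ContinuousWithinAt G (Ici s) s := by
      rw [G_eq_cdf hG]; exact (ProbabilityTheory.cdf ν).right_continuous s
    have htend : Filter.Tendsto G (nhdsWithin s (Ioi s)) (nhds (G s)) :=
      hright.tendsto.mono_left (nhdsWithin_mono s Ioi_subset_Ici_self)
    refine ge_of_tendsto htend ?_
    filter_upwards [self_mem_nhdsWithin] with x hx
    have hlt : sInf {y : ℝ | u ≤ G y} < x := lt_of_le_of_lt (hGinv u ▸ h) hx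
    obtain ⟨y, hy, hyx⟩ := (csInf_lt_iff (G_set_bddBelow hG hu.1) (G_set_nonempty hG hu.2)).mp hlt
    exact le_trans hy (G_mono hG (le_of_lt hyx))
  · intro h
    rw [hGinv]
    exact csInf_le (G_set_bddBelow hG hu.1) h

lemma ginv_monoOn {Ginv : ℝ → ℝ} (hGinv : ∀ u, Ginv u = sInf {y : ℝ | u ≤ G y}) :
    MonotoneOn Ginv (Ioo (0:ℝ) 1) := by
  intro u hu v hv huv
  rw [hGinv u, hGinv v]
  exact csInf_le_csInf (G_set_bddBelow hG hu.1) (G_set_nonempty hG hv.2)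
    (fun y hy => le_trans huv hy)

end Quantile

lemma vol_between {S : Set ℝ} {a b : ℝ} (h1 : Ioo a b ⊆ S) (h2 : S ⊆ Icc a b) :
    volume S = ENNReal.ofReal (b - a) :=
  le_antisymm ((measure_mono h2).trans_eq Real.volume_Icc)
    (Real.volume_Ioo ▸ measure_mono h1)

end Hoeff

namespace Hoeff
open MeasureTheory Set

lemma int_mul (ρ : Measure (ℝ × ℝ)) [IsProbabilityMeasure ρ]
    (h1 : Integrable (fun p : ℝ × ℝ => p.1 ^ 2) ρ) (h2 : Integrable (fun p : ℝ × ℝ => p.2 ^ 2) ρ) :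
    Integrable (fun p : ℝ × ℝ => p.1 * p.2) ρ := by
  have hsum : Integrable (fun p : ℝ × ℝ => (p.1 ^ 2 + p.2 ^ 2) / 2) ρ := (h1.add h2).div_const 2
  refine hsum.mono (measurable_fst.mul measurable_snd).aestronglyMeasurable
    (Filter.Eventually.of_forall fun p => ?_)
  rw [Real.norm_eq_abs, Real.norm_eq_abs, abs_mul,
    abs_of_nonneg (show (0:ℝ) ≤ (p.1 ^ 2 + p.2 ^ 2) / 2 by positivity)]
  nlinarith [sq_nonneg (|p.1| - |p.2|), sq_abs p.1, sq_abs p.2, abs_nonneg p.1, abs_nonneg p.2]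

end Hoeff

open Hoeff


/-- **Hoeffding's lower bound on the cross-moment.** If `μ` is a probability measure on `ℝ²`
whose marginals `ν₁, ν₀` (with CDFs `G, F` and quantile functions `Ginv, Finv`) have finite
second moments, then
`∫ x*y ∂μ ≥ ∫ u in (0,1), Ginv u * Finv (1-u)` (the countermonotonic cross-moment). -/
theorem stmt_4 (μ : Measure (ℝ × ℝ)) [IsProbabilityMeasure μ]
    (ν₁ ν₀ : Measure ℝ) (hν₁ : ν₁ = μ.map Prod.fst) (hν₀ : ν₀ = μ.map Prod.snd)
    (hsq₁ : Integrable (fun x : ℝ => x ^ 2) ν₁)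
    (hsq₀ : Integrable (fun y : ℝ => y ^ 2) ν₀)
    (G F : ℝ → ℝ) (hG : ∀ t, G t = (ν₁ (Set.Iic t)).toReal)
    (hF : ∀ t, F t = (ν₀ (Set.Iic t)).toReal)
    (Ginv Finv : ℝ → ℝ) (hGinv : ∀ u, Ginv u = sInf {y : ℝ | u ≤ G y})
    (hFinv : ∀ u, Finv u = sInf {y : ℝ | u ≤ F y}) :
    ∫ u in (0:ℝ)..1, Ginv u * Finv (1 - u) ≤ ∫ p : ℝ × ℝ, p.1 * p.2 ∂μ := by
  have hνp1 : IsProbabilityMeasure ν₁ := by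
    rw [hν₁]; exact Measure.isProbabilityMeasure_map measurable_fst.aemeasurable
  have hνp0 : IsProbabilityMeasure ν₀ := by
    rw [hν₀]; exact Measure.isProbabilityMeasure_map measurable_snd.aemeasurable
  set I : Set ℝ := Set.Ioo 0 1 with hI
  have hbase : IsProbabilityMeasure ((volume : Measure ℝ).restrict I) :=
    ⟨by rw [Measure.restrict_apply_univ]; simp [hI, Real.volume_Ioo]⟩
  have hmem : ∀ u ∈ I, (1 - u) ∈ I := fun u hu => ⟨by simp [hI] at hu ⊢; linarith [hu.2],
    by simp [hI] at hu ⊢; linarith [hu.1]⟩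
  -- measurability of the countermonotone map
  have hGm : AEMeasurable Ginv ((volume : Measure ℝ).restrict I) :=
    aemeasurable_restrict_of_monotoneOn measurableSet_Ioo (ginv_monoOn hG hGinv)
  have hFm : AEMeasurable (fun u => Finv (1 - u)) ((volume : Measure ℝ).restrict I) := by
    refine aemeasurable_restrict_of_antitoneOn measurableSet_Ioo ?_
    intro u hu v hv huv
    exact ginv_monoOn hF hFinv (hmem v hv) (hmem u hu) (by linarith)
  set cm : ℝ → ℝ × ℝ := fun u => (Ginv u, Finv (1 - u)) with hcm
  have hcmm : AEMeasurable cm ((volume : Measure ℝ).restrict I) := hGm.prodMk hFm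
  set W : Measure (ℝ × ℝ) := ((volume : Measure ℝ).restrict I).map cm with hWdef
  have hWp : IsProbabilityMeasure W := Measure.isProbabilityMeasure_map hcmm
  -- Galois connections
  have hiff1 : ∀ u ∈ I, ∀ s : ℝ, (Ginv u ≤ s ↔ u ≤ G s) := fun u hu s => galois hG hGinv hu
  have hiff2 : ∀ u ∈ I, ∀ t : ℝ, (Finv (1 - u) ≤ t ↔ 1 - F t ≤ u) := by
    intro u hu t
    rw [galois hF hFinv (hmem u hu)]
    constructor <;> intro <;> linarith
  -- marginals of W
  have hvol1 : ∀ s : ℝ, volume ({u : ℝ | Ginv u ≤ s} ∩ I) = ν₁ (Set.Iic s) := by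
    intro s
    have h1 : Set.Ioo 0 (G s) ⊆ {u : ℝ | Ginv u ≤ s} ∩ I := by
      intro u hu
      have hu1 : u < 1 := lt_of_lt_of_le hu.2 (G_le_one hG s)
      exact ⟨(hiff1 u ⟨hu.1, hu1⟩ s).mpr (le_of_lt hu.2), hu.1, hu1⟩
    have h2 : {u : ℝ | Ginv u ≤ s} ∩ I ⊆ Set.Icc 0 (G s) := by
      rintro u ⟨hus, huI⟩
      exact ⟨le_of_lt huI.1, (hiff1 u huI s).mp hus⟩
    rw [vol_between h1 h2, sub_zero, hG s, ENNReal.ofReal_toReal (measure_ne_top _ _)]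
  have hvol2 : ∀ t : ℝ, volume ({u : ℝ | Finv (1 - u) ≤ t} ∩ I) = ν₀ (Set.Iic t) := by
    intro t
    have hF1 : F t ≤ 1 := G_le_one hF t
    have hF0 : 0 ≤ F t := G_nonneg hF t
    have h1 : Set.Ioo (1 - F t) 1 ⊆ {u : ℝ | Finv (1 - u) ≤ t} ∩ I := by
      intro u hu
      have hu0 : 0 < u := lt_of_le_of_lt (by linarith) hu.1
      exact ⟨(hiff2 u ⟨hu0, hu.2⟩ t).mpr (le_of_lt hu.1), hu0, hu.2⟩
    have h2 : {u : ℝ | Finv (1 - u) ≤ t} ∩ I ⊆ Set.Icc (1 - F t) 1 := by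
      rintro u ⟨hut, huI⟩
      exact ⟨(hiff2 u huI t).mp hut, le_of_lt huI.2⟩
    rw [vol_between h1 h2, show 1 - (1 - F t) = F t by ring, hF t,
      ENNReal.ofReal_toReal (measure_ne_top _ _)]
  have hmap1 : W.map Prod.fst = ν₁ := by
    rw [hWdef, AEMeasurable.map_map_of_aemeasurable measurable_fst.aemeasurable hcmm]
    haveI : IsProbabilityMeasure (((volume : Measure ℝ).restrict I).map (Prod.fst ∘ cm)) :=
      Measure.isProbabilityMeasure_map (measurable_fst.aemeasurable.comp_aemeasurable hcmm)
    refine Measure.ext_of_Iic _ _ (fun s => ?_)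
    rw [Measure.map_apply_of_aemeasurable
        (measurable_fst.aemeasurable.comp_aemeasurable hcmm) measurableSet_Iic,
      Measure.restrict_apply' measurableSet_Ioo]
    exact hvol1 s
  have hmap2 : W.map Prod.snd = ν₀ := by
    rw [hWdef, AEMeasurable.map_map_of_aemeasurable measurable_snd.aemeasurable hcmm]
    haveI : IsProbabilityMeasure (((volume : Measure ℝ).restrict I).map (Prod.snd ∘ cm)) :=
      Measure.isProbabilityMeasure_map (measurable_snd.aemeasurable.comp_aemeasurable hcmm)
    refine Measure.ext_of_Iic _ _ (fun t => ?_)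
    rw [Measure.map_apply_of_aemeasurable
        (measurable_snd.aemeasurable.comp_aemeasurable hcmm) measurableSet_Iic,
      Measure.restrict_apply' measurableSet_Ioo]
    exact hvol2 t
  have hm1 : μ.map Prod.fst = W.map Prod.fst := by rw [hmap1, hν₁]
  have hm2 : μ.map Prod.snd = W.map Prod.snd := by rw [hmap2, hν₀]
  -- joint CDF comparison
  have hH : ∀ s t : ℝ, (W ({p : ℝ × ℝ | p.1 ≤ s} ∩ {p : ℝ × ℝ | p.2 ≤ t})).toReal
      ≤ (μ ({p : ℝ × ℝ | p.1 ≤ s} ∩ {p : ℝ × ℝ | p.2 ≤ t})).toReal := by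
    intro s t
    have hG1 : G s ≤ 1 := G_le_one hG s
    have hF1 : F t ≤ 1 := G_le_one hF t
    have hG0 : 0 ≤ G s := G_nonneg hG s
    have hF0 : 0 ≤ F t := G_nonneg hF t
    have hWst : W ({p : ℝ × ℝ | p.1 ≤ s} ∩ {p : ℝ × ℝ | p.2 ≤ t})
        = ENNReal.ofReal (G s - (1 - F t)) := by
      rw [hWdef, Measure.map_apply_of_aemeasurable hcmm (measA.inter measB),
        Measure.restrict_apply' measurableSet_Ioo]
      refine vol_between (a := 1 - F t) (b := G s) ?_ ?_
      · intro u hu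
        have hu0 : 0 < u := lt_of_le_of_lt (by linarith) hu.1
        have hu1 : u < 1 := lt_of_lt_of_le hu.2 hG1
        refine ⟨⟨?_, ?_⟩, hu0, hu1⟩
        · exact (hiff1 u ⟨hu0, hu1⟩ s).mpr (le_of_lt hu.2)
        · exact (hiff2 u ⟨hu0, hu1⟩ t).mpr (le_of_lt hu.1)
      · rintro u ⟨⟨hus, hut⟩, huI⟩
        exact ⟨(hiff2 u huI t).mp hut, (hiff1 u huI s).mp hus⟩
    have h1 : (μ {p : ℝ × ℝ | p.1 ≤ s}).toReal = G s := by
      rw [hG s, hν₁, Measure.map_apply measurable_fst measurableSet_Iic]; rfl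
    have h2 : (μ {p : ℝ × ℝ | p.2 ≤ t}).toReal = F t := by
      rw [hF t, hν₀, Measure.map_apply measurable_snd measurableSet_Iic]; rfl
    have h3 := r_inter_ge (ρ := μ) _ _ (measA (s := s)) (measB (t := t))
    rw [hWst]
    rcases le_or_gt (G s - (1 - F t)) 0 with hle | hlt
    · rw [ENNReal.ofReal_of_nonpos hle]
      simp
    · rw [ENNReal.toReal_ofReal (le_of_lt hlt)]
      rw [h1, h2] at h3
      linarith
  -- integrability of the product
  have hsqm : AEStronglyMeasurable (fun x : ℝ => x ^ 2) :=
    (continuous_pow 2).aestronglyMeasurable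
  have hiμ1 : Integrable (fun p : ℝ × ℝ => p.1 ^ 2) μ :=
    (integrable_map_measure ((continuous_pow 2).measurable.aestronglyMeasurable)
      measurable_fst.aemeasurable).mp (by rw [← hν₁]; exact hsq₁)
  have hiμ2 : Integrable (fun p : ℝ × ℝ => p.2 ^ 2) μ :=
    (integrable_map_measure ((continuous_pow 2).measurable.aestronglyMeasurable)
      measurable_snd.aemeasurable).mp (by rw [← hν₀]; exact hsq₀)
  have hiW1 : Integrable (fun p : ℝ × ℝ => p.1 ^ 2) W :=
    (integrable_map_measure ((continuous_pow 2).measurable.aestronglyMeasurable)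
      measurable_fst.aemeasurable).mp (by rw [hmap1]; exact hsq₁)
  have hiW2 : Integrable (fun p : ℝ × ℝ => p.2 ^ 2) W :=
    (integrable_map_measure ((continuous_pow 2).measurable.aestronglyMeasurable)
      measurable_snd.aemeasurable).mp (by rw [hmap2]; exact hsq₀)
  have hiμ : Integrable (fun p : ℝ × ℝ => p.1 * p.2) μ := int_mul μ hiμ1 hiμ2
  have hiW : Integrable (fun p : ℝ × ℝ => p.1 * p.2) W := int_mul W hiW1 hiW2
  -- the Hoeffding–Fréchet comparison
  have hkeyμ := key μ hiμ
  have hkeyW := key W hiW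
  have hφ := phi_mono μ W hm1 hm2 hH
  have hle : ∫ p : ℝ × ℝ, p.1 * p.2 ∂W ≤ ∫ p : ℝ × ℝ, p.1 * p.2 ∂μ := by
    rw [← hkeyμ.2, ← hkeyW.2]
    exact integral_mono hkeyW.1 hkeyμ.1 hφ
  -- identify the interval integral with the countermonotone cross-moment
  have hLHS : ∫ u in (0:ℝ)..1, Ginv u * Finv (1 - u) = ∫ p : ℝ × ℝ, p.1 * p.2 ∂W := by
    rw [intervalIntegral.integral_of_le zero_le_one,
      MeasureTheory.integral_Ioc_eq_integral_Ioo, hWdef,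
      integral_map (f := fun p : ℝ × ℝ => p.1 * p.2) hcmm ((measurable_fst.mul measurable_snd : Measurable fun p : ℝ × ℝ => p.1 * p.2).aestronglyMeasurable)]
  rw [hLHS]
  exact hle
end

section
/- Let N ≥ 2 and let Y(1), Y(0) : Fin N → ℝ be the potential outcomes of a finite population. Let 1 ≤ n₁ ≤ N − 1, n₀ = N − n₁, and let Z = (Z₁,…,Z_N) be uniformly distributed over all vectors in {0,1}^N with exactly n₁ ones (a completely randomized experiment). Define the difference-in-means estimator τ̂ = (1/n₁) ∑_i Z_i Y_i(1) − (1/n₀) ∑_i (1 − Z_i) Y_i(0). Then Var(τ̂) = (1/N) [ (n₀/n₁) S²(Y(1)) + (n₁/n₀) S²(Y(0)) + 2 S(Y(1),Y(0)) ], where S²(Y(q)) = (1/(N−1)) ∑_i (Y_i(q) − Ȳ(q))², S(Y(1),Y(0)) = (1/(N−1)) ∑_i (Y_i(1) − Ȳ(1))(Y_i(0) − Ȳ(0)), and Ȳ(q) = (1/N) ∑_i Y_i(q). -/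
open Finset

/-- Expectation of a real-valued function of a completely randomized treatment assignment:
the assignment is uniformly distributed over all subsets of `Fin N` of size `n`, so the
expectation is the average over all such subsets. -/
noncomputable def expectCRE {N n : ℕ} (f : {S : Finset (Fin N) // S.card = n} → ℝ) : ℝ :=
  (∑ ω : {S : Finset (Fin N) // S.card = n}, f ω)
    / (Fintype.card {S : Finset (Fin N) // S.card = n} : ℝ)


lemma count_one {α : Type*} [DecidableEq α] (s : Finset α) (i : α) (hi : i ∈ s) (n : ℕ)
    (hn : 1 ≤ n) :
    ((s.powersetCard n).filter (fun t => i ∈ t)).card = (s.card - 1).choose (n - 1) := by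
  rw [← Finset.card_erase_of_mem hi, ← Finset.card_powersetCard]
  apply Finset.card_bij (fun t _ => t.erase i)
  · rintro t ht
    simp only [mem_filter, mem_powersetCard] at ht
    simp only [mem_powersetCard]
    exact ⟨Finset.erase_subset_erase _ ht.1.1, by rw [Finset.card_erase_of_mem ht.2, ht.1.2]⟩
  · rintro t ht u hu h
    simp only [mem_filter] at ht hu
    rw [← Finset.insert_erase ht.2, ← Finset.insert_erase hu.2, h]
  · rintro u hu
    simp only [mem_powersetCard] at hu
    have hiu : i ∉ u := fun h => (Finset.mem_erase.1 (hu.1 h)).1 rfl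
    refine ⟨insert i u, ?_, ?_⟩
    · simp only [mem_filter, mem_powersetCard]
      refine ⟨⟨?_, ?_⟩, Finset.mem_insert_self _ _⟩
      · exact Finset.insert_subset hi (hu.1.trans (Finset.erase_subset _ _))
      · rw [Finset.card_insert_of_notMem hiu, hu.2]; omega
    · rw [Finset.erase_insert hiu]

lemma count_two {α : Type*} [DecidableEq α] (s : Finset α) (i j : α) (hi : i ∈ s) (hj : j ∈ s)
    (hij : i ≠ j) (n : ℕ) (hn : 2 ≤ n) :
    ((s.powersetCard n).filter (fun t => i ∈ t ∧ j ∈ t)).card = (s.card - 2).choose (n - 2) := by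
  have hcard : ((s.erase i).erase j).card = s.card - 2 := by
    rw [Finset.card_erase_of_mem (Finset.mem_erase.2 ⟨hij.symm, hj⟩), Finset.card_erase_of_mem hi]
    omega
  rw [← hcard, ← Finset.card_powersetCard]
  apply Finset.card_bij (fun t _ => (t.erase i).erase j)
  · rintro t ht
    simp only [mem_filter, mem_powersetCard] at ht
    simp only [mem_powersetCard]
    constructor
    · exact Finset.erase_subset_erase _ (Finset.erase_subset_erase _ ht.1.1)
    · rw [Finset.card_erase_of_mem (Finset.mem_erase.2 ⟨hij.symm, ht.2.2⟩),
        Finset.card_erase_of_mem ht.2.1, ht.1.2]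
      omega
  · rintro t ht u hu h
    simp only [mem_filter] at ht hu
    have h2 : t.erase i = u.erase i := by
      rw [← Finset.insert_erase (Finset.mem_erase.2 ⟨hij.symm, ht.2.2⟩),
        ← Finset.insert_erase (Finset.mem_erase.2 ⟨hij.symm, hu.2.2⟩), h]
    rw [← Finset.insert_erase ht.2.1, ← Finset.insert_erase hu.2.1, h2]
  · rintro u hu
    simp only [mem_powersetCard] at hu
    have hju : j ∉ u := fun h => (Finset.mem_erase.1 (hu.1 h)).1 rfl
    have hiu : i ∉ u := fun h => (Finset.mem_erase.1 (Finset.mem_of_mem_erase (hu.1 h))).1 rfl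
    refine ⟨insert i (insert j u), ?_, ?_⟩
    · simp only [mem_filter, mem_powersetCard]
      refine ⟨⟨?_, ?_⟩, Finset.mem_insert_self _ _, Finset.mem_insert_of_mem (Finset.mem_insert_self _ _)⟩
      · apply Finset.insert_subset hi
        apply Finset.insert_subset hj
        exact hu.1.trans ((Finset.erase_subset _ _).trans (Finset.erase_subset _ _))
      · rw [Finset.card_insert_of_notMem (by simp [hij, hiu]),
          Finset.card_insert_of_notMem hju, hu.2]
        omega
    · rw [Finset.erase_insert (by simp [hij, hiu]), Finset.erase_insert hju]

lemma sum_sub_pc {N n : ℕ} (f : Finset (Fin N) → ℝ) :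
    ∑ ω : {S : Finset (Fin N) // S.card = n}, f ω.1
      = ∑ S ∈ (univ : Finset (Fin N)).powersetCard n, f S :=
  (Finset.sum_subtype _ (fun S => by simp) f).symm

lemma card_sub_pc {N n : ℕ} :
    Fintype.card {S : Finset (Fin N) // S.card = n} = N.choose n := by
  rw [Fintype.card_subtype]
  have : (univ : Finset (Finset (Fin N))).filter (fun S => S.card = n)
      = (univ : Finset (Fin N)).powersetCard n := by
    rw [Finset.powersetCard_eq_filter, Finset.powerset_univ]
  rw [this, Finset.card_powersetCard, Finset.card_univ, Fintype.card_fin]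

lemma expect_var {N n : ℕ} (hc : (Fintype.card {S : Finset (Fin N) // S.card = n} : ℝ) ≠ 0)
    (f : {S : Finset (Fin N) // S.card = n} → ℝ) :
    expectCRE (fun ω => (f ω - expectCRE f) ^ 2)
      = expectCRE (fun ω => f ω ^ 2) - (expectCRE f) ^ 2 := by
  unfold expectCRE
  set c : ℝ := (Fintype.card {S : Finset (Fin N) // S.card = n} : ℝ) with hcdef
  set s : ℝ := ∑ ω, f ω with hs
  have h1 : ∑ ω : {S : Finset (Fin N) // S.card = n}, (f ω - s / c) ^ 2
      = (∑ ω, f ω ^ 2) - 2 * (s / c) * s + c * (s / c) ^ 2 := by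
    have : ∀ ω : {S : Finset (Fin N) // S.card = n},
        (f ω - s / c) ^ 2 = f ω ^ 2 - 2 * (s / c) * f ω + (s / c) ^ 2 := fun ω => by ring
    rw [Finset.sum_congr rfl (fun ω _ => this ω)]
    rw [Finset.sum_add_distrib, Finset.sum_sub_distrib, ← Finset.mul_sum,
      Finset.sum_const, Finset.card_univ, nsmul_eq_mul, ← hs, ← hcdef]
  rw [h1]
  field_simp
  ring

variable {N n : ℕ}

lemma sum_indicator (a : Fin N → ℝ) (S : Finset (Fin N)) :
    ∑ i ∈ S, a i = ∑ i : Fin N, if i ∈ S then a i else 0 := by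
  rw [Finset.sum_ite_mem, Finset.univ_inter]

lemma sum_linear (hn : 1 ≤ n) (a : Fin N → ℝ) :
    ∑ S ∈ (univ : Finset (Fin N)).powersetCard n, ∑ i ∈ S, a i
      = ((N - 1).choose (n - 1) : ℝ) * ∑ i, a i := by
  calc ∑ S ∈ (univ : Finset (Fin N)).powersetCard n, ∑ i ∈ S, a i
      = ∑ S ∈ (univ : Finset (Fin N)).powersetCard n, ∑ i : Fin N, if i ∈ S then a i else 0 := by
        exact Finset.sum_congr rfl fun S _ => sum_indicator a S
    _ = ∑ i : Fin N, ∑ S ∈ (univ : Finset (Fin N)).powersetCard n, if i ∈ S then a i else 0 :=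
        Finset.sum_comm
    _ = ∑ i : Fin N, ((N - 1).choose (n - 1) : ℝ) * a i := by
        refine Finset.sum_congr rfl fun i _ => ?_
        rw [← Finset.sum_filter, Finset.sum_const, count_one univ i (mem_univ i) n hn,
          Finset.card_univ, Fintype.card_fin, nsmul_eq_mul]
    _ = ((N - 1).choose (n - 1) : ℝ) * ∑ i, a i := by rw [Finset.mul_sum]

lemma pair_count (hn : 1 ≤ n) (i j : Fin N) (hij : i ≠ j) :
    (((univ : Finset (Fin N)).powersetCard n).filter (fun S => i ∈ S ∧ j ∈ S)).card
      = if 2 ≤ n then (N - 2).choose (n - 2) else 0 := by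
  by_cases h2 : 2 ≤ n
  · rw [if_pos h2, count_two univ i j (mem_univ i) (mem_univ j) hij n h2,
      Finset.card_univ, Fintype.card_fin]
  · rw [if_neg h2, Finset.card_eq_zero, Finset.filter_eq_empty_iff]
    rintro S hS ⟨hiS, hjS⟩
    simp only [Finset.mem_powersetCard] at hS
    have : ({i, j} : Finset (Fin N)) ⊆ S := by
      intro x hx; rcases Finset.mem_insert.1 hx with h | h
      · exact h ▸ hiS
      · exact (Finset.mem_singleton.1 h) ▸ hjS
    have := Finset.card_le_card this
    rw [Finset.card_insert_of_notMem (by simpa using hij), Finset.card_singleton, hS.2] at this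
    omega

lemma sum_square (hn : 1 ≤ n) (a : Fin N → ℝ) :
    ∑ S ∈ (univ : Finset (Fin N)).powersetCard n, (∑ i ∈ S, a i) ^ 2
      = ((N - 1).choose (n - 1) : ℝ) * (∑ i, a i ^ 2)
        + ((if 2 ≤ n then (N - 2).choose (n - 2) else 0 : ℕ) : ℝ)
          * ((∑ i, a i) ^ 2 - ∑ i, a i ^ 2) := by
  set A : ℝ := ((N - 1).choose (n - 1) : ℝ)
  set K : ℝ := ((if 2 ≤ n then (N - 2).choose (n - 2) else 0 : ℕ) : ℝ)
  have step1 : ∑ S ∈ (univ : Finset (Fin N)).powersetCard n, (∑ i ∈ S, a i) ^ 2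
      = ∑ i : Fin N, ∑ j : Fin N,
          ((((univ : Finset (Fin N)).powersetCard n).filter
            (fun S => i ∈ S ∧ j ∈ S)).card : ℝ) * (a i * a j) := by
    have h1 : ∀ S : Finset (Fin N), (∑ i ∈ S, a i) ^ 2
        = ∑ i : Fin N, ∑ j : Fin N, if i ∈ S ∧ j ∈ S then a i * a j else 0 := by
      intro S
      rw [sq, Finset.sum_mul_sum, sum_indicator (fun i => ∑ j ∈ S, a i * a j) S]
      refine Finset.sum_congr rfl fun i _ => ?_
      by_cases hi : i ∈ S
      · simp only [hi, if_true, true_and]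
        exact sum_indicator (fun j => a i * a j) S
      · simp [hi]
    rw [Finset.sum_congr rfl fun S _ => h1 S, Finset.sum_comm]
    refine Finset.sum_congr rfl fun i _ => ?_
    rw [Finset.sum_comm]
    refine Finset.sum_congr rfl fun j _ => ?_
    rw [← Finset.sum_filter, Finset.sum_const, nsmul_eq_mul]
  rw [step1]
  have step2 : ∀ i : Fin N, ∑ j : Fin N,
      ((((univ : Finset (Fin N)).powersetCard n).filter
        (fun S => i ∈ S ∧ j ∈ S)).card : ℝ) * (a i * a j)
      = A * a i ^ 2 + K * (a i * (∑ j, a j) - a i ^ 2) := by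
    intro i
    rw [← Finset.add_sum_erase _ _ (Finset.mem_univ i)]
    have hdiag : ((((univ : Finset (Fin N)).powersetCard n).filter
        (fun S => i ∈ S ∧ i ∈ S)).card : ℝ) * (a i * a i) = A * a i ^ 2 := by
      have heq : (((univ : Finset (Fin N)).powersetCard n).filter (fun S => i ∈ S ∧ i ∈ S))
          = (((univ : Finset (Fin N)).powersetCard n).filter (fun S => i ∈ S)) :=
        Finset.filter_congr (fun S _ => by simp)
      rw [heq, count_one univ i (mem_univ i) n hn, Finset.card_univ, Fintype.card_fin, sq]
    have hoff : ∑ j ∈ Finset.univ.erase i,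
        ((((univ : Finset (Fin N)).powersetCard n).filter
          (fun S => i ∈ S ∧ j ∈ S)).card : ℝ) * (a i * a j)
        = K * (a i * (∑ j, a j) - a i ^ 2) := by
      have : ∀ j ∈ Finset.univ.erase i,
          ((((univ : Finset (Fin N)).powersetCard n).filter
            (fun S => i ∈ S ∧ j ∈ S)).card : ℝ) * (a i * a j) = K * (a i * a j) := by
        intro j hj
        rw [pair_count hn i j (Ne.symm (Finset.mem_erase.1 hj).1)]
      rw [Finset.sum_congr rfl this, ← Finset.mul_sum, ← Finset.mul_sum,
        Finset.sum_erase_eq_sub (Finset.mem_univ i)]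
      ring_nf
    rw [hdiag, hoff]
  rw [Finset.sum_congr rfl fun i _ => step2 i, Finset.sum_add_distrib,
    ← Finset.mul_sum, ← Finset.mul_sum, Finset.sum_sub_distrib, ← Finset.sum_mul]
  ring

set_option maxHeartbeats 2000000 in
/-- **Neyman's variance formula.** In a completely randomized experiment with `n₁` treated
units out of `N`, the variance of the difference-in-means estimator is
`(1/N) ((n₀/n₁) S²(Y(1)) + (n₁/n₀) S²(Y(0)) + 2 S(Y(1),Y(0)))`. -/
theorem stmt_5 (N : ℕ) (hN : 2 ≤ N) (Y1 Y0 : Fin N → ℝ)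
    (n1 n0 : ℕ) (hn1 : 1 ≤ n1) (hn1' : n1 ≤ N - 1) (hn0 : n0 = N - n1)
    (Z : Fin N → {S : Finset (Fin N) // S.card = n1} → ℝ)
    (hZ : ∀ i ω, Z i ω = if i ∈ ω.1 then 1 else 0)
    (τhat : {S : Finset (Fin N) // S.card = n1} → ℝ)
    (hτ : ∀ ω, τhat ω = (∑ i, Z i ω * Y1 i) / (n1 : ℝ)
        - (∑ i, (1 - Z i ω) * Y0 i) / (n0 : ℝ))
    (Ybar1 Ybar0 S2Y1 S2Y0 S10 : ℝ)
    (hY1 : Ybar1 = (∑ i, Y1 i) / (N : ℝ)) (hY0 : Ybar0 = (∑ i, Y0 i) / (N : ℝ))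
    (hS1 : S2Y1 = (∑ i, (Y1 i - Ybar1) ^ 2) / ((N : ℝ) - 1))
    (hS0 : S2Y0 = (∑ i, (Y0 i - Ybar0) ^ 2) / ((N : ℝ) - 1))
    (hS10 : S10 = (∑ i, (Y1 i - Ybar1) * (Y0 i - Ybar0)) / ((N : ℝ) - 1)) :
    expectCRE (fun ω => (τhat ω - expectCRE τhat) ^ 2)
      = (1 / (N : ℝ)) * (((n0 : ℝ) / (n1 : ℝ)) * S2Y1 + ((n1 : ℝ) / (n0 : ℝ)) * S2Y0
          + 2 * S10) := by
  -- basic nonvanishing facts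
  have hn0ge : 1 ≤ n0 := by omega
  have hn1N : n1 ≤ N := by omega
  have hN0 : (N : ℝ) ≠ 0 := Nat.cast_ne_zero.2 (by omega)
  have hN1 : (N : ℝ) - 1 ≠ 0 := by
    have : (2 : ℝ) ≤ (N : ℝ) := by exact_mod_cast hN
    linarith
  have hn1R : (n1 : ℝ) ≠ 0 := Nat.cast_ne_zero.2 (by omega)
  have hn0R : (n0 : ℝ) ≠ 0 := Nat.cast_ne_zero.2 (by omega)
  have hn0cast : (n0 : ℝ) = (N : ℝ) - (n1 : ℝ) := by
    rw [hn0, Nat.cast_sub hn1N]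
  have hCnat : Fintype.card {S : Finset (Fin N) // S.card = n1} = N.choose n1 := card_sub_pc
  have hCR : (Fintype.card {S : Finset (Fin N) // S.card = n1} : ℝ) ≠ 0 := by
    rw [hCnat]; exact Nat.cast_ne_zero.2 (Nat.choose_pos hn1N).ne'
  set C : ℝ := (N.choose n1 : ℝ) with hCdef
  have hC0 : C ≠ 0 := by rw [hCdef]; exact_mod_cast hCnat ▸ hCR
  set a : Fin N → ℝ := fun i => Y1 i / n1 + Y0 i / n0 with ha
  set c0 : ℝ := -((∑ i, Y0 i) / n0) with hc0
  set T : {S : Finset (Fin N) // S.card = n1} → ℝ := fun ω => ∑ i ∈ ω.1, a i with hT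
  -- τhat = T + c0
  have hτ' : ∀ ω, τhat ω = T ω + c0 := by
    intro ω
    rw [hτ]
    have hz1 : ∑ i, Z i ω * Y1 i = ∑ i ∈ ω.1, Y1 i := by
      simp only [hZ, ite_mul, one_mul, zero_mul]
      exact (sum_indicator Y1 ω.1).symm
    have hz0 : ∑ i, (1 - Z i ω) * Y0 i = (∑ i, Y0 i) - ∑ i ∈ ω.1, Y0 i := by
      have hpt : ∀ i, (1 - Z i ω) * Y0 i = Y0 i - (if i ∈ ω.1 then Y0 i else 0) := by
        intro i; rw [hZ]; by_cases h : i ∈ ω.1 <;> simp [h]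
      rw [Finset.sum_congr rfl fun i _ => hpt i, Finset.sum_sub_distrib, ← sum_indicator]
    have hTω : T ω = (∑ i ∈ ω.1, Y1 i) / n1 + (∑ i ∈ ω.1, Y0 i) / n0 := by
      simp only [hT, ha, Finset.sum_add_distrib, Finset.sum_div]
    rw [hz1, hz0, hTω, hc0]
    ring
  -- expectation of τhat shifts by c0
  have hEτ : expectCRE τhat = expectCRE T + c0 := by
    unfold expectCRE
    rw [Finset.sum_congr rfl fun ω _ => hτ' ω, Finset.sum_add_distrib,
      Finset.sum_const, Finset.card_univ, nsmul_eq_mul, add_div,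
      mul_div_cancel_left₀ _ hCR]
  -- reduce to variance of T
  have hfun : (fun ω => (τhat ω - expectCRE τhat) ^ 2)
      = fun ω => (T ω - expectCRE T) ^ 2 := by
    funext ω; rw [hτ' ω, hEτ]; ring
  rw [hfun, expect_var hCR T]
  -- moments of T
  set Sa : ℝ := ∑ i, a i with hSadef
  set Sq : ℝ := ∑ i, a i ^ 2 with hSqdef
  set A : ℝ := (((N - 1).choose (n1 - 1) : ℕ) : ℝ) with hAdef
  set K : ℝ := ((if 2 ≤ n1 then (N - 2).choose (n1 - 2) else 0 : ℕ) : ℝ) with hKdef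
  have hsumT : ∑ ω : {S : Finset (Fin N) // S.card = n1}, T ω = A * Sa := by
    rw [show (∑ ω : {S : Finset (Fin N) // S.card = n1}, T ω)
        = ∑ S ∈ (univ : Finset (Fin N)).powersetCard n1, ∑ i ∈ S, a i from
      sum_sub_pc (fun S => ∑ i ∈ S, a i)]
    exact sum_linear hn1 a
  have hsumT2 : ∑ ω : {S : Finset (Fin N) // S.card = n1}, T ω ^ 2
      = A * Sq + K * (Sa ^ 2 - Sq) := by
    rw [show (∑ ω : {S : Finset (Fin N) // S.card = n1}, T ω ^ 2)
        = ∑ S ∈ (univ : Finset (Fin N)).powersetCard n1, (∑ i ∈ S, a i) ^ 2 from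
      sum_sub_pc (fun S => (∑ i ∈ S, a i) ^ 2)]
    exact sum_square hn1 a
  have hET : expectCRE T = A * Sa / C := by
    unfold expectCRE; rw [hsumT, hCnat]
  have hET2 : expectCRE (fun ω => T ω ^ 2) = (A * Sq + K * (Sa ^ 2 - Sq)) / C := by
    unfold expectCRE; rw [hsumT2, hCnat]
  rw [hET, hET2]
  -- combinatorial identities
  have hAC : (N : ℝ) * A = C * n1 := by
    have h := Nat.add_one_mul_choose_eq (N - 1) (n1 - 1)
    rw [show N - 1 + 1 = N by omega, show n1 - 1 + 1 = n1 by omega] at h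
    rw [hAdef, hCdef]
    exact_mod_cast h
  have hKA : ((N : ℝ) - 1) * K = A * ((n1 : ℝ) - 1) := by
    by_cases h2 : 2 ≤ n1
    · rw [hKdef, if_pos h2]
      have hnat : (N - 1) * (N - 2).choose (n1 - 2) = (N - 1).choose (n1 - 1) * (n1 - 1) := by
        have h := Nat.add_one_mul_choose_eq (N - 2) (n1 - 2)
        rw [show N - 2 + 1 = N - 1 by omega, show n1 - 2 + 1 = n1 - 1 by omega] at h
        exact h
      have h1N : ((N - 1 : ℕ) : ℝ) = (N : ℝ) - 1 := by
        rw [Nat.cast_sub (by omega), Nat.cast_one]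
      have h1n : ((n1 - 1 : ℕ) : ℝ) = (n1 : ℝ) - 1 := by
        rw [Nat.cast_sub (by omega), Nat.cast_one]
      rw [hAdef, ← h1N, ← h1n]
      exact_mod_cast hnat
    · have hn11 : n1 = 1 := by omega
      rw [hKdef, if_neg h2]
      simp [hn11]
  have hA' : A = C * n1 / N := by
    rw [eq_div_iff hN0]; linear_combination hAC
  have hK' : K = C * n1 * ((n1 : ℝ) - 1) / ((N : ℝ) * ((N : ℝ) - 1)) := by
    rw [eq_div_iff (mul_ne_zero hN0 hN1)]
    linear_combination (N : ℝ) * hKA + ((n1 : ℝ) - 1) * hAC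
  -- express population sums
  set P1 : ℝ := ∑ i, Y1 i with hP1
  set P0 : ℝ := ∑ i, Y0 i with hP0
  set Q1 : ℝ := ∑ i, Y1 i ^ 2 with hQ1
  set Q0 : ℝ := ∑ i, Y0 i ^ 2 with hQ0
  set Q10 : ℝ := ∑ i, Y1 i * Y0 i with hQ10
  have hNcard : ((Finset.univ : Finset (Fin N)).card : ℝ) = (N : ℝ) := by
    rw [Finset.card_univ, Fintype.card_fin]
  have hSa' : Sa = P1 / n1 + P0 / n0 := by
    rw [hSadef, hP1, hP0, Finset.sum_div, Finset.sum_div, ← Finset.sum_add_distrib]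
  have hSq' : Sq = Q1 / (n1 : ℝ) ^ 2 + 2 * (Q10 / ((n1 : ℝ) * n0)) + Q0 / (n0 : ℝ) ^ 2 := by
    rw [hSqdef, hQ1, hQ10, hQ0]
    rw [Finset.sum_div, Finset.sum_div, Finset.sum_div, Finset.mul_sum,
      ← Finset.sum_add_distrib, ← Finset.sum_add_distrib]
    refine Finset.sum_congr rfl fun i _ => ?_
    simp only [ha]
    field_simp
    ring
  have hdev1 : ∑ i, (Y1 i - Ybar1) ^ 2 = Q1 - 2 * Ybar1 * P1 + N * Ybar1 ^ 2 := by
    have hpt : ∀ i : Fin N, (Y1 i - Ybar1) ^ 2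
        = Y1 i ^ 2 - 2 * Ybar1 * Y1 i + Ybar1 ^ 2 := fun i => by ring
    rw [Finset.sum_congr rfl fun i _ => hpt i, Finset.sum_add_distrib,
      Finset.sum_sub_distrib, ← Finset.mul_sum, Finset.sum_const, nsmul_eq_mul, hNcard,
      hQ1, hP1]
  have hdev0 : ∑ i, (Y0 i - Ybar0) ^ 2 = Q0 - 2 * Ybar0 * P0 + N * Ybar0 ^ 2 := by
    have hpt : ∀ i : Fin N, (Y0 i - Ybar0) ^ 2
        = Y0 i ^ 2 - 2 * Ybar0 * Y0 i + Ybar0 ^ 2 := fun i => by ring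
    rw [Finset.sum_congr rfl fun i _ => hpt i, Finset.sum_add_distrib,
      Finset.sum_sub_distrib, ← Finset.mul_sum, Finset.sum_const, nsmul_eq_mul, hNcard,
      hQ0, hP0]
  have hdev10 : ∑ i, (Y1 i - Ybar1) * (Y0 i - Ybar0)
      = Q10 - Ybar1 * P0 - Ybar0 * P1 + N * (Ybar1 * Ybar0) := by
    have hpt : ∀ i : Fin N, (Y1 i - Ybar1) * (Y0 i - Ybar0)
        = Y1 i * Y0 i - Ybar1 * Y0 i - Ybar0 * Y1 i + Ybar1 * Ybar0 := fun i => by ring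
    rw [Finset.sum_congr rfl fun i _ => hpt i, Finset.sum_add_distrib,
      Finset.sum_sub_distrib, Finset.sum_sub_distrib, ← Finset.mul_sum, ← Finset.mul_sum,
      Finset.sum_const, nsmul_eq_mul, hNcard, hQ10, hP1, hP0]
  -- final algebra
  rw [hS1, hS0, hS10, hdev1, hdev0, hdev10, hY1, hY0, hSa', hSq', hA', hK', hn0cast]
  have hNn1 : (N : ℝ) - (n1 : ℝ) ≠ 0 := hn0cast ▸ hn0R
  field_simp
  ring
end

section
/- Let N ≥ 2, let y : Fin N → ℝ be a finite population, and let 2 ≤ n ≤ N. Let Z be uniformly distributed over all vectors in {0,1}^N with exactly n ones (a simple random sample of size n drawn without replacement). Then E[ (1/(n−1)) ∑_i Z_i (y_i − ȳ^S)² ] = (1/(N−1)) ∑_i (y_i − ȳ)², where ȳ^S = (1/n) ∑_i Z_i y_i is the sample mean and ȳ = (1/N) ∑_i y_i is the population mean. That is, the sample variance with divisor n − 1 is an unbiased estimator of the finite-population variance with divisor N − 1 under simple random sampling without replacement. -/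
open Finset

lemma countOne {N n : ℕ} (hn : 1 ≤ n) (i : Fin N) :
    (((powersetCard n (univ : Finset (Fin N)))).filter (fun S => i ∈ S)).card
      = (N-1).choose (n-1) := by
  classical
  have : (((powersetCard n (univ : Finset (Fin N)))).filter (fun S => i ∈ S)).card
      = (powersetCard (n-1) ((univ : Finset (Fin N)).erase i)).card := by
    refine Finset.card_bij' (fun S _ => S.erase i) (fun T _ => insert i T) ?_ ?_ ?_ ?_
    · intro S hS
      simp only [mem_filter, mem_powersetCard_univ] at hS
      simp only [mem_powersetCard]
      exact ⟨erase_subset_erase _ (subset_univ S), by rw [card_erase_of_mem hS.2, hS.1]⟩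
    · intro T hT
      simp only [mem_powersetCard] at hT
      have hiT : i ∉ T := fun h => (mem_erase.1 (hT.1 h)).1 rfl
      simp only [mem_filter, mem_powersetCard_univ]
      refine ⟨?_, mem_insert_self _ _⟩
      rw [card_insert_of_notMem hiT, hT.2]
      omega
    · intro S hS
      simp only [mem_filter] at hS
      exact insert_erase hS.2
    · intro T hT
      simp only [mem_powersetCard] at hT
      exact erase_insert (fun h => (mem_erase.1 (hT.1 h)).1 rfl)
  rw [this, card_powersetCard, card_erase_of_mem (mem_univ i), card_univ, Fintype.card_fin]

lemma countTwo {N n : ℕ} (hn : 2 ≤ n) {i j : Fin N} (hij : i ≠ j) :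
    (((powersetCard n (univ : Finset (Fin N)))).filter (fun S => i ∈ S ∧ j ∈ S)).card
      = (N-2).choose (n-2) := by
  classical
  have : (((powersetCard n (univ : Finset (Fin N)))).filter (fun S => i ∈ S ∧ j ∈ S)).card
      = (powersetCard (n-2) (((univ : Finset (Fin N)).erase i).erase j)).card := by
    refine Finset.card_bij' (fun S _ => (S.erase i).erase j) (fun T _ => insert i (insert j T)) ?_ ?_ ?_ ?_
    · intro S hS
      simp only [mem_filter, mem_powersetCard_univ] at hS
      simp only [mem_powersetCard]
      refine ⟨?_, ?_⟩
      · exact erase_subset_erase _ (erase_subset_erase _ (subset_univ S))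
      · rw [card_erase_of_mem (mem_erase.2 ⟨hij.symm, hS.2.2⟩), card_erase_of_mem hS.2.1, hS.1]
        omega
    · intro T hT
      simp only [mem_powersetCard] at hT
      have hiT : i ∉ T := fun h => by
        have := hT.1 h; rw [mem_erase, mem_erase] at this; exact this.2.1 rfl
      have hjT : j ∉ T := fun h => (mem_erase.1 (hT.1 h)).1 rfl
      have hij' : i ∉ insert j T := by simp [hij, hiT]
      simp only [mem_filter, mem_powersetCard_univ]
      refine ⟨?_, mem_insert_self _ _, mem_insert_of_mem (mem_insert_self _ _)⟩
      rw [card_insert_of_notMem hij', card_insert_of_notMem hjT, hT.2]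
      omega
    · intro S hS
      simp only [mem_filter] at hS
      show insert i (insert j ((S.erase i).erase j)) = S
      rw [erase_right_comm, Finset.insert_comm, insert_erase (mem_erase.2 ⟨hij, hS.2.1⟩),
        insert_erase hS.2.2]
    · intro T hT
      simp only [mem_powersetCard] at hT
      have hiT : i ∉ T := fun h => by
        have := hT.1 h; rw [mem_erase, mem_erase] at this; exact this.2.1 rfl
      have hjT : j ∉ T := fun h => (mem_erase.1 (hT.1 h)).1 rfl
      have hij' : i ∉ insert j T := by simp [hij, hiT]
      show ((insert i (insert j T)).erase i).erase j = T
      rw [erase_insert hij', erase_insert hjT]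
  rw [this, card_powersetCard, card_erase_of_mem (mem_erase.2 ⟨hij.symm, mem_univ j⟩),
    card_erase_of_mem (mem_univ i), card_univ, Fintype.card_fin]
  congr 1

lemma swapCount {α β : Type*} [DecidableEq α] [DecidableEq β] (𝒮 : Finset α) (t : Finset β)
    (P : β → α → Prop) [∀ x S, Decidable (P x S)] (h : β → ℝ) :
    ∑ S ∈ 𝒮, ∑ x ∈ t.filter (fun x => P x S), h x
      = ∑ x ∈ t, ((𝒮.filter (P x)).card : ℝ) * h x := by
  simp only [sum_filter]
  rw [Finset.sum_comm]
  refine Finset.sum_congr rfl fun x _ => ?_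
  rw [← sum_filter, sum_const, nsmul_eq_mul]

lemma var_expand {N : ℕ} (y : Fin N → ℝ) (S : Finset (Fin N)) (m : ℕ) (hm : (m : ℝ) ≠ 0)
    (hcard : S.card = m) :
    ∑ i ∈ S, (y i - (∑ j ∈ S, y j) / m) ^ 2
      = ∑ i ∈ S, (y i) ^ 2 - (∑ i ∈ S, y i) ^ 2 / m := by
  have h : ∀ i ∈ S, (y i - (∑ j ∈ S, y j) / m) ^ 2
      = (y i)^2 - 2 * ((∑ j ∈ S, y j) / m) * y i + ((∑ j ∈ S, y j) / m)^2 :=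
    fun i _ => by ring
  rw [Finset.sum_congr rfl h, Finset.sum_add_distrib, Finset.sum_sub_distrib,
    ← Finset.mul_sum, Finset.sum_const, hcard, nsmul_eq_mul]
  field_simp
  ring

/-- Expectation of a real-valued function of a simple random sample without replacement:
the sample is uniformly distributed over all subsets of `Fin N` of size `n`, so the
expectation is the average over all such subsets. -/
noncomputable def expectSRS {N n : ℕ} (f : {S : Finset (Fin N) // S.card = n} → ℝ) : ℝ :=
  (∑ ω : {S : Finset (Fin N) // S.card = n}, f ω)
    / (Fintype.card {S : Finset (Fin N) // S.card = n} : ℝ)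

/-- **Unbiasedness of the sample variance under simple random sampling without
replacement.** For a simple random sample of size `n` (encoded by indicators `Z`) from a
finite population `y` of size `N`, the sample variance with divisor `n - 1` is unbiased for
the finite-population variance with divisor `N - 1`. -/
theorem stmt_7 (N : ℕ) (hN : 2 ≤ N) (y : Fin N → ℝ)
    (n : ℕ) (hn : 2 ≤ n) (hn' : n ≤ N)
    (Z : Fin N → {S : Finset (Fin N) // S.card = n} → ℝ)
    (hZ : ∀ i ω, Z i ω = if i ∈ ω.1 then 1 else 0)
    (ybarS : {S : Finset (Fin N) // S.card = n} → ℝ)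
    (hybarS : ∀ ω, ybarS ω = (∑ i, Z i ω * y i) / (n : ℝ))
    (ybar : ℝ) (hybar : ybar = (∑ i, y i) / (N : ℝ)) :
    expectSRS (fun ω => (∑ i, Z i ω * (y i - ybarS ω) ^ 2) / ((n : ℝ) - 1))
      = (∑ i, (y i - ybar) ^ 2) / ((N : ℝ) - 1) := by
  classical
  have hn0 : (n : ℝ) ≠ 0 := by
    have : (0:ℝ) < n := by exact_mod_cast (by omega : 0 < n)
    linarith
  have hn1 : (n : ℝ) - 1 ≠ 0 := by
    have : (2:ℝ) ≤ n := by exact_mod_cast hn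
    linarith
  have hN0 : (N : ℝ) ≠ 0 := by
    have : (0:ℝ) < N := by exact_mod_cast (by omega : 0 < N)
    linarith
  have hN1 : (N : ℝ) - 1 ≠ 0 := by
    have : (2:ℝ) ≤ N := by exact_mod_cast hN
    linarith
  set P : Finset (Finset (Fin N)) := powersetCard n (univ : Finset (Fin N)) with hP
  set A : ℝ := ∑ i, (y i) ^ 2 with hA
  set B : ℝ := ∑ i, ∑ j ∈ univ.erase i, y i * y j with hB
  set c : ℝ := (N.choose n : ℝ) with hc
  set c1 : ℝ := ((N - 1).choose (n - 1) : ℝ) with hc1def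
  set c2 : ℝ := ((N - 2).choose (n - 2) : ℝ) with hc2def
  -- indicator sums
  have ind : ∀ (S : Finset (Fin N)) (g : Fin N → ℝ),
      ∑ i, (if i ∈ S then (1:ℝ) else 0) * g i = ∑ i ∈ S, g i := by
    intro S g
    simp [ite_mul]
  -- per-ω simplification
  have hterm : ∀ ω : {S : Finset (Fin N) // S.card = n},
      (∑ i, Z i ω * (y i - ybarS ω) ^ 2) / ((n:ℝ) - 1)
        = (∑ i ∈ ω.1, (y i) ^ 2 - (∑ i ∈ ω.1, y i) ^ 2 / n) / ((n:ℝ) - 1) := by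
    intro ω
    have h1 : ybarS ω = (∑ j ∈ ω.1, y j) / n := by
      rw [hybarS]
      congr 1
      rw [← ind ω.1 y]
      exact Finset.sum_congr rfl fun i _ => by rw [hZ]
    have h2 : (∑ i, Z i ω * (y i - ybarS ω) ^ 2)
        = ∑ i ∈ ω.1, (y i - (∑ j ∈ ω.1, y j) / n) ^ 2 := by
      rw [← ind ω.1 fun i => (y i - (∑ j ∈ ω.1, y j) / n) ^ 2]
      exact Finset.sum_congr rfl fun i _ => by rw [hZ, h1]
    rw [h2, var_expand y ω.1 n hn0 ω.2]
  -- expectation as sum over P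
  have hcard : (Fintype.card {S : Finset (Fin N) // S.card = n} : ℝ) = c := by
    rw [hc]
    norm_cast
    simpa using Fintype.card_finset_len (α := Fin N) n
  have hsum : (∑ ω : {S : Finset (Fin N) // S.card = n},
      (∑ i, Z i ω * (y i - ybarS ω) ^ 2) / ((n:ℝ) - 1))
      = ∑ S ∈ P, (∑ i ∈ S, (y i) ^ 2 - (∑ i ∈ S, y i) ^ 2 / n) / ((n:ℝ) - 1) := by
    rw [Finset.sum_congr rfl fun ω _ => hterm ω]
    exact (Finset.sum_subtype _ (fun S => mem_powersetCard_univ)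
      (fun S => (∑ i ∈ S, (y i) ^ 2 - (∑ i ∈ S, y i) ^ 2 / n) / ((n:ℝ) - 1))).symm
  -- counting sums
  have h3 : ∑ S ∈ P, ∑ i ∈ S, (y i) ^ 2 = c1 * A := by
    have e : ∀ S ∈ P, ∑ i ∈ S, (y i) ^ 2
        = ∑ i ∈ univ.filter (fun i => i ∈ S), (y i) ^ 2 := by
      intro S _; congr 1; simp
    rw [Finset.sum_congr rfl e, swapCount P univ (fun i S => i ∈ S) (fun i => (y i) ^ 2)]
    rw [hA, Finset.mul_sum]
    refine Finset.sum_congr rfl fun i _ => ?_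
    rw [countOne (by omega) i]
  have h4 : ∑ S ∈ P, (∑ i ∈ S, y i) ^ 2 = c1 * A + c2 * B := by
    have e : ∀ S ∈ P, (∑ i ∈ S, y i) ^ 2
        = ∑ p ∈ univ.filter (fun p : Fin N × Fin N => p.1 ∈ S ∧ p.2 ∈ S), y p.1 * y p.2 := by
      intro S _
      rw [sq, Finset.sum_mul_sum]
      rw [← Finset.sum_product']
      congr 1
      ext p
      simp [Finset.mem_product]
    rw [Finset.sum_congr rfl e,
      swapCount P univ (fun p : Fin N × Fin N => fun S => p.1 ∈ S ∧ p.2 ∈ S)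
        (fun p => y p.1 * y p.2)]
    rw [Fintype.sum_prod_type]
    have e2 : ∀ i : Fin N,
        (∑ j, ((P.filter (fun S => i ∈ S ∧ j ∈ S)).card : ℝ) * (y i * y j))
          = c1 * (y i) ^ 2 + ∑ j ∈ univ.erase i, c2 * (y i * y j) := by
      intro i
      rw [← Finset.add_sum_erase _ _ (mem_univ i)]
      congr 1
      · have : P.filter (fun S => i ∈ S ∧ i ∈ S) = P.filter (fun S => i ∈ S) :=
          Finset.filter_congr fun S _ => by simp
        rw [this, countOne (by omega) i, hc1def]
        push_cast
        ring
      · refine Finset.sum_congr rfl fun j hj => ?_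
        have hij : i ≠ j := fun h => (mem_erase.1 hj).1 h.symm
        rw [countTwo hn hij]
    rw [Finset.sum_congr rfl fun i _ => e2 i, Finset.sum_add_distrib, ← Finset.mul_sum, ← hA]
    congr 1
    rw [hB, Finset.mul_sum]
    exact Finset.sum_congr rfl fun i _ => (Finset.mul_sum _ _ _).symm
  -- RHS simplification
  have hT2 : (∑ i, y i) ^ 2 = A + B := by
    rw [sq, Finset.sum_mul_sum, hA, hB, ← Finset.sum_add_distrib]
    refine Finset.sum_congr rfl fun i _ => ?_
    rw [← Finset.add_sum_erase _ (fun j => y i * y j) (mem_univ i), sq]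
  have hRHS : (∑ i, (y i - ybar) ^ 2) = A - (A + B) / N := by
    have := var_expand y univ N hN0 (by simp)
    rw [← hT2]
    rw [hybar]
    exact this
  -- choose identities
  have hcc1 : (N : ℝ) * c1 = c * n := by
    have hNat : N * (N - 1).choose (n - 1) = N.choose n * n := by
      have h := Nat.add_one_mul_choose_eq (N - 1) (n - 1)
      have e1 : N - 1 + 1 = N := by omega
      have e2 : n - 1 + 1 = n := by omega
      rwa [e1, e2] at h
    rw [hc1def, hc]
    exact_mod_cast hNat
  have hcc2 : ((N : ℝ) - 1) * c2 = c1 * ((n : ℝ) - 1) := by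
    have hNat : (N - 1) * (N - 2).choose (n - 2) = (N - 1).choose (n - 1) * (n - 1) := by
      have h := Nat.add_one_mul_choose_eq (N - 2) (n - 2)
      have e1 : N - 2 + 1 = N - 1 := by omega
      have e2 : n - 2 + 1 = n - 1 := by omega
      rwa [e1, e2] at h
    rw [hc1def, hc2def]
    have h1 : ((N - 1 : ℕ) : ℝ) = (N : ℝ) - 1 := by
      push_cast [Nat.cast_sub (by omega : 1 ≤ N)]; ring
    have h2 : ((n - 1 : ℕ) : ℝ) = (n : ℝ) - 1 := by
      push_cast [Nat.cast_sub (by omega : 1 ≤ n)]; ring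
    rw [← h1, ← h2]
    exact_mod_cast hNat
  have hcne : c ≠ 0 := by
    rw [hc]
    exact_mod_cast (Nat.choose_pos hn').ne'
  -- assemble
  rw [show expectSRS (fun ω => (∑ i, Z i ω * (y i - ybarS ω) ^ 2) / ((n : ℝ) - 1))
      = (∑ ω : {S : Finset (Fin N) // S.card = n},
          (∑ i, Z i ω * (y i - ybarS ω) ^ 2) / ((n:ℝ) - 1))
        / (Fintype.card {S : Finset (Fin N) // S.card = n} : ℝ) from rfl,
    hcard, hsum, hRHS, ← Finset.sum_div, Finset.sum_sub_distrib, ← Finset.sum_div, h3, h4]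
  -- numeric identity
  have e1 : c1 = c * n / N := by field_simp; linarith [hcc1]
  have e2 : c2 = c1 * ((n:ℝ) - 1) / ((N:ℝ) - 1) := by field_simp; linarith [hcc2]
  rw [e2, e1]
  field_simp
  ring
end

section
/- Let N ≥ 2, 1 ≤ n₁ ≤ N − 1, n₀ = N − n₁, and let Y(1), Y(0) : Fin N → ℝ. Let a₁ ≤ … ≤ a_N be the values Y_i(1) sorted in nondecreasing order and b₁ ≤ … ≤ b_N the values Y_i(0) sorted in nondecreasing order. Define Sᴴ = (1/(N−1))(∑_{i=1}^N a_i b_i − N Ȳ(1) Ȳ(0)) and Sᴸ = (1/(N−1))(∑_{i=1}^N a_i b_{N+1−i} − N Ȳ(1) Ȳ(0)), and set Vᴴ = (1/N)[(n₀/n₁) S²(Y(1)) + (n₁/n₀) S²(Y(0)) + 2 Sᴴ] and Vᴸ = (1/N)[(n₀/n₁) S²(Y(1)) + (n₁/n₀) S²(Y(0)) + 2 Sᴸ]. For a permutation σ of Fin N, let Var_σ denote the variance of the difference-in-means estimator under a completely randomized experiment on the population (Y(1), Y(0)∘σ). Then for every permutation σ, Vᴸ ≤ Var_σ ≤ Vᴴ,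 and there exist permutations attaining each bound. That is, Vᴴ and Vᴸ are sharp upper and lower bounds for the variance of the difference-in-means estimator among all populations sharing the given marginal multisets of potential outcomes. -/
open Finset

/-- The difference-in-means estimator for the population `(Y1, Y0)` in a completely
randomized experiment where the set of treated units is `ω` (of size `n1`). -/
noncomputable def dimEst (N n1 : ℕ) (Y1 Y0 : Fin N → ℝ)
    (ω : {S : Finset (Fin N) // S.card = n1}) : ℝ :=
  (∑ i, if i ∈ ω.1 then Y1 i else 0) / (n1 : ℝ)
    - (∑ i, if i ∈ ω.1 then 0 else Y0 i) / ((N - n1 : ℕ) : ℝ)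

/-- The variance of the difference-in-means estimator under a completely randomized
experiment with `n1` treated units, for the population `(Y1, Y0)`. -/
noncomputable def dimVar (N n1 : ℕ) (Y1 Y0 : Fin N → ℝ) : ℝ :=
  expectCRE (fun ω => (dimEst N n1 Y1 Y0 ω - expectCRE (dimEst N n1 Y1 Y0)) ^ 2)


variable {α : Type*} [DecidableEq α]

lemma filterA (a : α) (s : Finset α) (ha : a ∉ s) (n : ℕ) :
    ((insert a s).powersetCard (n+1)).filter (fun S => a ∈ S)
      = (s.powersetCard n).image (insert a) := by
  rw [powersetCard_succ_insert ha, filter_union]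
  have h1 : (s.powersetCard (n+1)).filter (fun S => a ∈ S) = ∅ := by
    refine filter_eq_empty_iff.2 ?_
    intro S hS
    simp only [mem_powersetCard] at hS
    exact fun haS => ha (hS.1 haS)
  have h2 : ((s.powersetCard n).image (insert a)).filter (fun S => a ∈ S)
      = (s.powersetCard n).image (insert a) := by
    refine filter_eq_self.2 ?_
    intro S hS
    obtain ⟨T, _, rfl⟩ := mem_image.1 hS
    exact mem_insert_self a T
  rw [h1, h2, empty_union]

lemma cardA (a : α) (s : Finset α) (ha : a ∉ s) (n : ℕ) :
    (((insert a s).powersetCard (n+1)).filter (fun S => a ∈ S)).card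
      = s.card.choose n := by
  rw [filterA a s ha n, card_image_of_injOn, card_powersetCard]
  intro S hS T hT hST
  simp only [mem_coe, mem_powersetCard] at hS hT
  have haS : a ∉ S := fun h => ha (hS.1 h)
  have haT : a ∉ T := fun h => ha (hT.1 h)
  rw [← erase_insert haS, ← erase_insert haT, hST]

lemma count1 {N n : ℕ} (hn : 1 ≤ n) (i : Fin N) :
    (((univ : Finset (Fin N)).powersetCard n).filter (fun S => i ∈ S)).card
      = (N-1).choose (n-1) := by
  obtain ⟨m, rfl⟩ : ∃ m, n = m + 1 := ⟨n - 1, by omega⟩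
  have hu : (univ : Finset (Fin N)) = insert i (univ.erase i) :=
    (insert_erase (mem_univ i)).symm
  have hcard : (univ.erase i).card = N - 1 := by
    rw [card_erase_of_mem (mem_univ i), card_univ, Fintype.card_fin]
  rw [hu, cardA i _ (notMem_erase i _) m, hcard]
  simp

lemma count2 {N n : ℕ} (hN : 2 ≤ N) (hn : 1 ≤ n) (i j : Fin N) (hij : i ≠ j) :
    ((((univ : Finset (Fin N)).powersetCard n).filter (fun S => i ∈ S ∧ j ∈ S)).card : ℝ)
      = ((N-1).choose (n-1) : ℝ) - ((N-2).choose (n-1) : ℝ) := by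
  match n, hn with
  | 1, _ =>
    have : (((univ : Finset (Fin N)).powersetCard 1).filter
        (fun S => i ∈ S ∧ j ∈ S)).card = 0 := by
      rw [card_eq_zero]
      refine filter_eq_empty_iff.2 ?_
      intro S hS
      rw [mem_powersetCard] at hS
      rintro ⟨hiS, hjS⟩
      have : ({i, j} : Finset (Fin N)) ⊆ S := by
        intro x hx; rcases mem_insert.1 hx with rfl | hx
        · exact hiS
        · exact (mem_singleton.1 hx) ▸ hjS
      have h2 : ({i, j} : Finset (Fin N)).card = 2 := card_pair hij
      have := card_le_card this
      omega
    rw [this]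
    simp
  | (l+2), _ =>
    have hu : (univ : Finset (Fin N)) = insert i (univ.erase i) :=
      (insert_erase (mem_univ i)).symm
    have hji : j ∈ univ.erase i := mem_erase.2 ⟨hij.symm, mem_univ j⟩
    have hu2 : univ.erase i = insert j ((univ.erase i).erase j) :=
      (insert_erase hji).symm
    have hcard2 : ((univ.erase i).erase j).card = N - 2 := by
      rw [card_erase_of_mem hji, card_erase_of_mem (mem_univ i), card_univ, Fintype.card_fin]
      omega
    have key : (((univ : Finset (Fin N)).powersetCard (l+2)).filter
        (fun S => i ∈ S ∧ j ∈ S)).card = (N-2).choose l := by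
      have : ((univ : Finset (Fin N)).powersetCard (l+2)).filter (fun S => i ∈ S ∧ j ∈ S)
          = (((univ.erase i).powersetCard (l+1)).filter (fun S => j ∈ S)).image (insert i) := by
        rw [← filter_filter, hu, filterA i _ (notMem_erase i _) (l+1), filter_image]
        have hfil : ((univ.erase i).powersetCard (l+1)).filter (fun S => j ∈ insert i S)
            = ((univ.erase i).powersetCard (l+1)).filter (fun S => j ∈ S) :=
          filter_congr fun S _ => by simp [mem_insert, Ne.symm hij]
        rw [hfil, erase_insert (notMem_erase i _)]
      rw [this, card_image_of_injOn]
      · rw [hu2, cardA j _ (notMem_erase j _) l, hcard2]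
      · intro S hS T hT hST
        simp only [mem_coe, mem_filter, mem_powersetCard] at hS hT
        have haS : i ∉ S := fun h => (notMem_erase i _) (hS.1.1 h)
        have haT : i ∉ T := fun h => (notMem_erase i _) (hT.1.1 h)
        rw [← erase_insert haS, ← erase_insert haT, hST]
    rw [key]
    have h1 : l + 2 - 1 = l + 1 := rfl
    have hsucc : N - 1 = (N - 2) + 1 := by omega
    rw [h1, hsucc, Nat.choose_succ_succ]
    push_cast
    ring

lemma nat1 (N n1 : ℕ) (h1 : 1 ≤ n1) (h2 : n1 ≤ N) :
    N * (N-1).choose (n1-1) = N.choose n1 * n1 := by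
  obtain ⟨m, rfl⟩ : ∃ m, N = m + 1 := ⟨N - 1, by omega⟩
  obtain ⟨k, rfl⟩ : ∃ k, n1 = k + 1 := ⟨n1 - 1, by omega⟩
  simpa using Nat.add_one_mul_choose_eq m k

lemma nat2 (N n1 : ℕ) (hN : 2 ≤ N) (h1 : 1 ≤ n1) (h2 : n1 ≤ N - 1) :
    N * (N-1) * (N-2).choose (n1-1) = N.choose n1 * (n1 * (N - n1)) := by
  obtain ⟨m, rfl⟩ : ∃ m, N = m + 2 := ⟨N - 2, by omega⟩
  obtain ⟨k, rfl⟩ : ∃ k, n1 = k + 1 := ⟨n1 - 1, by omega⟩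
  have hsub1 : m + 2 - 1 = m + 1 := rfl
  have hsub2 : m + 2 - 2 = m := rfl
  have hsub3 : k + 1 - 1 = k := rfl
  have hsub4 : m + 2 - (k + 1) = m + 1 - k := by omega
  rw [hsub1, hsub2, hsub3, hsub4]
  have A := Nat.choose_mul_succ_eq m k
  have B := Nat.add_one_mul_choose_eq (m+1) k
  calc (m+2)*(m+1)*(m.choose k) = (m+2)*((m.choose k)*(m+1)) := by ring
    _ = (m+2)*((m+1).choose k * (m+1-k)) := by rw [A]
    _ = ((m+2)*(m+1).choose k) * (m+1-k) := by ring
    _ = ((m+2).choose (k+1) * (k+1)) * (m+1-k) := by rw [B]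
    _ = (m+2).choose (k+1) * ((k+1)*(m+1-k)) := by ring

set_option maxHeartbeats 1000000 in
lemma dimVar_eq (N n1 : ℕ) (hN : 2 ≤ N) (h1 : 1 ≤ n1) (h2 : n1 ≤ N - 1) (Y1 Y0 : Fin N → ℝ) :
    dimVar N n1 Y1 Y0 =
      (1 / (N:ℝ)) * ( (((N - n1 : ℕ):ℝ) / (n1:ℝ))
            * ((∑ i, (Y1 i - (∑ j, Y1 j)/(N:ℝ))^2) / ((N:ℝ)-1))
        + ((n1:ℝ) / ((N - n1 : ℕ):ℝ))
            * ((∑ i, (Y0 i - (∑ j, Y0 j)/(N:ℝ))^2) / ((N:ℝ)-1))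
        + 2 * ((∑ i, Y1 i * Y0 i)
            - (N:ℝ) * ((∑ j, Y1 j)/(N:ℝ)) * ((∑ j, Y0 j)/(N:ℝ))) / ((N:ℝ)-1) ) := by
  have hn0 : 1 ≤ N - n1 := by omega
  set n0 : ℕ := N - n1 with hn0def
  have hn1N : n1 ≤ N := by omega
  have hNR : (0:ℝ) < N := by positivity
  have hNR' : (N:ℝ) ≠ 0 := ne_of_gt hNR
  have hn1R : ((n1:ℝ)) ≠ 0 := by positivity
  have hn0R : ((n0:ℝ)) ≠ 0 := by positivity
  have hN1R : (N:ℝ) - 1 ≠ 0 := by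
    have : (2:ℝ) ≤ N := by exact_mod_cast hN
    linarith
  -- abbreviations
  set K : ℕ := N.choose n1 with hKdef
  have hKpos : 0 < K := Nat.choose_pos hn1N
  have hKR : ((K:ℝ)) ≠ 0 := by positivity
  set C1 : ℕ := (N-1).choose (n1-1) with hC1def
  set CC : ℕ := (N-2).choose (n1-1) with hCCdef
  have hr1 : (N:ℝ) * (C1:ℝ) = (K:ℝ) * (n1:ℝ) := by exact_mod_cast nat1 N n1 h1 hn1N
  have hr2 : (N:ℝ) * ((N:ℝ)-1) * (CC:ℝ) = (K:ℝ) * ((n1:ℝ) * (n0:ℝ)) := by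
    have := nat2 N n1 hN h1 h2
    have h1N : (1:ℕ) ≤ N := by omega
    have : ((N * (N-1) * (N-2).choose (n1-1) : ℕ) : ℝ)
        = ((N.choose n1 * (n1 * (N - n1)) : ℕ) : ℝ) := by exact_mod_cast this
    push_cast [Nat.cast_sub h1N] at this
    linarith [this]
  set c : Fin N → ℝ := fun i => Y1 i / n1 + Y0 i / n0 with hc
  set d : Fin N → ℝ := fun i => c i - (∑ j, c j)/(N:ℝ) with hd
  have hdsum : ∑ i, d i = 0 := by
    simp only [hd, Finset.sum_sub_distrib, Finset.sum_const, Finset.card_univ,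
      Fintype.card_fin, nsmul_eq_mul]
    field_simp
    ring
  -- subtype sums
  have hsub : ∀ f : Finset (Fin N) → ℝ,
      ∑ ω : {S : Finset (Fin N) // S.card = n1}, f ω.1
        = ∑ S ∈ univ.powersetCard n1, f S := by
    intro f
    exact (Finset.sum_subtype _ (fun S => Finset.mem_powersetCard_univ) f).symm
  have hK : (Fintype.card {S : Finset (Fin N) // S.card = n1}) = K := by
    simpa [hKdef] using Fintype.card_finset_len (α := Fin N) n1
  -- swap lemma
  have hswap : ∀ g : Fin N → ℝ, ∑ S ∈ univ.powersetCard n1, (∑ i ∈ S, g i)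
      = ∑ i, ((((univ.powersetCard n1).filter (fun S => i ∈ S)).card : ℝ)) * g i := by
    intro g
    have step : ∀ S : Finset (Fin N), (∑ i ∈ S, g i) = ∑ i, if i ∈ S then g i else 0 := by
      intro S
      rw [Finset.sum_ite_mem, Finset.univ_inter]
    calc ∑ S ∈ univ.powersetCard n1, (∑ i ∈ S, g i)
        = ∑ S ∈ univ.powersetCard n1, ∑ i, (if i ∈ S then g i else 0) :=
          Finset.sum_congr rfl fun S _ => step S
      _ = ∑ i, ∑ S ∈ univ.powersetCard n1, (if i ∈ S then g i else 0) := Finset.sum_comm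
      _ = ∑ i, ((((univ.powersetCard n1).filter (fun S => i ∈ S)).card : ℝ)) * g i := by
          refine Finset.sum_congr rfl fun i _ => ?_
          rw [← Finset.sum_filter, Finset.sum_const, nsmul_eq_mul]
  -- dimEst rewrite
  have hEst : ∀ ω : {S : Finset (Fin N) // S.card = n1},
      dimEst N n1 Y1 Y0 ω = (∑ i ∈ ω.1, c i) - (∑ j, Y0 j)/(n0:ℝ) := by
    intro ω
    have h1' : ∑ i, (if i ∈ ω.1 then Y1 i else 0) = ∑ i ∈ ω.1, Y1 i := by
      rw [Finset.sum_ite_mem, Finset.univ_inter]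
    have h0' : ∑ i, (if i ∈ ω.1 then 0 else Y0 i)
        = (∑ j, Y0 j) - ∑ i ∈ ω.1, Y0 i := by
      have : ∀ i : Fin N, (if i ∈ ω.1 then 0 else Y0 i)
          = Y0 i - (if i ∈ ω.1 then Y0 i else 0) := by
        intro i; split_ifs <;> ring
      rw [Finset.sum_congr rfl fun i _ => this i, Finset.sum_sub_distrib,
        Finset.sum_ite_mem, Finset.univ_inter]
    show (∑ i, if i ∈ ω.1 then Y1 i else 0) / (n1 : ℝ)
        - (∑ i, if i ∈ ω.1 then 0 else Y0 i) / ((N - n1 : ℕ) : ℝ)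
      = (∑ i ∈ ω.1, c i) - (∑ j, Y0 j)/(n0:ℝ)
    rw [h1', h0', ← hn0def]
    simp only [hc, Finset.sum_add_distrib, ← Finset.sum_div]
    ring
  -- expectation
  have hE : expectCRE (dimEst N n1 Y1 Y0)
      = ((n1:ℝ)/(N:ℝ)) * (∑ j, c j) - (∑ j, Y0 j)/(n0:ℝ) := by
    show (∑ ω : {S : Finset (Fin N) // S.card = n1}, dimEst N n1 Y1 Y0 ω)
        / (Fintype.card {S : Finset (Fin N) // S.card = n1} : ℝ) = _
    rw [hK]
    have : ∑ ω : {S : Finset (Fin N) // S.card = n1}, dimEst N n1 Y1 Y0 ω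
        = (C1:ℝ) * (∑ j, c j) - (K:ℝ) * ((∑ j, Y0 j)/(n0:ℝ)) := by
      calc ∑ ω : {S : Finset (Fin N) // S.card = n1}, dimEst N n1 Y1 Y0 ω
          = ∑ ω : {S : Finset (Fin N) // S.card = n1},
              ((∑ i ∈ ω.1, c i) - (∑ j, Y0 j)/(n0:ℝ)) :=
            Finset.sum_congr rfl fun ω _ => hEst ω
        _ = (∑ ω : {S : Finset (Fin N) // S.card = n1}, (∑ i ∈ ω.1, c i))
              - (Fintype.card {S : Finset (Fin N) // S.card = n1} : ℝ)
                * ((∑ j, Y0 j)/(n0:ℝ)) := by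
            rw [Finset.sum_sub_distrib, Finset.sum_const, Finset.card_univ, nsmul_eq_mul]
        _ = (C1:ℝ) * (∑ j, c j) - (K:ℝ) * ((∑ j, Y0 j)/(n0:ℝ)) := by
            rw [hK, hsub (fun S => ∑ i ∈ S, c i), hswap c]
            congr 1
            rw [Finset.mul_sum]
            refine Finset.sum_congr rfl fun i _ => ?_
            rw [count1 h1 i, ← hC1def]
    rw [this]
    rw [sub_div, mul_div_assoc, mul_comm (K:ℝ) ((∑ j, Y0 j)/(n0:ℝ)), mul_div_assoc,
      div_self hKR, mul_one]
    congr 1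
    field_simp
    linear_combination (∑ j, c j) * hr1
  -- deviation
  have hdev : ∀ ω : {S : Finset (Fin N) // S.card = n1},
      dimEst N n1 Y1 Y0 ω - expectCRE (dimEst N n1 Y1 Y0) = ∑ i ∈ ω.1, d i := by
    intro ω
    rw [hEst ω, hE]
    have : ∑ i ∈ ω.1, d i = (∑ i ∈ ω.1, c i) - (n1:ℝ) * ((∑ j, c j)/(N:ℝ)) := by
      simp only [hd]
      rw [Finset.sum_sub_distrib, Finset.sum_const, ω.2, nsmul_eq_mul]
    rw [this]
    ring
  -- main square sum
  have hsq : ∑ S ∈ univ.powersetCard n1, (∑ i ∈ S, d i)^2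
      = (CC:ℝ) * ∑ i, (d i)^2 := by
    have step : ∀ S : Finset (Fin N), (∑ i ∈ S, d i)^2
        = ∑ i, ∑ j, (if i ∈ S ∧ j ∈ S then d i * d j else 0) := by
      intro S
      have h' : (∑ i ∈ S, d i) = ∑ i, (if i ∈ S then d i else 0) := by
        rw [Finset.sum_ite_mem, Finset.univ_inter]
      rw [sq, h', Finset.sum_mul_sum]
      refine Finset.sum_congr rfl fun i _ => Finset.sum_congr rfl fun j _ => ?_
      split_ifs with hi hj hj <;> simp_all
    calc ∑ S ∈ univ.powersetCard n1, (∑ i ∈ S, d i)^2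
        = ∑ S ∈ univ.powersetCard n1, ∑ i, ∑ j, (if i ∈ S ∧ j ∈ S then d i * d j else 0) :=
          Finset.sum_congr rfl fun S _ => step S
      _ = ∑ i, ∑ j, ∑ S ∈ univ.powersetCard n1, (if i ∈ S ∧ j ∈ S then d i * d j else 0) := by
          rw [Finset.sum_comm]
          exact Finset.sum_congr rfl fun i _ => Finset.sum_comm
      _ = ∑ i, ∑ j, ((((univ.powersetCard n1).filter (fun S => i ∈ S ∧ j ∈ S)).card : ℝ))
            * (d i * d j) := by
          refine Finset.sum_congr rfl fun i _ => Finset.sum_congr rfl fun j _ => ?_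
          rw [← Finset.sum_filter, Finset.sum_const, nsmul_eq_mul]
      _ = ∑ i, ∑ j, (((C1:ℝ) - (CC:ℝ)) + (if i = j then (CC:ℝ) else 0)) * (d i * d j) := by
          refine Finset.sum_congr rfl fun i _ => Finset.sum_congr rfl fun j _ => ?_
          congr 1
          by_cases h : i = j
          · subst h
            rw [if_pos rfl]
            have heq : (univ.powersetCard n1).filter (fun S => i ∈ S ∧ i ∈ S)
                = (univ.powersetCard n1).filter (fun S => i ∈ S) :=
              Finset.filter_congr fun S _ => by simp
            rw [heq, count1 h1 i, ← hC1def]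
            ring
          · rw [if_neg h, add_zero, count2 hN h1 i j h, ← hC1def, ← hCCdef]
      _ = (CC:ℝ) * ∑ i, (d i)^2 := by
          have expand : ∀ i j : Fin N, (((C1:ℝ) - (CC:ℝ)) + (if i = j then (CC:ℝ) else 0))
              * (d i * d j)
              = ((C1:ℝ) - (CC:ℝ)) * (d i * d j)
                + (if i = j then (CC:ℝ) * (d i * d j) else 0) := by
            intro i j; split_ifs <;> ring
          rw [Finset.sum_congr rfl fun i _ => Finset.sum_congr rfl fun j _ => expand i j]
          simp only [Finset.sum_add_distrib]
          have hA0 : ∀ i : Fin N, ∑ j, ((C1:ℝ) - (CC:ℝ)) * (d i * d j) = 0 := by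
            intro i
            calc ∑ j, ((C1:ℝ) - (CC:ℝ)) * (d i * d j)
                = (((C1:ℝ) - (CC:ℝ)) * d i) * ∑ j, d j := by
                  rw [Finset.mul_sum]
                  exact Finset.sum_congr rfl fun j _ => by ring
              _ = 0 := by rw [hdsum]; ring
          have hB : ∑ i : Fin N, ∑ j, (if i = j then (CC:ℝ) * (d i * d j) else 0)
              = ∑ i, (CC:ℝ) * (d i)^2 := by
            refine Finset.sum_congr rfl fun i _ => ?_
            rw [Finset.sum_ite_eq (univ) i (fun j => (CC:ℝ) * (d i * d j))]
            simp [sq]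
          rw [Finset.sum_congr rfl fun i _ => hA0 i, hB, Finset.sum_const_zero, zero_add,
            Finset.mul_sum]
  -- variance value
  have hVar : dimVar N n1 Y1 Y0 = ((CC:ℝ) * ∑ i, (d i)^2) / (K:ℝ) := by
    show expectCRE (fun ω => (dimEst N n1 Y1 Y0 ω - expectCRE (dimEst N n1 Y1 Y0)) ^ 2) = _
    show (∑ ω : {S : Finset (Fin N) // S.card = n1},
        (dimEst N n1 Y1 Y0 ω - expectCRE (dimEst N n1 Y1 Y0)) ^ 2)
      / (Fintype.card {S : Finset (Fin N) // S.card = n1} : ℝ) = _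
    rw [hK]
    congr 1
    calc ∑ ω : {S : Finset (Fin N) // S.card = n1},
          (dimEst N n1 Y1 Y0 ω - expectCRE (dimEst N n1 Y1 Y0)) ^ 2
        = ∑ ω : {S : Finset (Fin N) // S.card = n1}, (∑ i ∈ ω.1, d i)^2 :=
          Finset.sum_congr rfl fun ω _ => by rw [hdev ω]
      _ = ∑ S ∈ univ.powersetCard n1, (∑ i ∈ S, d i)^2 := hsub (fun S => (∑ i ∈ S, d i)^2)
      _ = (CC:ℝ) * ∑ i, (d i)^2 := hsq
  -- final algebra
  set m1 : ℝ := (∑ j, Y1 j)/(N:ℝ) with hm1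
  set m0 : ℝ := (∑ j, Y0 j)/(N:ℝ) with hm0
  have hdi : ∀ i, d i = (Y1 i - m1)/(n1:ℝ) + (Y0 i - m0)/(n0:ℝ) := by
    intro i
    simp only [hd, hc, Finset.sum_add_distrib, ← Finset.sum_div]
    rw [hm1, hm0]
    field_simp
    ring
  have hd2 : ∑ i, (d i)^2
      = (∑ i, (Y1 i - m1)^2)/(n1:ℝ)^2 + (∑ i, (Y0 i - m0)^2)/(n0:ℝ)^2
        + (∑ i, (Y1 i - m1)*(Y0 i - m0)) * (2/((n1:ℝ)*(n0:ℝ))) := by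
    calc ∑ i, (d i)^2
        = ∑ i, ((Y1 i - m1)^2/(n1:ℝ)^2 + (Y0 i - m0)^2/(n0:ℝ)^2
            + ((Y1 i - m1)*(Y0 i - m0)) * (2/((n1:ℝ)*(n0:ℝ)))) := by
          refine Finset.sum_congr rfl fun i _ => ?_
          rw [hdi i]
          field_simp
          ring
      _ = _ := by
          rw [Finset.sum_add_distrib, Finset.sum_add_distrib, ← Finset.sum_div,
            ← Finset.sum_div, ← Finset.sum_mul]
  have hSUV : ∑ i, (Y1 i - m1)*(Y0 i - m0)
      = (∑ i, Y1 i * Y0 i) - (N:ℝ) * m1 * m0 := by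
    have : ∀ i, (Y1 i - m1)*(Y0 i - m0)
        = Y1 i * Y0 i - m1 * Y0 i - m0 * Y1 i + m1 * m0 := fun i => by ring
    rw [Finset.sum_congr rfl fun i _ => this i]
    simp only [Finset.sum_add_distrib, Finset.sum_sub_distrib, ← Finset.mul_sum,
      Finset.sum_const, Finset.card_univ, Fintype.card_fin, nsmul_eq_mul]
    rw [hm1, hm0]
    field_simp
    ring
  have hCCK : (CC:ℝ)/(K:ℝ) = ((n1:ℝ)*(n0:ℝ))/((N:ℝ)*((N:ℝ)-1)) := by
    field_simp
    linarith [hr2]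
  rw [hVar]
  have hsplit : ((CC:ℝ) * ∑ i, (d i)^2)/(K:ℝ) = ((CC:ℝ)/(K:ℝ)) * ∑ i, (d i)^2 := by ring
  rw [hsplit, hCCK, hd2, hSUV]
  field_simp


set_option maxHeartbeats 1000000

/-- **Sharp variance bounds for the difference-in-means estimator.** Let `a` and `b` be the
nondecreasing rearrangements of the potential outcomes `Y1` and `Y0`. Then the variance of
the difference-in-means estimator over all populations obtained by permuting the
correspondence between `Y1` and `Y0` is bounded below by `Vᴸ` and above by `Vᴴ` (built from
the countermonotonic and comonotonic pairings of the sorted values), and both bounds are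
attained by some permutation. -/
theorem stmt_8 (N : ℕ) (hN : 2 ≤ N) (n1 n0 : ℕ) (hn1 : 1 ≤ n1) (hn1' : n1 ≤ N - 1)
    (hn0 : n0 = N - n1)
    (Y1 Y0 a b : Fin N → ℝ)
    (hamono : Monotone a) (hbmono : Monotone b)
    (ha : ∃ π : Equiv.Perm (Fin N), a = Y1 ∘ π)
    (hb : ∃ ρ : Equiv.Perm (Fin N), b = Y0 ∘ ρ)
    (Ybar1 Ybar0 S2Y1 S2Y0 SH SL VH VL : ℝ)
    (hY1 : Ybar1 = (∑ i, Y1 i) / (N : ℝ)) (hY0 : Ybar0 = (∑ i, Y0 i) / (N : ℝ))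
    (hS1 : S2Y1 = (∑ i, (Y1 i - Ybar1) ^ 2) / ((N : ℝ) - 1))
    (hS0 : S2Y0 = (∑ i, (Y0 i - Ybar0) ^ 2) / ((N : ℝ) - 1))
    (hSH : SH = ((∑ i, a i * b i) - (N : ℝ) * Ybar1 * Ybar0) / ((N : ℝ) - 1))
    (hSL : SL = ((∑ i, a i * b i.rev) - (N : ℝ) * Ybar1 * Ybar0) / ((N : ℝ) - 1))
    (hVH : VH = (1 / (N : ℝ)) * (((n0 : ℝ) / (n1 : ℝ)) * S2Y1
        + ((n1 : ℝ) / (n0 : ℝ)) * S2Y0 + 2 * SH))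
    (hVL : VL = (1 / (N : ℝ)) * (((n0 : ℝ) / (n1 : ℝ)) * S2Y1
        + ((n1 : ℝ) / (n0 : ℝ)) * S2Y0 + 2 * SL)) :
    (∀ σ : Equiv.Perm (Fin N),
        VL ≤ dimVar N n1 Y1 (Y0 ∘ σ) ∧ dimVar N n1 Y1 (Y0 ∘ σ) ≤ VH)
      ∧ (∃ σ : Equiv.Perm (Fin N), dimVar N n1 Y1 (Y0 ∘ σ) = VH)
      ∧ (∃ σ : Equiv.Perm (Fin N), dimVar N n1 Y1 (Y0 ∘ σ) = VL) := by
  subst hn0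
  have hNpos : (0:ℝ) < N := by positivity
  have hN1pos : (0:ℝ) < (N:ℝ) - 1 := by
    have : (2:ℝ) ≤ N := by exact_mod_cast hN
    linarith
  obtain ⟨π, hπ⟩ := ha
  obtain ⟨ρ, hρ⟩ := hb
  -- the variance as a function of the pairing
  have key : ∀ σ : Equiv.Perm (Fin N), dimVar N n1 Y1 (Y0 ∘ σ)
      = (1/(N:ℝ)) * ((((N - n1 : ℕ):ℝ)/(n1:ℝ)) * S2Y1 + ((n1:ℝ)/(((N - n1:ℕ)):ℝ)) * S2Y0
          + 2 * (((∑ i, Y1 i * Y0 (σ i)) - (N:ℝ)*Ybar1*Ybar0) / ((N:ℝ)-1))) := by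
    intro σ
    rw [dimVar_eq N n1 hN hn1 hn1' Y1 (Y0 ∘ σ), hS1, hS0, hY1, hY0]
    simp only [Function.comp_apply]
    rw [Equiv.sum_comp σ Y0,
      Equiv.sum_comp σ (fun i => (Y0 i - (∑ j, Y0 j)/(N:ℝ))^2)]
    ring
  -- rearrangement bounds on the pairing sum
  have hab : Monovary a b := hamono.monovary hbmono
  have hrevanti : Antitone (fun i : Fin N => Fin.rev i) := fun _ _ h => Fin.rev_le_rev.2 h
  have habr : Antivary a (b ∘ Fin.rev) := hamono.antivary (hbmono.comp_antitone hrevanti)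
  have hform : ∀ σ : Equiv.Perm (Fin N), ∑ i, Y1 i * Y0 (σ i)
      = ∑ i, a i * b (((π.trans σ).trans ρ.symm) i) := by
    intro σ
    rw [← Equiv.sum_comp π (fun i => Y1 i * Y0 (σ i))]
    refine Finset.sum_congr rfl fun i _ => ?_
    rw [hπ, hρ]
    simp [Function.comp, Equiv.apply_symm_apply]
  have hub : ∀ σ : Equiv.Perm (Fin N), ∑ i, Y1 i * Y0 (σ i) ≤ ∑ i, a i * b i := by
    intro σ
    rw [hform σ]
    exact hab.sum_mul_comp_perm_le_sum_mul
  have hlb : ∀ σ : Equiv.Perm (Fin N), ∑ i, a i * b (Fin.rev i) ≤ ∑ i, Y1 i * Y0 (σ i) := by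
    intro σ
    rw [hform σ]
    have h := habr.sum_mul_le_sum_mul_comp_perm
      (σ := ((π.trans σ).trans ρ.symm).trans Fin.revPerm)
    simp only [Function.comp_apply, Equiv.trans_apply, Fin.revPerm_apply, Fin.rev_rev] at h
    exact h
  -- monotonicity of the variance in the pairing sum
  have hmono : ∀ x y : ℝ, x ≤ y →
      (1/(N:ℝ)) * ((((N - n1 : ℕ):ℝ)/(n1:ℝ)) * S2Y1 + ((n1:ℝ)/(((N - n1:ℕ)):ℝ)) * S2Y0
          + 2 * ((x - (N:ℝ)*Ybar1*Ybar0) / ((N:ℝ)-1)))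
      ≤ (1/(N:ℝ)) * ((((N - n1 : ℕ):ℝ)/(n1:ℝ)) * S2Y1 + ((n1:ℝ)/(((N - n1:ℕ)):ℝ)) * S2Y0
          + 2 * ((y - (N:ℝ)*Ybar1*Ybar0) / ((N:ℝ)-1))) := by
    intro x y hxy
    gcongr
  have hVHval : VH = (1/(N:ℝ)) * ((((N - n1 : ℕ):ℝ)/(n1:ℝ)) * S2Y1
      + ((n1:ℝ)/(((N - n1:ℕ)):ℝ)) * S2Y0
      + 2 * (((∑ i, a i * b i) - (N:ℝ)*Ybar1*Ybar0) / ((N:ℝ)-1))) := by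
    rw [hVH, hSH]
  have hVLval : VL = (1/(N:ℝ)) * ((((N - n1 : ℕ):ℝ)/(n1:ℝ)) * S2Y1
      + ((n1:ℝ)/(((N - n1:ℕ)):ℝ)) * S2Y0
      + 2 * (((∑ i, a i * b (Fin.rev i)) - (N:ℝ)*Ybar1*Ybar0) / ((N:ℝ)-1))) := by
    rw [hVL, hSL]
  refine ⟨fun σ => ⟨?_, ?_⟩, ⟨π.symm.trans ρ, ?_⟩, ⟨π.symm.trans (Fin.revPerm.trans ρ), ?_⟩⟩
  · rw [key σ, hVLval]
    exact hmono _ _ (hlb σ)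
  · rw [key σ, hVHval]
    exact hmono _ _ (hub σ)
  · have hPH : ∑ i, Y1 i * Y0 ((π.symm.trans ρ) i) = ∑ i, a i * b i := by
      rw [← Equiv.sum_comp π (fun j => Y1 j * Y0 ((π.symm.trans ρ) j))]
      refine Finset.sum_congr rfl fun i _ => ?_
      rw [hπ, hρ]
      simp [Function.comp, Equiv.trans_apply]
    rw [key _, hPH, hVHval]
  · have hPL : ∑ i, Y1 i * Y0 ((π.symm.trans (Fin.revPerm.trans ρ)) i)
        = ∑ i, a i * b (Fin.rev i) := by
      rw [← Equiv.sum_comp π (fun j => Y1 j * Y0 ((π.symm.trans (Fin.revPerm.trans ρ)) j))]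
      refine Finset.sum_congr rfl fun i _ => ?_
      rw [hπ, hρ]
      simp [Function.comp, Equiv.trans_apply]
    rw [key _, hPL, hVLval]
end

section
/- There is a universal constant K > 0 with the following property. Let N ≥ 1, let y₁,…,y_N be points of a measurable space S, let P_N = (1/N) ∑_i δ_{y_i}, let π ∈ (0,1], and let T₁,…,T_N be i.i.d. Bernoulli(π) random variables. Let M > 0 and let 𝒢 be a countable class of measurable functions g : S → ℝ with |g(y_i)| ≤ M for every g ∈ 𝒢 and every i. Then for every η > 0 and every finite set G₀ of measurable functions S → ℝ that is an η-net of 𝒢 in L¹(P_N) (i.e., for every g ∈ 𝒢 there is g₀ ∈ G₀ with (1/N) ∑_i |g(y_i) − g₀(y_i)| ≤ η, and one may take the functions in G₀ bounded by M in absolute value on the population), one has E[ sup_{g ∈ 𝒢} | (1/(Nπ)) ∑_i T_i g(y_i) − (1/N) ∑_i g(y_i) | ] ≤ K · √(log(1 + |G₀|)) · M / (π √N) + (1/π + 1) · η. -/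
open MeasureTheory ProbabilityTheory

/-- The Bernoulli(π) distribution on `ℝ`: mass `π` at `1` and mass `1 - π` at `0`. -/
noncomputable def bernoulliReal (π : ℝ) : Measure ℝ :=
  ENNReal.ofReal π • Measure.dirac (1 : ℝ) + ENNReal.ofReal (1 - π) • Measure.dirac (0 : ℝ)

lemma bern_integral {p : ℝ} (hp0 : 0 ≤ p) (hp1 : p ≤ 1) (f : ℝ → ℝ) (hf : Measurable f) :
    ∫ t, f t ∂(bernoulliReal p) = p * f 1 + (1 - p) * f 0 := by
  have hint : ∀ (c : ℝ) (x : ℝ), 0 ≤ c →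
      Integrable f (ENNReal.ofReal c • Measure.dirac x) := by
    intro c x hc
    refine ⟨hf.aestronglyMeasurable, ?_⟩
    rw [HasFiniteIntegral, lintegral_smul_measure, lintegral_dirac]
    exact ENNReal.mul_lt_top ENNReal.ofReal_lt_top (by simp [ENNReal.coe_lt_top])
  rw [bernoulliReal, integral_add_measure (hint p 1 hp0) (hint (1-p) 0 (by linarith)),
    integral_smul_measure, integral_smul_measure, integral_dirac, integral_dirac,
    ENNReal.toReal_ofReal hp0, ENNReal.toReal_ofReal (by linarith)]
  simp [smul_eq_mul]

lemma bern_ae_01 {p : ℝ} (hp0 : 0 ≤ p) (hp1 : p ≤ 1) {Ω : Type} [MeasurableSpace Ω]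
    {P : Measure Ω} {T : Ω → ℝ} (hT : Measurable T)
    (hmap : Measure.map T P = bernoulliReal p) :
    ∀ᵐ ω ∂P, T ω = 0 ∨ T ω = 1 := by
  have hs : MeasurableSet ({0, 1} : Set ℝ) := by measurability
  have : P (T ⁻¹' ({0, 1} : Set ℝ)ᶜ) = 0 := by
    rw [← Measure.map_apply hT hs.compl, hmap, bernoulliReal]
    simp only [Measure.add_apply, Measure.smul_apply, smul_eq_mul]
    rw [Measure.dirac_apply' _ hs.compl, Measure.dirac_apply' _ hs.compl]
    simp [Set.indicator_of_notMem]
  filter_upwards [measure_eq_zero_iff_ae_notMem.mp this] with ω hω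
  simpa [Set.mem_insert_iff, or_comm] using not_not.mp (by simpa using hω)

lemma exp_le_cosh_add {c x : ℝ} (hc : 0 < c) (hx : |x| ≤ c) :
    Real.exp x ≤ Real.cosh c + x * (Real.sinh c / c) := by
  have h1 : x = ((c - x) / (2 * c)) * (-c) + ((c + x) / (2 * c)) * c := by
    field_simp; ring
  have ha : 0 ≤ (c - x) / (2 * c) := by
    apply div_nonneg _ (by linarith)
    have := abs_le.1 hx; linarith [this.2]
  have hb : 0 ≤ (c + x) / (2 * c) := by
    apply div_nonneg _ (by linarith)
    have := abs_le.1 hx; linarith [this.1]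
  have hab : (c - x) / (2 * c) + (c + x) / (2 * c) = 1 := by field_simp; ring
  have := convexOn_exp.2 (Set.mem_univ (-c)) (Set.mem_univ c) ha hb hab
  rw [smul_eq_mul, smul_eq_mul, smul_eq_mul, smul_eq_mul, ← h1] at this
  refine this.trans_eq ?_
  rw [Real.cosh_eq, Real.sinh_eq]
  field_simp
  ring

lemma bern_mgf_le {p a : ℝ} (hp0 : 0 ≤ p) (hp1 : p ≤ 1) :
    p * Real.exp ((1 - p) * a) + (1 - p) * Real.exp (-(p * a)) ≤ Real.exp (a ^ 2 / 2) := by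
  rcases eq_or_ne a 0 with rfl | ha
  · simp
  · set c := |a| with hc
    have hc0 : 0 < c := abs_pos.2 ha
    have h1 : |(1 - p) * a| ≤ c := by
      rw [abs_mul, hc]
      nth_rewrite 2 [← one_mul |a|]
      gcongr
      rw [abs_le]; constructor <;> linarith
    have h2 : |(-(p * a))| ≤ c := by
      rw [abs_neg, abs_mul, hc]
      nth_rewrite 2 [← one_mul |a|]
      gcongr
      rw [abs_le]; constructor <;> linarith
    have e1 := exp_le_cosh_add hc0 h1
    have e2 := exp_le_cosh_add hc0 h2
    have key : p * Real.exp ((1 - p) * a) + (1 - p) * Real.exp (-(p * a)) ≤ Real.cosh c := by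
      calc p * Real.exp ((1 - p) * a) + (1 - p) * Real.exp (-(p * a))
          ≤ p * (Real.cosh c + (1 - p) * a * (Real.sinh c / c))
            + (1 - p) * (Real.cosh c + (-(p * a)) * (Real.sinh c / c)) := by
            gcongr <;> linarith
        _ = Real.cosh c := by ring
    refine key.trans ?_
    have := Real.cosh_le_exp_half_sq c
    rwa [hc, sq_abs] at this

lemma mgf_single {p b t : ℝ} (hp0 : 0 ≤ p) (hp1 : p ≤ 1) {Ω : Type} [MeasurableSpace Ω]
    {P : Measure Ω} {T : Ω → ℝ} (hT : Measurable T)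
    (hmap : Measure.map T P = bernoulliReal p) :
    ∫ ω, Real.exp (t * ((T ω - p) * b)) ∂P ≤ Real.exp ((t * b) ^ 2 / 2) := by
  have hf : Measurable (fun u : ℝ => Real.exp (t * ((u - p) * b))) := by measurability
  have h1 : ∫ ω, Real.exp (t * ((T ω - p) * b)) ∂P
      = ∫ u, Real.exp (t * ((u - p) * b)) ∂(bernoulliReal p) := by
    rw [← hmap, integral_map hT.aemeasurable hf.aestronglyMeasurable]
  rw [h1, bern_integral hp0 hp1 _ hf]
  have e1 : t * ((1 - p) * b) = (1 - p) * (t * b) := by ring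
  have e2 : t * ((0 - p) * b) = -(p * (t * b)) := by ring
  rw [e1, e2]
  exact bern_mgf_le hp0 hp1


lemma lam_opt (a b L v : ℝ) (ha : 0 < a) (hb : 0 < b) (h2 : a ^ 2 = 2 * L)
    (h3 : b ^ 2 = v) : (L + (a / b) ^ 2 * v / 2) / (a / b) = a * b := by
  field_simp
  linear_combination (-b ^ 2) * h2 - a ^ 2 * h3

set_option maxHeartbeats 1000000 in

/-- **Finite-sample maximal inequality for Horvitz–Thompson empirical means.** There is a
universal constant `K > 0` such that for any finite population `y : Fin N → S`, any i.i.d.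
Bernoulli(π) sampling indicators `T i`, any countable class `𝒢` of measurable functions
bounded by `M` on the population, and any finite `η`-net `G₀` of `𝒢` in `L¹(P_N)` whose
elements are also bounded by `M`, the expected supremum over `𝒢` of the absolute deviation
of the Horvitz–Thompson mean from the population mean is at most
`K √(log(1 + |G₀|)) M / (π √N) + (1/π + 1) η`. -/
theorem stmt_10 :
    ∃ K : ℝ, 0 < K ∧
      ∀ (S : Type) (_ : MeasurableSpace S) (N : ℕ), 1 ≤ N →
        ∀ (y : Fin N → S) (π : ℝ), π ∈ Set.Ioc (0 : ℝ) 1 →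
        ∀ (Ω : Type) (_ : MeasurableSpace Ω) (P : Measure Ω), IsProbabilityMeasure P →
        ∀ (T : Fin N → Ω → ℝ), (∀ i, Measurable (T i)) →
          iIndepFun T P →
          (∀ i, Measure.map (T i) P = bernoulliReal π) →
        ∀ (M : ℝ), 0 < M →
        ∀ (𝒢 : Set (S → ℝ)), 𝒢.Countable → (∀ g ∈ 𝒢, Measurable g) →
          (∀ g ∈ 𝒢, ∀ i, |g (y i)| ≤ M) →
        ∀ (η : ℝ), 0 < η →
        ∀ (G₀ : Finset (S → ℝ)), (∀ g₀ ∈ G₀, Measurable g₀) →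
          (∀ g₀ ∈ G₀, ∀ i, |g₀ (y i)| ≤ M) →
          (∀ g ∈ 𝒢, ∃ g₀ ∈ G₀, (∑ i, |g (y i) - g₀ (y i)|) / (N : ℝ) ≤ η) →
        ∫ ω, (⨆ g : 𝒢, |(∑ i, T i ω * g.1 (y i)) / ((N : ℝ) * π)
            - (∑ i, g.1 (y i)) / (N : ℝ)|) ∂P
          ≤ K * Real.sqrt (Real.log (1 + (G₀.card : ℝ))) * M / (π * Real.sqrt N)
            + (1 / π + 1) * η := by
  refine ⟨2, by norm_num, ?_⟩
  intro S _ N hN y π hπ Ω _ P hP T hTmeas hTindep hTmap M hM 𝒢 h𝒢c h𝒢meas h𝒢bd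
    η hη G₀ hG₀meas hG₀bd hnet
  obtain ⟨hπ0, hπ1⟩ := hπ
  have hN0 : (0 : ℝ) < N := by exact_mod_cast Nat.lt_of_lt_of_le Nat.zero_lt_one hN
  have hNπ : (0 : ℝ) < (N : ℝ) * π := mul_pos hN0 hπ0
  have hRHS1 : 0 ≤ Real.sqrt (Real.log (1 + (G₀.card : ℝ))) * M / (π * Real.sqrt N) := by
    apply div_nonneg (mul_nonneg (Real.sqrt_nonneg _) hM.le)
    exact mul_nonneg hπ0.le (Real.sqrt_nonneg _)
  have hRHS2 : 0 ≤ (1 / π + 1) * η := by positivity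
  rcases Set.eq_empty_or_nonempty 𝒢 with h𝒢e | ⟨gs, hgs⟩
  · have : IsEmpty ↥𝒢 := by rw [h𝒢e]; exact Set.isEmpty_coe_sort.2 rfl
    simp only [Real.iSup_of_isEmpty, integral_zero]
    have h2 : (2:ℝ) * Real.sqrt (Real.log (1 + (G₀.card:ℝ))) * M / (π * Real.sqrt N)
        = 2 * (Real.sqrt (Real.log (1 + (G₀.card:ℝ))) * M / (π * Real.sqrt N)) := by ring
    linarith
  -- nonempty case
  obtain ⟨g₀s, hg₀s, -⟩ := hnet gs hgs
  have hne : G₀.Nonempty := ⟨g₀s, hg₀s⟩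
  set m : ℕ := G₀.card with hmdef
  have hm1 : (1 : ℝ) ≤ (m : ℝ) := by exact_mod_cast Nat.one_le_iff_ne_zero.2 (Finset.card_ne_zero_of_mem hg₀s)
  -- the centered HT process
  set Z : (S → ℝ) → Ω → ℝ := fun f ω => ∑ i, (T i ω - π) * (f (y i) / ((N : ℝ) * π)) with hZdef
  have hZ : ∀ (f : S → ℝ) (ω : Ω),
      (∑ i, T i ω * f (y i)) / ((N : ℝ) * π) - (∑ i, f (y i)) / (N : ℝ) = Z f ω := by
    intro f ω
    rw [hZdef]
    rw [Finset.sum_div, Finset.sum_div, ← Finset.sum_sub_distrib]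
    refine Finset.sum_congr rfl fun i _ => ?_
    field_simp
  have hZmeas : ∀ f : S → ℝ, Measurable (Z f) := by
    intro f
    apply Finset.measurable_sum
    intro i _
    exact ((hTmeas i).sub measurable_const).mul_const _
  have hE : ∀ᵐ ω ∂P, ∀ i, T i ω = 0 ∨ T i ω = 1 :=
    ae_all_iff.2 fun i => bern_ae_01 hπ0.le hπ1 (hTmeas i) (hTmap i)
  have hTabs : ∀ (ω : Ω) (i : Fin N), (T i ω = 0 ∨ T i ω = 1) → |T i ω - π| ≤ 1 := by
    rintro ω i (h | h) <;> rw [h, abs_le] <;> constructor <;> linarith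
  have hZbd : ∀ (f : S → ℝ), (∀ i, |f (y i)| ≤ M) → ∀ ω : Ω,
      (∀ i, T i ω = 0 ∨ T i ω = 1) → |Z f ω| ≤ M / π := by
    intro f hf ω hω
    calc |Z f ω| ≤ ∑ i, |(T i ω - π) * (f (y i) / ((N : ℝ) * π))| :=
          Finset.abs_sum_le_sum_abs _ _
      _ ≤ ∑ _i : Fin N, M / ((N : ℝ) * π) := by
          refine Finset.sum_le_sum fun i _ => ?_
          rw [abs_mul, abs_div, abs_of_pos hNπ]
          calc |T i ω - π| * (|f (y i)| / ((N : ℝ) * π))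
              ≤ 1 * (M / ((N : ℝ) * π)) :=
                mul_le_mul (hTabs ω i (hω i)) (by gcongr; exact hf i)
                  (div_nonneg (abs_nonneg _) hNπ.le) zero_le_one
            _ = M / ((N : ℝ) * π) := one_mul _
      _ = M / π := by
          rw [Finset.sum_const, Finset.card_univ, Fintype.card_fin, nsmul_eq_mul]
          field_simp
  -- the finite max over the net
  set F : Ω → ℝ := fun ω => G₀.sup' hne (fun g₀ => |Z g₀ ω|) with hFdef
  have hFmeas : Measurable F := by
    have hrw : F = G₀.sup' hne (fun g₀ => fun ω => |Z g₀ ω|) := by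
      funext ω
      rw [hFdef, Finset.sup'_apply]
    rw [hrw]
    exact Finset.measurable_sup' hne fun g₀ _ => (hZmeas g₀).abs
  have hF0 : ∀ ω, 0 ≤ F ω := fun ω =>
    le_trans (abs_nonneg (Z g₀s ω)) (Finset.le_sup' (fun g₀ => |Z g₀ ω|) hg₀s)
  have hFbd : ∀ ω : Ω, (∀ i, T i ω = 0 ∨ T i ω = 1) → F ω ≤ M / π := by
    intro ω hω
    exact Finset.sup'_le _ _ fun g₀ hg₀ => hZbd g₀ (hG₀bd g₀ hg₀) ω hω
  have hFint : Integrable F P := by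
    refine Integrable.mono' (integrable_const (M / π)) hFmeas.aestronglyMeasurable ?_
    filter_upwards [hE] with ω hω
    rw [Real.norm_eq_abs, abs_of_nonneg (hF0 ω)]
    exact hFbd ω hω
  -- step 1: reduce the supremum over 𝒢 to the max over the net, up to (1/π+1)η
  have hstep1 : (∫ ω, (⨆ g : 𝒢, |(∑ i, T i ω * g.1 (y i)) / ((N : ℝ) * π)
        - (∑ i, g.1 (y i)) / (N : ℝ)|) ∂P) ≤ (∫ ω, F ω ∂P) + (1 / π + 1) * η := by
    have hIint : Integrable (fun ω => F ω + (1 / π + 1) * η) P :=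
      hFint.add (integrable_const _)
    have hmono : (∫ ω, (⨆ g : 𝒢, |(∑ i, T i ω * g.1 (y i)) / ((N : ℝ) * π)
          - (∑ i, g.1 (y i)) / (N : ℝ)|) ∂P) ≤ ∫ ω, (F ω + (1 / π + 1) * η) ∂P := by
      apply integral_mono_of_nonneg
      · exact Filter.Eventually.of_forall fun ω => Real.iSup_nonneg fun g => abs_nonneg _
      · exact hIint
      · filter_upwards [hE] with ω hω
        have : Nonempty ↥𝒢 := ⟨⟨gs, hgs⟩⟩
        apply ciSup_le
        rintro ⟨g, hg⟩
        obtain ⟨g₀, hg₀, hgnet⟩ := hnet g hg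
        have hdiff : |Z g ω - Z g₀ ω| ≤ (1 / π) * η := by
          have heq : Z g ω - Z g₀ ω
              = ∑ i, (T i ω - π) * ((g (y i) - g₀ (y i)) / ((N : ℝ) * π)) := by
            rw [hZdef, ← Finset.sum_sub_distrib]
            refine Finset.sum_congr rfl fun i _ => ?_
            field_simp
          rw [heq]
          calc |∑ i, (T i ω - π) * ((g (y i) - g₀ (y i)) / ((N : ℝ) * π))|
              ≤ ∑ i, |(T i ω - π) * ((g (y i) - g₀ (y i)) / ((N : ℝ) * π))| :=
                Finset.abs_sum_le_sum_abs _ _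
            _ ≤ ∑ i, |g (y i) - g₀ (y i)| / ((N : ℝ) * π) := by
                refine Finset.sum_le_sum fun i _ => ?_
                rw [abs_mul, abs_div, abs_of_pos hNπ]
                nth_rewrite 2 [← one_mul (|g (y i) - g₀ (y i)| / ((N : ℝ) * π))]
                exact mul_le_mul_of_nonneg_right (hTabs ω i (hω i))
                  (div_nonneg (abs_nonneg _) hNπ.le)
            _ = ((∑ i, |g (y i) - g₀ (y i)|) / (N : ℝ)) * (1 / π) := by
                rw [← Finset.sum_div]
                field_simp
            _ ≤ η * (1 / π) := by
                apply mul_le_mul_of_nonneg_right (hgnet)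
                positivity
            _ = (1 / π) * η := by ring
        calc |(∑ i, T i ω * g (y i)) / ((N : ℝ) * π) - (∑ i, g (y i)) / (N : ℝ)|
            = |Z g ω| := by rw [hZ g ω]
          _ ≤ |Z g₀ ω| + |Z g ω - Z g₀ ω| := by
              have h := abs_add_le (Z g₀ ω) (Z g ω - Z g₀ ω)
              have h2 : Z g₀ ω + (Z g ω - Z g₀ ω) = Z g ω := by ring
              rw [h2] at h
              exact h
          _ ≤ F ω + (1 / π + 1) * η := by
              refine add_le_add ?_ (hdiff.trans ?_)
              · rw [hFdef]
                exact Finset.le_sup' (fun f => |Z f ω|) hg₀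
              have : (0:ℝ) ≤ η := hη.le
              nlinarith
    rw [integral_add hFint (integrable_const _), integral_const] at hmono
    simpa using hmono
  -- step 2: mgf bound for each element of the net
  set v : ℝ := M ^ 2 / ((N : ℝ) * π ^ 2) with hvdef
  have hv : 0 < v := by positivity
  have hmgf : ∀ g₀ ∈ G₀, ∀ t : ℝ,
      ∫ ω, Real.exp (t * Z g₀ ω) ∂P ≤ Real.exp (t ^ 2 * v / 2) := by
    intro g₀ hg₀ t
    set X : Fin N → Ω → ℝ := fun i ω => (T i ω - π) * (g₀ (y i) / ((N : ℝ) * π)) with hXdef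
    have hXmeas : ∀ i, Measurable (X i) := fun i =>
      ((hTmeas i).sub measurable_const).mul_const _
    have hXindep : iIndepFun X P :=
      hTindep.comp (fun i => fun u : ℝ => (u - π) * (g₀ (y i) / ((N : ℝ) * π)))
        (fun i => (measurable_id.sub measurable_const).mul_const _)
    have hZX : Z g₀ = ∑ i, X i := by
      funext ω
      rw [hZdef]
      simp [hXdef]
    have h1 : ∫ ω, Real.exp (t * Z g₀ ω) ∂P = mgf (∑ i, X i) P t := by
      rw [hZX]; rfl
    rw [h1, iIndepFun.mgf_sum hXindep hXmeas Finset.univ]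
    calc ∏ i, mgf (X i) P t
        ≤ ∏ _i : Fin N, Real.exp (t ^ 2 * (M / ((N : ℝ) * π)) ^ 2 / 2) := by
          refine Finset.prod_le_prod (fun i _ => mgf_nonneg) (fun i _ => ?_)
          have hb := mgf_single (b := g₀ (y i) / ((N : ℝ) * π)) (t := t)
            hπ0.le hπ1 (hTmeas i) (hTmap i)
          refine le_trans hb (Real.exp_le_exp.2 ?_)
          rw [mul_pow]
          have hbb : (g₀ (y i) / ((N : ℝ) * π)) ^ 2 ≤ (M / ((N : ℝ) * π)) ^ 2 := by
            rw [← sq_abs (g₀ (y i) / ((N : ℝ) * π)), abs_div, abs_of_pos hNπ]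
            have hd : |g₀ (y i)| / ((N : ℝ) * π) ≤ M / ((N : ℝ) * π) := by
              gcongr
              exact hG₀bd g₀ hg₀ i
            exact pow_le_pow_left₀ (by positivity) hd 2
          nlinarith [sq_nonneg t]
      _ = Real.exp (t ^ 2 * v / 2) := by
          rw [Finset.prod_const, Finset.card_univ, Fintype.card_fin, ← Real.exp_nat_mul]
          congr 1
          rw [hvdef]
          field_simp
  -- integrability of the exponential moments
  have hexpZint : ∀ g₀ ∈ G₀, ∀ t : ℝ, Integrable (fun ω => Real.exp (t * Z g₀ ω)) P := by
    intro g₀ hg₀ t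
    refine Integrable.mono' (integrable_const (Real.exp (|t| * (M / π))))
      (((hZmeas g₀).const_mul t).exp.aestronglyMeasurable) ?_
    filter_upwards [hE] with ω hω
    rw [Real.norm_eq_abs, abs_of_pos (Real.exp_pos _)]
    apply Real.exp_le_exp.2
    calc t * Z g₀ ω ≤ |t * Z g₀ ω| := le_abs_self _
      _ = |t| * |Z g₀ ω| := abs_mul _ _
      _ ≤ |t| * (M / π) :=
          mul_le_mul_of_nonneg_left (hZbd g₀ (hG₀bd g₀ hg₀) ω hω) (abs_nonneg t)
  set L : ℝ := Real.log (2 * m) with hLdef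
  have hL : 0 < L := Real.log_pos (by push_cast; linarith)
  set lam : ℝ := Real.sqrt (2 * L) / Real.sqrt v with hlamdef
  have hlam : 0 < lam := div_pos (Real.sqrt_pos.2 (by linarith)) (Real.sqrt_pos.2 hv)
  have hexpFint : Integrable (fun ω => Real.exp (lam * F ω)) P := by
    refine Integrable.mono' (integrable_const (Real.exp (lam * (M / π))))
      ((hFmeas.const_mul lam).exp.aestronglyMeasurable) ?_
    filter_upwards [hE] with ω hω
    rw [Real.norm_eq_abs, abs_of_pos (Real.exp_pos _)]
    exact Real.exp_le_exp.2 (mul_le_mul_of_nonneg_left (hFbd ω hω) hlam.le)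
  set Sint : ℝ := ∫ ω, Real.exp (lam * F ω) ∂P with hSdef
  have hS1 : (1 : ℝ) ≤ Sint := by
    rw [hSdef]
    calc (1 : ℝ) = ∫ _ω, (1 : ℝ) ∂P := by simp
      _ ≤ _ := integral_mono (integrable_const 1) hexpFint (fun ω => by
          rw [← Real.exp_zero]
          exact Real.exp_le_exp.2 (mul_nonneg hlam.le (hF0 ω)))
  have hS0 : (0 : ℝ) < Sint := zero_lt_one.trans_le hS1
  have hSle : Sint ≤ 2 * m * Real.exp (lam ^ 2 * v / 2) := by
    have hptwise : ∀ ω, Real.exp (lam * F ω) ≤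
        ∑ g₀ ∈ G₀, (Real.exp (lam * Z g₀ ω) + Real.exp (-lam * Z g₀ ω)) := by
      intro ω
      obtain ⟨g₀, hg₀, heq⟩ := Finset.exists_mem_eq_sup' hne (fun g₀ => |Z g₀ ω|)
      have hF : F ω = |Z g₀ ω| := heq
      have h1 : Real.exp (lam * F ω)
          ≤ Real.exp (lam * Z g₀ ω) + Real.exp (-lam * Z g₀ ω) := by
        rw [hF]
        rcases le_or_gt 0 (Z g₀ ω) with h | h
        · rw [abs_of_nonneg h]
          exact le_add_of_nonneg_right (Real.exp_pos _).le
        · rw [abs_of_neg h]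
          have hr : lam * -Z g₀ ω = -lam * Z g₀ ω := by ring
          rw [hr]
          exact le_add_of_nonneg_left (Real.exp_pos _).le
      refine h1.trans ?_
      exact Finset.single_le_sum
        (f := fun g₀ => Real.exp (lam * Z g₀ ω) + Real.exp (-lam * Z g₀ ω))
        (fun g hg => by positivity) hg₀
    have hsumint : Integrable
        (fun ω => ∑ g₀ ∈ G₀, (Real.exp (lam * Z g₀ ω) + Real.exp (-lam * Z g₀ ω))) P := by
      apply integrable_finset_sum
      intro g₀ hg₀
      exact (hexpZint g₀ hg₀ lam).add (hexpZint g₀ hg₀ (-lam))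
    calc Sint ≤ ∫ ω, ∑ g₀ ∈ G₀,
          (Real.exp (lam * Z g₀ ω) + Real.exp (-lam * Z g₀ ω)) ∂P :=
          integral_mono hexpFint hsumint hptwise
      _ = ∑ g₀ ∈ G₀, ∫ ω,
          (Real.exp (lam * Z g₀ ω) + Real.exp (-lam * Z g₀ ω)) ∂P :=
          integral_finset_sum _ fun g₀ hg₀ =>
            (hexpZint g₀ hg₀ lam).add (hexpZint g₀ hg₀ (-lam))
      _ ≤ ∑ _g₀ ∈ G₀, (Real.exp (lam ^ 2 * v / 2) + Real.exp (lam ^ 2 * v / 2)) := by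
          refine Finset.sum_le_sum fun g₀ hg₀ => ?_
          rw [integral_add (hexpZint g₀ hg₀ lam) (hexpZint g₀ hg₀ (-lam))]
          exact add_le_add (hmgf g₀ hg₀ lam) (by simpa [neg_sq] using hmgf g₀ hg₀ (-lam))
      _ = 2 * m * Real.exp (lam ^ 2 * v / 2) := by
          rw [Finset.sum_const, nsmul_eq_mul, ← hmdef]
          ring
  -- Jensen step: ∫ F ≤ log Sint / lam
  have hjensen : ∫ ω, F ω ∂P ≤ Real.log Sint / lam := by
    have hkey : ∀ ω, lam * F ω ≤ Real.log Sint - 1 + Real.exp (lam * F ω) / Sint := by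
      intro ω
      have h2 := Real.log_le_sub_one_of_pos (div_pos (Real.exp_pos (lam * F ω)) hS0)
      rw [Real.log_div (Real.exp_ne_zero _) hS0.ne', Real.log_exp] at h2
      linarith
    have hint : ∫ ω, (Real.log Sint - 1 + Real.exp (lam * F ω) / Sint) ∂P
        = Real.log Sint := by
      rw [integral_add (integrable_const _) (hexpFint.div_const Sint), integral_const,
        integral_div, ← hSdef]
      simp only [probReal_univ, one_smul]
      field_simp
      ring
    have hmono2 : ∫ ω, lam * F ω ∂P ≤ Real.log Sint := by
      rw [← hint]
      exact integral_mono (hFint.const_mul lam)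
        ((integrable_const _).add (hexpFint.div_const Sint)) hkey
    rw [integral_const_mul] at hmono2
    rw [le_div_iff₀ hlam]
    linarith
  have hlogSle : Real.log Sint ≤ L + lam ^ 2 * v / 2 :=
    calc Real.log Sint ≤ Real.log (2 * m * Real.exp (lam ^ 2 * v / 2)) :=
          Real.log_le_log hS0 hSle
      _ = L + lam ^ 2 * v / 2 := by
          have hm0 : ((2 : ℝ) * (m : ℝ)) ≠ 0 := by nlinarith
          rw [Real.log_mul hm0 (Real.exp_ne_zero _), Real.log_exp, hLdef]
  have hFle : ∫ ω, F ω ∂P ≤ Real.sqrt (2 * L) * Real.sqrt v := by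
    refine hjensen.trans ?_
    have h3 : Real.log Sint / lam ≤ (L + lam ^ 2 * v / 2) / lam :=
      (div_le_div_iff_of_pos_right hlam).2 hlogSle
    refine h3.trans (le_of_eq ?_)
    have h2L : Real.sqrt (2 * L) ^ 2 = 2 * L := Real.sq_sqrt (by linarith)
    have hvv : Real.sqrt v ^ 2 = v := Real.sq_sqrt hv.le
    have hsL : (0 : ℝ) < Real.sqrt (2 * L) := Real.sqrt_pos.2 (by linarith)
    have hsv : (0 : ℝ) < Real.sqrt v := Real.sqrt_pos.2 hv
    rw [hlamdef]
    exact lam_opt _ _ _ _ hsL hsv h2L hvv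
  have hsqrtv : Real.sqrt v = M / (Real.sqrt N * π) := by
    rw [hvdef, show M ^ 2 / ((N : ℝ) * π ^ 2) = (M / (Real.sqrt N * π)) ^ 2 by
      rw [div_pow, mul_pow, Real.sq_sqrt hN0.le]]
    exact Real.sqrt_sq (by positivity)
  have hsqrtL : Real.sqrt (2 * L) ≤ 2 * Real.sqrt (Real.log (1 + (m : ℝ))) := by
    have h5 : L ≤ 2 * Real.log (1 + (m : ℝ)) := by
      rw [hLdef]
      calc Real.log (2 * (m : ℝ)) ≤ Real.log ((1 + (m : ℝ)) ^ 2) := by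
            apply Real.log_le_log (by linarith)
            nlinarith
        _ = 2 * Real.log (1 + (m : ℝ)) := by
            rw [Real.log_pow]
            push_cast
            ring
    calc Real.sqrt (2 * L) ≤ Real.sqrt (4 * Real.log (1 + (m : ℝ))) :=
          Real.sqrt_le_sqrt (by linarith)
      _ = 2 * Real.sqrt (Real.log (1 + (m : ℝ))) := by
          rw [show (4 : ℝ) * Real.log (1 + (m : ℝ))
              = (2 : ℝ) ^ 2 * Real.log (1 + (m : ℝ)) by norm_num,
            Real.sqrt_mul (by positivity), Real.sqrt_sq (by norm_num)]
  calc ∫ ω, (⨆ g : 𝒢, |(∑ i, T i ω * g.1 (y i)) / ((N : ℝ) * π)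
        - (∑ i, g.1 (y i)) / (N : ℝ)|) ∂P
      ≤ (∫ ω, F ω ∂P) + (1 / π + 1) * η := hstep1
    _ ≤ Real.sqrt (2 * L) * Real.sqrt v + (1 / π + 1) * η := add_le_add_left hFle _
    _ ≤ 2 * Real.sqrt (Real.log (1 + (m : ℝ))) * (M / (Real.sqrt N * π))
        + (1 / π + 1) * η := by
        rw [hsqrtv]
        exact add_le_add_left (mul_le_mul_of_nonneg_right hsqrtL (by positivity)) _
    _ = 2 * Real.sqrt (Real.log (1 + (m : ℝ))) * M / (π * Real.sqrt N)
        + (1 / π + 1) * η := by ring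
end

section
/- Fix π ∈ (0,1). For each N ≥ 1 let y_{N,1},…,y_{N,N} be points of a measurable space S with empirical measure P_N = (1/N) ∑_i δ_{y_{N,i}}, and let T_{N,1},…,T_{N,N} be i.i.d. Bernoulli(π) random variables. Let 𝒢 be a countable class of measurable functions S → ℝ with a measurable envelope F (|g| ≤ F pointwise for all g ∈ 𝒢), and for M > 0 let 𝒢_M = { g·1{F ≤ M} : g ∈ 𝒢 }. For ε > 0 let 𝒩(ε, 𝒢_M, L¹(P_N)) denote the minimal cardinality of an ε-net of 𝒢_M in L¹(P_N). Assume: (i) uniform integrability of the envelope, i.e., sup_N (1/N) ∑_i F(y_{N,i}) 1{F(y_{N,i}) > M} → 0 as M → ∞; and (ii) for every M > 0 and every ε > 0, (1/N) log 𝒩(ε, 𝒢_M, L¹(P_N)) → 0 as N → ∞. Then sup_{g ∈ 𝒢} | (1/(Nπ)) ∑_i T_{N,i} g(y_{N,i}) − (1/N) ∑_i g(y_{N,i}) | → 0 in probability as N → ∞. -/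
open MeasureTheory ProbabilityTheory

/-- `G₀` is an `ε`-net of the class `C` in `L¹(P_N)`, where `P_N` is the empirical measure
of the finite population `y`. -/
def IsNet {S : Type*} {N : ℕ} (y : Fin N → S) (ε : ℝ) (C : Set (S → ℝ))
    (G₀ : Finset (S → ℝ)) : Prop :=
  ∀ g ∈ C, ∃ g₀ ∈ G₀, (∑ i, |g (y i) - g₀ (y i)|) / (N : ℝ) ≤ ε

/-- The `ε`-covering number of the class `C` in `L¹(P_N)`: the minimal cardinality of a
finite `ε`-net. -/
noncomputable def covNum {S : Type*} {N : ℕ} (y : Fin N → S) (ε : ℝ)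
    (C : Set (S → ℝ)) : ℕ :=
  sInf {m : ℕ | ∃ G₀ : Finset (S → ℝ), G₀.card = m ∧ IsNet y ε C G₀}

lemma two_point_bound (p u : ℝ) (hp0 : 0 ≤ p) (hp1 : p ≤ 1) :
    p * Real.exp ((1 - p) * u) + (1 - p) * Real.exp (-(p * u)) ≤ Real.exp (u ^ 2 / 2) := by
  rcases eq_or_ne u 0 with rfl | hu
  · norm_num
  · set c := |u| with hc
    have hc0 : 0 < c := abs_pos.mpr hu
    have key : ∀ z : ℝ, |z| ≤ c → Real.exp z ≤
        ((c - z) / (2 * c)) * Real.exp (-c) + ((c + z) / (2 * c)) * Real.exp c := by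
      intro z hz
      rcases abs_le.mp hz with ⟨hz1, hz2⟩
      have h := convexOn_exp.2 (Set.mem_univ (-c)) (Set.mem_univ c)
        (show (0:ℝ) ≤ (c - z) / (2 * c) by apply div_nonneg <;> linarith)
        (show (0:ℝ) ≤ (c + z) / (2 * c) by apply div_nonneg <;> linarith)
        (show (c - z) / (2 * c) + (c + z) / (2 * c) = 1 by field_simp; ring)
      simp only [smul_eq_mul] at h
      have : (c - z) / (2 * c) * (-c) + (c + z) / (2 * c) * c = z := by field_simp; ring
      rwa [this] at h
    have h1 := key ((1 - p) * u) (by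
      rw [abs_mul, abs_of_nonneg (by linarith : (0:ℝ) ≤ 1 - p)]
      nlinarith [abs_nonneg u])
    have h2 := key (-(p * u)) (by
      rw [abs_neg, abs_mul, abs_of_nonneg hp0]
      nlinarith [abs_nonneg u])
    have hcosh : (Real.exp c + Real.exp (-c)) / 2 ≤ Real.exp (u ^ 2 / 2) := by
      have h := Real.cosh_le_exp_half_sq c
      rw [Real.cosh_eq] at h
      rwa [hc, sq_abs] at h
    have e1 := mul_le_mul_of_nonneg_left h1 hp0
    have e2 := mul_le_mul_of_nonneg_left h2 (by linarith : (0:ℝ) ≤ 1 - p)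
    have hcne : (2 * c) ≠ 0 := by positivity
    have comb : p * (((c - (1 - p) * u) / (2 * c)) * Real.exp (-c)
          + ((c + (1 - p) * u) / (2 * c)) * Real.exp c)
        + (1 - p) * (((c - -(p * u)) / (2 * c)) * Real.exp (-c)
          + ((c + -(p * u)) / (2 * c)) * Real.exp c)
        = (Real.exp c + Real.exp (-c)) / 2 := by
      field_simp
      ring
    linarith [e1, e2]

lemma bernoulli_integral (π : ℝ) (hπ0 : 0 ≤ π) (hπ1 : π ≤ 1) (f : ℝ → ℝ) :
    ∫ x, f x ∂(bernoulliReal π) = π * f 1 + (1 - π) * f 0 := by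
  have hd : ∀ c : ℝ, Integrable f (Measure.dirac c) := by
    intro c
    refine (integrable_const (f c)).congr ?_
    rw [ae_dirac_eq]
    exact Filter.eventually_pure.mpr rfl
  rw [bernoulliReal, integral_add_measure ((hd 1).smul_measure ENNReal.ofReal_ne_top)
      ((hd 0).smul_measure ENNReal.ofReal_ne_top),
    integral_smul_measure, integral_smul_measure, integral_dirac, integral_dirac,
    ENNReal.toReal_ofReal hπ0, ENNReal.toReal_ofReal (by linarith : (0:ℝ) ≤ 1 - π),
    smul_eq_mul, smul_eq_mul]

lemma mgf_bernoulli_shift {Ω : Type*} [MeasurableSpace Ω] {P : Measure Ω}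
    {π : ℝ} (hπ0 : 0 < π) (hπ1 : π < 1) {X : Ω → ℝ} (hX : Measurable X)
    (hlaw : Measure.map X P = bernoulliReal π) (a u : ℝ) :
    mgf (fun ω => (X ω - π) * a) P u ≤ Real.exp (u ^ 2 * a ^ 2 / 2) := by
  have hm : mgf (fun ω => (X ω - π) * a) P u
      = ∫ x, Real.exp (u * ((x - π) * a)) ∂(bernoulliReal π) := by
    rw [mgf, ← hlaw, integral_map hX.aemeasurable]
    exact (by continuity : Continuous fun x : ℝ => Real.exp (u * ((x - π) * a))).aestronglyMeasurable
  rw [hm, bernoulli_integral π hπ0.le hπ1.le]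
  have h := two_point_bound π (u * a) hπ0.le hπ1.le
  have e1 : u * ((1 - π) * a) = (1 - π) * (u * a) := by ring
  have e2 : u * ((0 - π) * a) = -(π * (u * a)) := by ring
  have e3 : (u * a) ^ 2 / 2 = u ^ 2 * a ^ 2 / 2 := by ring
  rw [e1, e2]
  rw [e3] at h
  exact h

lemma bernoulli_ae_01 {Ω : Type*} [MeasurableSpace Ω] {P : Measure Ω} {π : ℝ} {X : Ω → ℝ}
    (hX : Measurable X) (hlaw : Measure.map X P = bernoulliReal π) :
    ∀ᵐ ω ∂P, X ω = 0 ∨ X ω = 1 := by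
  have hs : MeasurableSet ({0, 1} : Set ℝ) := (measurableSet_singleton 1).insert 0
  have h0 : P (X ⁻¹' ({0, 1} : Set ℝ)ᶜ) = 0 := by
    rw [← Measure.map_apply hX hs.compl, hlaw]
    simp [bernoulliReal, Measure.dirac_apply' _ hs.compl, Set.indicator]
  rw [ae_iff]
  have he : {ω | ¬(X ω = 0 ∨ X ω = 1)} = X ⁻¹' ({0, 1} : Set ℝ)ᶜ := by
    ext ω; simp [not_or]
  rw [he]; exact h0

lemma chernoff {Ω : Type*} [MeasurableSpace Ω] (P : Measure Ω) [IsProbabilityMeasure P]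
    {N : ℕ} (hN : 1 ≤ N) {π : ℝ} (hπ0 : 0 < π) (hπ1 : π < 1)
    (T : Fin N → Ω → ℝ) (hTmeas : ∀ i, Measurable (T i))
    (hTindep : iIndepFun T P)
    (hTlaw : ∀ i, Measure.map (T i) P = bernoulliReal π)
    (a : Fin N → ℝ) {c : ℝ} (hc : 0 < c) (ha : ∀ i, |a i| ≤ c)
    {t : ℝ} (ht : 0 < t) :
    P {ω | t ≤ |∑ i, (T i ω - π) * a i| / N}
      ≤ ENNReal.ofReal (2 * Real.exp (-((N : ℝ) * (t ^ 2 / (2 * c ^ 2))))) := by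
  classical
  set Xi : Fin N → Ω → ℝ := fun i ω => (T i ω - π) * a i with hXi
  set Xs : Ω → ℝ := fun ω => ∑ i, Xi i ω with hXs
  have hXim : ∀ i, Measurable (Xi i) := fun i => ((hTmeas i).sub measurable_const).mul_const _
  have hXsm : Measurable Xs := Finset.measurable_sum _ fun i _ => hXim i
  have hind : iIndepFun Xi P := by
    have := hTindep.comp (fun i (x : ℝ) => (x - π) * a i)
      (fun i => (measurable_id.sub measurable_const).mul_const _)
    exact this
  have hae : ∀ i, ∀ᵐ ω ∂P, |Xi i ω| ≤ c := by
    intro i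
    filter_upwards [bernoulli_ae_01 (hTmeas i) (hTlaw i)] with ω hω
    have habs : |T i ω - π| ≤ 1 := by
      rcases hω with h | h <;> rw [h] <;> rw [abs_le] <;> constructor <;> linarith
    calc |Xi i ω| = |T i ω - π| * |a i| := abs_mul _ _
      _ ≤ 1 * c := by
          apply mul_le_mul habs (ha i) (abs_nonneg _) zero_le_one
      _ = c := one_mul c
  have hint : ∀ (u : ℝ) (i : Fin N), Integrable (fun ω => Real.exp (u * Xi i ω)) P := by
    intro u i
    refine Integrable.mono' (integrable_const (Real.exp (|u| * c)))
      ((hXim i).const_mul u).exp.aestronglyMeasurable ?_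
    filter_upwards [hae i] with ω hω
    rw [Real.norm_eq_abs, abs_of_pos (Real.exp_pos _), Real.exp_le_exp]
    calc u * Xi i ω ≤ |u * Xi i ω| := le_abs_self _
      _ = |u| * |Xi i ω| := abs_mul _ _
      _ ≤ |u| * c := by apply mul_le_mul_of_nonneg_left hω (abs_nonneg u)
  have haesum : ∀ᵐ ω ∂P, ∀ i, |Xi i ω| ≤ c := (ae_all_iff).mpr hae
  have hXsint : ∀ (u : ℝ), Integrable (fun ω => Real.exp (u * Xs ω)) P := by
    intro u
    refine Integrable.mono' (integrable_const (Real.exp (|u| * (N * c))))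
      (hXsm.const_mul u).exp.aestronglyMeasurable ?_
    filter_upwards [haesum] with ω hω
    rw [Real.norm_eq_abs, abs_of_pos (Real.exp_pos _), Real.exp_le_exp]
    have hXsb : |Xs ω| ≤ N * c := by
      calc |Xs ω| ≤ ∑ i, |Xi i ω| := Finset.abs_sum_le_sum_abs _ _
        _ ≤ ∑ _i : Fin N, c := Finset.sum_le_sum fun i _ => hω i
        _ = N * c := by rw [Finset.sum_const, Finset.card_univ, Fintype.card_fin, nsmul_eq_mul]
    calc u * Xs ω ≤ |u * Xs ω| := le_abs_self _
      _ = |u| * |Xs ω| := abs_mul _ _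
      _ ≤ |u| * (N * c) := by apply mul_le_mul_of_nonneg_left hXsb (abs_nonneg u)
  have hmgfb : ∀ u : ℝ, mgf Xs P u ≤ Real.exp ((N : ℝ) * (u ^ 2 * c ^ 2 / 2)) := by
    intro u
    have hsum_eq : Xs = ∑ i, Xi i := by funext ω; rw [hXs]; simp [Finset.sum_apply]
    have h1 : mgf Xs P u = ∏ i, mgf (Xi i) P u := by
      rw [hsum_eq]; exact hind.mgf_sum hXim Finset.univ
    rw [h1]
    calc ∏ i, mgf (Xi i) P u ≤ ∏ _i : Fin N, Real.exp (u ^ 2 * c ^ 2 / 2) := by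
          apply Finset.prod_le_prod (fun i _ => mgf_nonneg)
          intro i _
          refine (mgf_bernoulli_shift hπ0 hπ1 (hTmeas i) (hTlaw i) (a i) u).trans ?_
          rw [Real.exp_le_exp]
          have : (a i) ^ 2 ≤ c ^ 2 := by
            rcases abs_le.mp (ha i) with ⟨h1', h2'⟩
            nlinarith
          nlinarith [sq_nonneg u]
      _ = Real.exp ((N : ℝ) * (u ^ 2 * c ^ 2 / 2)) := by
          rw [Finset.prod_const, Finset.card_univ, Fintype.card_fin, ← Real.exp_nat_mul]
  set u : ℝ := t / c ^ 2 with hu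
  have hu0 : 0 < u := div_pos ht (by positivity)
  have hexp_eq : -u * ((N : ℝ) * t) + (N : ℝ) * (u ^ 2 * c ^ 2 / 2)
      = -((N : ℝ) * (t ^ 2 / (2 * c ^ 2))) := by
    rw [hu]; field_simp; ring
  have hbound : ∀ u' : ℝ, u' ^ 2 = u ^ 2 → ∀ s : Set Ω,
      (P s).toReal ≤ Real.exp (-u * ((N:ℝ)*t)) * mgf Xs P u' →
      P s ≤ ENNReal.ofReal (Real.exp (-((N : ℝ) * (t ^ 2 / (2 * c ^ 2))))) := by
    intro u' hu' s hs
    rw [← ENNReal.ofReal_toReal (measure_ne_top P s)]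
    apply ENNReal.ofReal_le_ofReal
    refine hs.trans ?_
    rw [← hexp_eq, Real.exp_add]
    refine mul_le_mul_of_nonneg_left ((hmgfb u').trans ?_) (Real.exp_pos _).le
    rw [Real.exp_le_exp, hu']
  have h1 : P {ω | (N : ℝ) * t ≤ Xs ω}
      ≤ ENNReal.ofReal (Real.exp (-((N : ℝ) * (t ^ 2 / (2 * c ^ 2))))) :=
    hbound u rfl _ (measure_ge_le_exp_mul_mgf ((N:ℝ)*t) hu0.le (hXsint u))
  have h2 : P {ω | Xs ω ≤ -((N : ℝ) * t)}
      ≤ ENNReal.ofReal (Real.exp (-((N : ℝ) * (t ^ 2 / (2 * c ^ 2))))) := by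
    refine hbound (-u) (by ring) _ ?_
    have hl := measure_le_le_exp_mul_mgf (X := Xs) (μ := P) (-((N:ℝ)*t)) (t := -u)
      (neg_nonpos.mpr hu0.le) (hXsint (-u))
    refine hl.trans_eq ?_
    congr 1
    ring
  have hsub : {ω | t ≤ |Xs ω| / N}
      ⊆ {ω | (N : ℝ) * t ≤ Xs ω} ∪ {ω | Xs ω ≤ -((N : ℝ) * t)} := by
    intro ω hω
    simp only [Set.mem_setOf_eq] at hω
    have hN0 : (0 : ℝ) < N := by exact_mod_cast hN
    have habs : (N : ℝ) * t ≤ |Xs ω| := by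
      rw [le_div_iff₀ hN0] at hω
      linarith [hω]
    rcases abs_le.mp (le_refl |Xs ω|) with _
    rcases le_abs.mp habs with h | h
    · exact Or.inl h
    · exact Or.inr (by simp only [Set.mem_setOf_eq]; linarith)
  have hfinal := (measure_mono hsub).trans
    ((measure_union_le _ _).trans (add_le_add h1 h2))
  refine le_trans ?_ (hfinal.trans_eq ?_)
  · apply le_of_eq
    congr 1
  · rw [← ENNReal.ofReal_add (Real.exp_pos _).le (Real.exp_pos _).le]
    congr 1
    ring

lemma clip_close {M a b : ℝ} (ha : |a| ≤ M) : |a - max (-M) (min M b)| ≤ |a - b| := by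
  rcases abs_le.mp ha with ⟨ha1, ha2⟩
  rcases le_total b (-M) with hb | hb
  · have he : max (-M) (min M b) = -M := by
      rw [min_eq_right (by linarith), max_eq_left hb]
    rw [he, abs_of_nonneg (by linarith), abs_of_nonneg (by linarith)]
    linarith
  · rcases le_total M b with hb2 | hb2
    · have he : max (-M) (min M b) = M := by
        rw [min_eq_left hb2, max_eq_right (by linarith)]
      rw [he, abs_of_nonpos (by linarith), abs_of_nonpos (by linarith)]
      linarith
    · have he : max (-M) (min M b) = b := by rw [min_eq_right hb2, max_eq_right hb]
      rw [he]

lemma clip_bound {M b : ℝ} (hM : 0 ≤ M) : |max (-M) (min M b)| ≤ M := by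
  rw [abs_le]
  constructor
  · exact le_max_left _ _
  · exact max_le (by linarith) (min_le_left _ _)

lemma dev_eq {N : ℕ} {π : ℝ} (hπ0 : π ≠ 0) (hN : (N : ℝ) ≠ 0) (Tv v : Fin N → ℝ) :
    (∑ i, Tv i * v i) / ((N : ℝ) * π) - (∑ i, v i) / N
      = (∑ i, (Tv i - π) * (v i / π)) / N := by
  have he : ∀ i, (Tv i - π) * (v i / π) = Tv i * v i / π - v i := by
    intro i; field_simp
  rw [Finset.sum_congr rfl fun i _ => he i, Finset.sum_sub_distrib, ← Finset.sum_div]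
  field_simp

lemma dev_diff_bound {N : ℕ} {π : ℝ} (hπ0 : 0 < π) (hN : (0 : ℝ) < N)
    (Tv : Fin N → ℝ) (hT : ∀ i, 0 ≤ Tv i ∧ Tv i ≤ 1) (v w : Fin N → ℝ) :
    |((∑ i, Tv i * v i) / ((N : ℝ) * π) - (∑ i, v i) / N)
        - ((∑ i, Tv i * w i) / ((N : ℝ) * π) - (∑ i, w i) / N)|
      ≤ ((∑ i, |v i - w i|) / N) * (1 + 1 / π) := by
  have hsplit : ((∑ i, Tv i * v i) / ((N : ℝ) * π) - (∑ i, v i) / N)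
        - ((∑ i, Tv i * w i) / ((N : ℝ) * π) - (∑ i, w i) / N)
      = (∑ i, Tv i * (v i - w i)) / ((N : ℝ) * π) - (∑ i, (v i - w i)) / N := by
    rw [Finset.sum_congr rfl (fun i _ => mul_sub (Tv i) (v i) (w i)),
      Finset.sum_sub_distrib, Finset.sum_sub_distrib]
    ring
  rw [hsplit]
  have hb1 : |∑ i, Tv i * (v i - w i)| ≤ ∑ i, |v i - w i| := by
    refine (Finset.abs_sum_le_sum_abs _ _).trans (Finset.sum_le_sum fun i _ => ?_)
    rw [abs_mul, abs_of_nonneg (hT i).1]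
    calc Tv i * |v i - w i| ≤ 1 * |v i - w i| :=
          mul_le_mul_of_nonneg_right (hT i).2 (abs_nonneg _)
      _ = |v i - w i| := one_mul _
  have hb2 : |∑ i, (v i - w i)| ≤ ∑ i, |v i - w i| := Finset.abs_sum_le_sum_abs _ _
  have hS0 : 0 ≤ ∑ i, |v i - w i| := Finset.sum_nonneg fun i _ => abs_nonneg _
  have habs : |(∑ i, Tv i * (v i - w i)) / ((N : ℝ) * π) - (∑ i, (v i - w i)) / N|
      ≤ |∑ i, Tv i * (v i - w i)| / ((N : ℝ) * π) + |∑ i, (v i - w i)| / N := by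
    refine (abs_sub _ _).trans ?_
    rw [abs_div, abs_div, abs_of_pos (by positivity : (0:ℝ) < (N:ℝ) * π),
      abs_of_pos hN]
  refine habs.trans ?_
  have hkey : (∑ i, |v i - w i|) / ((N : ℝ) * π) + (∑ i, |v i - w i|) / N
      = ((∑ i, |v i - w i|) / N) * (1 + 1 / π) := by
    field_simp
    ring
  rw [← hkey]
  gcongr

/-- **P-Glivenko–Cantelli by entropy.** Let `𝒢` be a countable class of measurable
functions with measurable envelope `F` satisfying the uniform-integrability condition, and
suppose the `L¹(P_N)`-entropy of each truncated class `𝒢_M` is `o(N)`. Then the supremum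
over `𝒢` of the deviation of the Horvitz–Thompson empirical mean (under i.i.d. Bernoulli(π)
sampling) from the population mean tends to `0` in probability. -/
theorem stmt_11 {S : Type*} [MeasurableSpace S] (π : ℝ) (hπ : π ∈ Set.Ioo (0 : ℝ) 1)
    (y : (N : ℕ) → Fin N → S)
    (Ω : ℕ → Type*) [∀ N, MeasurableSpace (Ω N)]
    (P : (N : ℕ) → Measure (Ω N)) [∀ N, IsProbabilityMeasure (P N)]
    (T : (N : ℕ) → Fin N → Ω N → ℝ)
    (hTmeas : ∀ N i, Measurable (T N i))
    (hTindep : ∀ N, iIndepFun (T N) (P N))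
    (hTlaw : ∀ N i, Measure.map (T N i) (P N) = bernoulliReal π)
    (𝒢 : Set (S → ℝ)) (h𝒢c : 𝒢.Countable) (h𝒢m : ∀ g ∈ 𝒢, Measurable g)
    (F : S → ℝ) (hFm : Measurable F) (henv : ∀ g ∈ 𝒢, ∀ x, |g x| ≤ F x)
    (𝒢M : ℝ → Set (S → ℝ))
    (h𝒢M : ∀ M, 𝒢M M = (fun g => fun x => if F x ≤ M then g x else 0) '' 𝒢)
    (hUI : ∀ δ > (0 : ℝ), ∃ M₀ : ℝ, ∀ M ≥ M₀, ∀ N : ℕ, 1 ≤ N →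
      (∑ i, if M < F (y N i) then F (y N i) else 0) / (N : ℝ) ≤ δ)
    (hnet : ∀ M > (0 : ℝ), ∀ ε > (0 : ℝ), ∀ N : ℕ,
      {m : ℕ | ∃ G₀ : Finset (S → ℝ), G₀.card = m ∧ IsNet (y N) ε (𝒢M M) G₀}.Nonempty)
    (hentropy : ∀ M > (0 : ℝ), ∀ ε > (0 : ℝ),
      Filter.Tendsto (fun N : ℕ => Real.log (covNum (y N) ε (𝒢M M)) / (N : ℝ))
        Filter.atTop (nhds 0)) :
    ∀ ε > (0 : ℝ),
      Filter.Tendsto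
        (fun N : ℕ => (P N) {ω | ε ≤ ⨆ g : 𝒢,
          |(∑ i, T N i ω * g.1 (y N i)) / ((N : ℝ) * π)
            - (∑ i, g.1 (y N i)) / (N : ℝ)|})
        Filter.atTop (nhds 0) := by
  classical
  obtain ⟨hπ0, hπ1⟩ := hπ
  intro ε hε
  by_cases h𝒢e : 𝒢.Nonempty
  swap
  · -- empty class: the supremum is 0, the event is empty
    have hie : IsEmpty 𝒢 := by
      rw [Set.not_nonempty_iff_eq_empty] at h𝒢e
      subst h𝒢e
      exact Set.isEmpty_coe_sort.mpr rfl
    have hempty : ∀ N, {ω : Ω N | ε ≤ ⨆ g : 𝒢,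
        |(∑ i, T N i ω * g.1 (y N i)) / ((N : ℝ) * π)
          - (∑ i, g.1 (y N i)) / (N : ℝ)|} = ∅ := by
      intro N
      ext ω
      simp only [Set.mem_setOf_eq, Set.mem_empty_iff_false, iff_false, not_le]
      rw [Real.iSup_of_isEmpty]
      exact hε
    simp only [hempty, measure_empty]
    exact tendsto_const_nhds
  obtain ⟨gs, hgs⟩ := h𝒢e
  rw [ENNReal.tendsto_atTop_zero]
  intro η hη
  -- constants
  set K : ℝ := 1 + 1 / π with hK
  have hK0 : 0 < K := by positivity
  set δ : ℝ := ε / (4 * K) with hδdef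
  have hδ : 0 < δ := by positivity
  obtain ⟨M₀, hM₀⟩ := hUI δ hδ
  set M : ℝ := max M₀ 1 with hMdef
  have hM1 : 1 ≤ M := le_max_right _ _
  have hM0 : 0 < M := lt_of_lt_of_le one_pos hM1
  have htail : ∀ N : ℕ, 1 ≤ N →
      (∑ i, if M < F (y N i) then F (y N i) else 0) / (N : ℝ) ≤ δ :=
    hM₀ M (le_max_left _ _)
  set t : ℝ := ε / 2 with htdef
  have ht : 0 < t := by positivity
  set c : ℝ := M / π with hcdef
  have hc : 0 < c := by positivity
  set κ : ℝ := t ^ 2 / (2 * c ^ 2) with hκdef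
  have hκ : 0 < κ := by positivity
  -- eventual bounds
  have hA : ∀ᶠ N : ℕ in Filter.atTop,
      Real.log (covNum (y N) δ (𝒢M M)) / (N : ℝ) < κ / 2 :=
    (hentropy M hM0 δ hδ).eventually_lt_const (by positivity)
  set η' : ENNReal := min η 1 with hη'def
  have hη'0 : 0 < η' := lt_min hη one_pos
  have hη'top : η' ≠ ⊤ := ne_top_of_le_ne_top ENNReal.one_ne_top (min_le_right η 1)
  have hη'r : 0 < η'.toReal := ENNReal.toReal_pos hη'0.ne' hη'top
  have hdecay : Filter.Tendsto (fun N : ℕ => 2 * Real.exp (-((N : ℝ) * (κ / 2))))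
      Filter.atTop (nhds 0) := by
    have h1 : Filter.Tendsto (fun N : ℕ => (N : ℝ) * (κ / 2)) Filter.atTop Filter.atTop :=
      Filter.Tendsto.atTop_mul_const (by positivity) tendsto_natCast_atTop_atTop
    have h2 := Real.tendsto_exp_neg_atTop_nhds_zero.comp h1
    have h3 := h2.const_mul (2 : ℝ)
    simpa using h3
  have hB : ∀ᶠ N : ℕ in Filter.atTop,
      2 * Real.exp (-((N : ℝ) * (κ / 2))) < η'.toReal :=
    hdecay.eventually_lt_const hη'r
  obtain ⟨N₁, hN₁⟩ := (((Filter.eventually_ge_atTop 1).and hA).and hB).exists_forall_of_atTop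
  refine ⟨N₁, fun N hN => ?_⟩
  obtain ⟨⟨hN1, hAN⟩, hBN⟩ := hN₁ N hN
  have hN0 : (0 : ℝ) < N := by exact_mod_cast hN1
  -- truncation map
  set trunc : (S → ℝ) → (S → ℝ) := fun g x => if F x ≤ M then g x else 0 with htr
  have h𝒢MM : 𝒢M M = trunc '' 𝒢 := h𝒢M M
  have hbMM : ∀ h ∈ 𝒢M M, ∀ x, |h x| ≤ M := by
    intro h hh x
    rw [h𝒢MM] at hh
    obtain ⟨g, hg, rfl⟩ := hh
    by_cases hFx : F x ≤ M
    · simp only [htr, if_pos hFx]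
      exact (henv g hg x).trans hFx
    · simp only [htr, if_neg hFx, abs_zero]
      linarith
  -- minimal net, clipped
  obtain ⟨G₀, hG₀card', hG₀net⟩ := Nat.sInf_mem (hnet M hM0 δ hδ N)
  have hG₀card : G₀.card = covNum (y N) δ (𝒢M M) := hG₀card'
  set clipf : (S → ℝ) → (S → ℝ) := fun g x => max (-M) (min M (g x)) with hcf
  set G₁ : Finset (S → ℝ) := G₀.image clipf with hG₁def
  have hG₁card : G₁.card ≤ covNum (y N) δ (𝒢M M) :=
    le_trans Finset.card_image_le (le_of_eq hG₀card)
  have hG₁net : ∀ h ∈ 𝒢M M, ∃ k ∈ G₁,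
      (∑ i, |h (y N i) - k (y N i)|) / (N : ℝ) ≤ δ := by
    intro h hh
    obtain ⟨g₀, hg₀, hg₀d⟩ := hG₀net h hh
    refine ⟨clipf g₀, Finset.mem_image_of_mem _ hg₀, le_trans ?_ hg₀d⟩
    have hsum : ∑ i, |h (y N i) - clipf g₀ (y N i)| ≤ ∑ i, |h (y N i) - g₀ (y N i)| := by
      refine Finset.sum_le_sum fun i _ => ?_
      simp only [hcf]
      exact clip_close (hbMM h hh (y N i))
    exact div_le_div_of_nonneg_right hsum hN0.le
  have hMMne : trunc gs ∈ 𝒢M M := by rw [h𝒢MM]; exact ⟨gs, hgs, rfl⟩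
  have hcov1 : 1 ≤ covNum (y N) δ (𝒢M M) := by
    obtain ⟨g₀, hg₀, _⟩ := hG₀net _ hMMne
    rw [← hG₀card]
    exact Finset.card_pos.mpr ⟨g₀, hg₀⟩
  obtain ⟨k₀, hk₀, _⟩ := hG₁net _ hMMne
  have hG₁ne : G₁.Nonempty := ⟨k₀, hk₀⟩
  have hbG₁ : ∀ k ∈ G₁, ∀ x, |k x| ≤ M := by
    intro k hk x
    obtain ⟨g₀, _, rfl⟩ := Finset.mem_image.mp hk
    exact clip_bound hM0.le
  -- good event
  have hEae : ∀ᵐ ω ∂(P N), ∀ i, T N i ω = 0 ∨ T N i ω = 1 :=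
    ae_all_iff.mpr fun i => bernoulli_ae_01 (hTmeas N i) (hTlaw N i)
  set E : Set (Ω N) := {ω | ∀ i, T N i ω = 0 ∨ T N i ω = 1} with hEdef
  have hEc : P N Eᶜ = 0 := by
    have := ae_iff.mp hEae
    rw [hEdef, Set.compl_setOf]
    convert this using 2
  -- deviation functional
  set D : (S → ℝ) → Ω N → ℝ := fun f ω =>
    (∑ i, T N i ω * f (y N i)) / ((N : ℝ) * π) - (∑ i, f (y N i)) / N with hDdef
  -- truncation error
  have htrunc_err : ∀ g ∈ 𝒢, (∑ i, |g (y N i) - trunc g (y N i)|) / (N : ℝ) ≤ δ := by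
    intro g hg
    refine le_trans ?_ (htail N hN1)
    gcongr with i _
    by_cases hFx : F (y N i) ≤ M
    · simp only [htr, if_pos hFx, sub_self, abs_zero, if_neg (not_lt.mpr hFx), le_refl]
    · push_neg at hFx
      simp only [htr, if_neg (not_le.mpr hFx), sub_zero, if_pos hFx]
      exact henv g hg _
  -- pointwise comparison on E
  have hDcomp : ∀ ω ∈ E, ∀ f₁ f₂ : S → ℝ,
      |D f₁ ω - D f₂ ω| ≤ ((∑ i, |f₁ (y N i) - f₂ (y N i)|) / N) * K := by
    intro ω hω f₁ f₂
    have hT01 : ∀ i, 0 ≤ T N i ω ∧ T N i ω ≤ 1 := by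
      intro i; rcases hω i with h | h <;> rw [h] <;> norm_num
    exact dev_diff_bound hπ0 hN0 (fun i => T N i ω) hT01
      (fun i => f₁ (y N i)) (fun i => f₂ (y N i))
  -- events for net elements
  set B : (S → ℝ) → Set (Ω N) := fun k =>
    {ω | t ≤ |∑ i, (T N i ω - π) * (k (y N i) / π)| / N} with hBdef
  have hsub : {ω | ε ≤ ⨆ g : 𝒢, |D g.1 ω|} ⊆ (⋃ k ∈ G₁, B k) ∪ Eᶜ := by
    intro ω hω
    by_cases hωE : ω ∈ E
    swap
    · exact Or.inr hωE
    left
    simp only [Set.mem_setOf_eq] at hω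
    set C : ℝ := G₁.sup' hG₁ne (fun k => |D k ω|) with hCdef
    have hC0 : 0 ≤ C := (abs_nonneg _).trans (Finset.le_sup' (fun k => |D k ω|) hk₀)
    have hδK : δ * K = ε / 4 := by
      rw [hδdef]; field_simp
    have hboundg : ∀ g : 𝒢, |D g.1 ω| ≤ C + ε / 2 := by
      intro g
      have hgmem := g.2
      have hhmem : trunc g.1 ∈ 𝒢M M := by rw [h𝒢MM]; exact ⟨g.1, hgmem, rfl⟩
      obtain ⟨k, hkmem, hknet⟩ := hG₁net _ hhmem
      have e1 : |D g.1 ω - D (trunc g.1) ω| ≤ δ * K :=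
        (hDcomp ω hωE _ _).trans (mul_le_mul_of_nonneg_right (htrunc_err g.1 hgmem) hK0.le)
      have e2 : |D (trunc g.1) ω - D k ω| ≤ δ * K :=
        (hDcomp ω hωE _ _).trans (mul_le_mul_of_nonneg_right hknet hK0.le)
      have e3 : |D k ω| ≤ C := by rw [hCdef]; exact Finset.le_sup' (fun k => |D k ω|) hkmem
      have tri : |D g.1 ω| ≤ |D g.1 ω - D (trunc g.1) ω| + |D (trunc g.1) ω - D k ω|
          + |D k ω| := by
        have t1 : |D g.1 ω| ≤ |D g.1 ω - D k ω| + |D k ω| := by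
          calc |D g.1 ω| = |(D g.1 ω - D k ω) + D k ω| := by ring_nf
            _ ≤ |D g.1 ω - D k ω| + |D k ω| := abs_add_le _ _
        have t2 : |D g.1 ω - D k ω| ≤ |D g.1 ω - D (trunc g.1) ω|
            + |D (trunc g.1) ω - D k ω| := abs_sub_le _ _ _
        linarith
      calc |D g.1 ω| ≤ δ * K + δ * K + C := by linarith
        _ = C + ε / 2 := by rw [hδK]; ring
    have hsup : ε ≤ C + ε / 2 := hω.trans (Real.iSup_le hboundg (by linarith))
    have hC : ε / 2 ≤ C := by linarith
    obtain ⟨k, hkmem, hkeq⟩ := Finset.exists_mem_eq_sup' hG₁ne (fun k => |D k ω|)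
    rw [hCdef, hkeq] at hC
    refine Set.mem_biUnion hkmem ?_
    have hDk : D k ω = (∑ i, (T N i ω - π) * (k (y N i) / π)) / N :=
      dev_eq hπ0.ne' hN0.ne' _ _
    have habs : |D k ω| = |∑ i, (T N i ω - π) * (k (y N i) / π)| / N := by
      rw [hDk, abs_div, abs_of_pos hN0]
    simp only [hBdef, Set.mem_setOf_eq]
    rw [htdef, ← habs]
    exact hC
  -- measure estimate
  have hq0 : (0 : ℝ) ≤ 2 * Real.exp (-((N : ℝ) * κ)) := by positivity
  have step1 : P N {ω | ε ≤ ⨆ g : 𝒢, |D g.1 ω|}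
      ≤ (G₁.card : ENNReal) * ENNReal.ofReal (2 * Real.exp (-((N : ℝ) * κ))) := by
    calc P N {ω | ε ≤ ⨆ g : 𝒢, |D g.1 ω|}
        ≤ P N ((⋃ k ∈ G₁, B k) ∪ Eᶜ) := measure_mono hsub
      _ ≤ P N (⋃ k ∈ G₁, B k) + P N Eᶜ := measure_union_le _ _
      _ = P N (⋃ k ∈ G₁, B k) := by rw [hEc, add_zero]
      _ ≤ ∑ k ∈ G₁, P N (B k) := measure_biUnion_finset_le _ _
      _ ≤ ∑ _k ∈ G₁, ENNReal.ofReal (2 * Real.exp (-((N : ℝ) * κ))) := by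
          refine Finset.sum_le_sum fun k hk => ?_
          have hcb : ∀ i, |k (y N i) / π| ≤ c := by
            intro i
            rw [abs_div, abs_of_pos hπ0, hcdef]
            gcongr
            exact hbG₁ k hk _
          have hch := chernoff (P N) hN1 hπ0 hπ1 (T N) (hTmeas N) (hTindep N) (hTlaw N)
            (fun i => k (y N i) / π) hc hcb ht
          rw [hκdef]
          exact hch
      _ = (G₁.card : ENNReal) * ENNReal.ofReal (2 * Real.exp (-((N : ℝ) * κ))) := by
          rw [Finset.sum_const, nsmul_eq_mul]
  -- covering-number bound
  have hcovR : (covNum (y N) δ (𝒢M M) : ℝ) ≤ Real.exp ((N : ℝ) * (κ / 2)) := by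
    have hcpos : (0 : ℝ) < (covNum (y N) δ (𝒢M M) : ℝ) := by exact_mod_cast hcov1
    rw [← Real.exp_log hcpos]
    apply Real.exp_le_exp.mpr
    rw [div_lt_iff₀ hN0] at hAN
    linarith
  have hfinR : (covNum (y N) δ (𝒢M M) : ℝ) * (2 * Real.exp (-((N : ℝ) * κ)))
      ≤ 2 * Real.exp (-((N : ℝ) * (κ / 2))) := by
    calc (covNum (y N) δ (𝒢M M) : ℝ) * (2 * Real.exp (-((N : ℝ) * κ)))
        ≤ Real.exp ((N : ℝ) * (κ / 2)) * (2 * Real.exp (-((N : ℝ) * κ))) :=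
          mul_le_mul_of_nonneg_right hcovR hq0
      _ = 2 * Real.exp ((N : ℝ) * (κ / 2) + -((N : ℝ) * κ)) := by
          rw [Real.exp_add]; ring
      _ = 2 * Real.exp (-((N : ℝ) * (κ / 2))) := by
          rw [show (N : ℝ) * (κ / 2) + -((N : ℝ) * κ) = -((N : ℝ) * (κ / 2)) by ring]
  calc P N {ω | ε ≤ ⨆ g : 𝒢, |(∑ i, T N i ω * g.1 (y N i)) / ((N : ℝ) * π)
          - (∑ i, g.1 (y N i)) / (N : ℝ)|}
      ≤ (G₁.card : ENNReal) * ENNReal.ofReal (2 * Real.exp (-((N : ℝ) * κ))) := step1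
    _ ≤ (covNum (y N) δ (𝒢M M) : ENNReal)
          * ENNReal.ofReal (2 * Real.exp (-((N : ℝ) * κ))) := by
        gcongr
    _ = ENNReal.ofReal ((covNum (y N) δ (𝒢M M) : ℝ) * (2 * Real.exp (-((N : ℝ) * κ)))) := by
        rw [ENNReal.ofReal_mul (Nat.cast_nonneg _), ENNReal.ofReal_natCast]
    _ ≤ ENNReal.ofReal (2 * Real.exp (-((N : ℝ) * (κ / 2)))) :=
        ENNReal.ofReal_le_ofReal hfinR
    _ ≤ η' := by
        rw [← ENNReal.ofReal_toReal hη'top]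
        exact ENNReal.ofReal_le_ofReal hBN.le
    _ ≤ η := min_le_left _ _
end
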